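/- arXiv:1009.0488 — 10 statements merged into one kernel-verified Lean document; each statement's English description precedes it below -/
import Mathlib

section
/- Let τ be an algebraic integer of degree d with norm N(τ), and let c be a rational integer. Then τ divides c in Z[τ] if and only if N(τ) divides c in Z. -/
/-- **Divisibility lemma.** Let `τ` be an algebraic integer of degree `d` with norm `Nτ`
(so that the constant coefficient of its minimal polynomial is `(-1)^d * Nτ`),
and let `c` be a rational integer. Then `τ` divides `c` in `ℤ[τ]` if and only if
`Nτ` divides `c` in `ℤ`. -/
theorem divides_rat_int_iff_norm_divides
    (τ : ℂ) (hint : IsIntegral ℤ τ) (hτ : 1 < ‖τ‖)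
    (d : ℕ) (hd : d = (minpoly ℤ τ).natDegree)
    (Nτ : ℤ) (hN : (minpoly ℤ τ).coeff 0 = (-1) ^ d * Nτ)
    (c : ℤ) :
    (∃ x ∈ Algebra.adjoin ℤ ({τ} : Set ℂ), (c : ℂ) = τ * x) ↔ Nτ ∣ c := by
  have hm0 : (Polynomial.aeval τ) (minpoly ℤ τ) = 0 := minpoly.aeval ℤ τ
  constructor
  · rintro ⟨x, hx, hcx⟩
    rw [Algebra.adjoin_singleton_eq_range_aeval] at hx
    obtain ⟨p, hp⟩ := hx
    have h0 : (Polynomial.aeval τ) (Polynomial.C c - Polynomial.X * p) = 0 := by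
      simp only [map_sub, map_mul, Polynomial.aeval_C, Polynomial.aeval_X, eq_intCast, map_intCast]
      rw [show (Polynomial.aeval τ) p = x from hp, ← hcx, sub_self]
    obtain ⟨q, hq⟩ := minpoly.isIntegrallyClosed_dvd hint h0
    have hc := congrArg (fun r => Polynomial.coeff r 0) hq
    simp only [Polynomial.coeff_sub, Polynomial.coeff_C_zero, Polynomial.mul_coeff_zero,
      Polynomial.coeff_X_zero, zero_mul, sub_zero, hN] at hc
    exact ⟨(-1) ^ d * q.coeff 0, by rw [hc]; ring⟩
  · rintro ⟨k, rfl⟩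
    set m := minpoly ℤ τ with hm
    have hsplit : m.divX * Polynomial.X + Polynomial.C (m.coeff 0) = m :=
      Polynomial.divX_mul_X_add m
    have hkey : τ * (Polynomial.aeval τ) m.divX + ((-1 : ℂ)) ^ d * (Nτ : ℂ) = 0 := by
      have := congrArg (Polynomial.aeval τ) hsplit
      simp only [map_add, map_mul, Polynomial.aeval_X, Polynomial.aeval_C, hm0, hN,
        eq_intCast, map_intCast, map_pow, map_neg, map_one] at this
      push_cast at this
      linear_combination this
    refine ⟨(Polynomial.aeval τ) (m.divX * Polynomial.C (-(-1) ^ d * k)), ?_, ?_⟩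
    · rw [Algebra.adjoin_singleton_eq_range_aeval]
      exact ⟨m.divX * Polynomial.C (-(-1) ^ d * k), rfl⟩
    · simp only [map_mul, Polynomial.aeval_C, eq_intCast, map_intCast, map_pow, map_neg, map_one]
      push_cast
      have hsq : ((-1 : ℂ)) ^ d * ((-1 : ℂ)) ^ d = 1 := by
        rw [← pow_add]; exact (neg_one_pow_eq_one_iff_even (by norm_num)).2 (Even.add_self d)
      linear_combination ((-1 : ℂ) ^ d * (k : ℂ)) * hkey - (Nτ : ℂ) * (k : ℂ) * hsq
end

section
/- Let τ be an algebraic integer with norm N(τ) and let w ≥ 1. The set of sums Σ_{j=0}^{w-1} a_j τ^j with a_j ∈ {0, 1, ..., |N(τ)|−1} is a complete residue system modulo τ^w in Z[τ]; in particular there are exactly |N(τ)|^w residue classes modulo τ^w in Z[τ]. -/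
open Polynomial

section CRS

variable {τ : ℂ} {Nτ : ℤ}

private lemma crs_mem_adjoin_iff {z : ℂ} :
    z ∈ Algebra.adjoin ℤ ({τ} : Set ℂ) ↔ ∃ g : ℤ[X], aeval τ g = z := by
  rw [show Algebra.adjoin ℤ ({τ} : Set ℂ) = (Polynomial.aeval τ : ℤ[X] →ₐ[ℤ] ℂ).range from
    Algebra.adjoin_singleton_eq_range_aeval ℤ τ]
  exact AlgHom.mem_range (φ := (Polynomial.aeval τ : ℤ[X] →ₐ[ℤ] ℂ))

private lemma crs_intCast_mem (k : ℤ) : (k : ℂ) ∈ Algebra.adjoin ℤ ({τ} : Set ℂ) := by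
  simpa using (Algebra.adjoin ℤ ({τ} : Set ℂ)).algebraMap_mem k

private lemma crs_norm_ne_zero (hint : IsIntegral ℤ τ) (hτ0 : τ ≠ 0)
    (hN : (minpoly ℤ τ).coeff 0 = (-1) ^ (minpoly ℤ τ).natDegree * Nτ) : Nτ ≠ 0 := by
  intro h0
  have hc0 : (minpoly ℤ τ).coeff 0 = 0 := by simp [hN, h0]
  obtain ⟨q, hq⟩ := X_dvd_iff.2 hc0
  have hq0 : aeval τ q = 0 := by
    have := minpoly.aeval ℤ τ
    rw [hq] at this
    simpa [hτ0] using this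
  have hqne : q ≠ 0 := by
    intro h
    apply minpoly.ne_zero hint
    rw [hq, h, mul_zero]
  have h1 := Polynomial.natDegree_le_of_dvd (minpoly.isIntegrallyClosed_dvd hint hq0) hqne
  have h2 : (minpoly ℤ τ).natDegree = q.natDegree + 1 := by
    rw [hq, natDegree_X_mul hqne]
  omega

/-- Key divisibility: if `τ ∣ m` in `ℤ[τ]` for an integer `m`, then `Nτ ∣ m`. -/
private lemma crs_norm_dvd (hint : IsIntegral ℤ τ)
    (hN : (minpoly ℤ τ).coeff 0 = (-1) ^ (minpoly ℤ τ).natDegree * Nτ)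
    (m : ℤ) (x : ℂ) (hx : x ∈ Algebra.adjoin ℤ ({τ} : Set ℂ))
    (hm : (m : ℂ) = τ * x) : Nτ ∣ m := by
  obtain ⟨g, rfl⟩ := crs_mem_adjoin_iff.1 hx
  have hroot : aeval τ (X * g - C m) = 0 := by
    simp [← hm]
  obtain ⟨h, hh⟩ := minpoly.isIntegrallyClosed_dvd hint hroot
  have hc := congrArg (fun p => p.coeff 0) hh
  simp only [coeff_sub, mul_coeff_zero, coeff_X_zero, coeff_C_zero, zero_mul, zero_sub, hN] at hc
  rcases Nat.even_or_odd (minpoly ℤ τ).natDegree with he | ho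
  · rw [he.neg_one_pow] at hc
    exact ⟨-h.coeff 0, by linear_combination -hc⟩
  · rw [ho.neg_one_pow] at hc
    exact ⟨h.coeff 0, by linear_combination -hc⟩

/-- `Nτ` is divisible by `τ` in `ℤ[τ]`. -/
private lemma crs_norm_dvd_tau (hint : IsIntegral ℤ τ)
    (hN : (minpoly ℤ τ).coeff 0 = (-1) ^ (minpoly ℤ τ).natDegree * Nτ) :
    ∃ u ∈ Algebra.adjoin ℤ ({τ} : Set ℂ), ((Nτ : ℤ) : ℂ) = τ * u := by
  have h0 := minpoly.aeval ℤ τ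
  set p := minpoly ℤ τ with hp
  have hsplit : aeval τ p = τ * aeval τ p.divX + ((p.coeff 0 : ℤ) : ℂ) := by
    conv_lhs => rw [← X_mul_divX_add p]
    simp
  rw [h0, hN] at hsplit
  have hD : aeval τ p.divX ∈ Algebra.adjoin ℤ ({τ} : Set ℂ) :=
    crs_mem_adjoin_iff.2 ⟨p.divX, rfl⟩
  rcases Nat.even_or_odd p.natDegree with he | ho
  · refine ⟨-aeval τ p.divX, Subalgebra.neg_mem _ hD, ?_⟩
    have : ((-1 : ℤ) ^ p.natDegree : ℤ) = 1 := he.neg_one_pow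
    rw [this] at hsplit
    push_cast at hsplit ⊢
    linear_combination -hsplit
  · refine ⟨aeval τ p.divX, hD, ?_⟩
    have : ((-1 : ℤ) ^ p.natDegree : ℤ) = -1 := ho.neg_one_pow
    rw [this] at hsplit
    push_cast at hsplit ⊢
    linear_combination hsplit

/-- `|Nτ|` is divisible by `τ` in `ℤ[τ]`. -/
private lemma crs_abs_norm_dvd (hint : IsIntegral ℤ τ)
    (hN : (minpoly ℤ τ).coeff 0 = (-1) ^ (minpoly ℤ τ).natDegree * Nτ) :
    ∃ v ∈ Algebra.adjoin ℤ ({τ} : Set ℂ), ((|Nτ| : ℤ) : ℂ) = τ * v := by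
  obtain ⟨u, hu, hueq⟩ := crs_norm_dvd_tau hint hN
  rcases abs_cases Nτ with ⟨ha, _⟩ | ⟨ha, _⟩
  · exact ⟨u, hu, by rw [ha]; exact hueq⟩
  · refine ⟨-u, Subalgebra.neg_mem _ hu, ?_⟩
    rw [ha]; push_cast; rw [hueq]; ring

/-- One digit extraction. -/
private lemma crs_exists_digit (hint : IsIntegral ℤ τ) (hτ0 : τ ≠ 0)
    (hN : (minpoly ℤ τ).coeff 0 = (-1) ^ (minpoly ℤ τ).natDegree * Nτ)
    (z : ℂ) (hz : z ∈ Algebra.adjoin ℤ ({τ} : Set ℂ)) :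
    ∃ r : ℤ, 0 ≤ r ∧ r < |Nτ| ∧ ∃ x ∈ Algebra.adjoin ℤ ({τ} : Set ℂ),
      z - r = τ * x := by
  have hNne : Nτ ≠ 0 := crs_norm_ne_zero hint hτ0 hN
  have habs : (0:ℤ) < |Nτ| := abs_pos.2 hNne
  obtain ⟨g, rfl⟩ := crs_mem_adjoin_iff.1 hz
  obtain ⟨v, hv, hveq⟩ := crs_abs_norm_dvd hint hN
  set c := g.coeff 0 with hc
  refine ⟨c % |Nτ|, Int.emod_nonneg c (ne_of_gt habs), Int.emod_lt_of_pos c habs, ?_⟩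
  refine ⟨aeval τ g.divX + (c / |Nτ| : ℤ) * v, ?_, ?_⟩
  · exact Subalgebra.add_mem _ (crs_mem_adjoin_iff.2 ⟨g.divX, rfl⟩)
      (Subalgebra.mul_mem _ (crs_intCast_mem _) hv)
  · have hsplit : aeval τ g = τ * aeval τ g.divX + ((c : ℤ) : ℂ) := by
      conv_lhs => rw [← X_mul_divX_add g]
      simp [hc]
    have hmod : (|Nτ| : ℤ) * (c / |Nτ|) + c % |Nτ| = c := Int.mul_ediv_add_emod c |Nτ|
    have hkey : ((c : ℤ) : ℂ) - ((c % |Nτ| : ℤ) : ℂ) = τ * (((c / |Nτ| : ℤ) : ℂ) * v) := by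
      have h1 : ((c : ℤ) : ℂ) - ((c % |Nτ| : ℤ) : ℂ)
          = ((|Nτ| : ℤ) : ℂ) * ((c / |Nτ| : ℤ) : ℂ) := by
        have h2 := congrArg (fun n : ℤ => (n : ℂ)) hmod
        push_cast at h2
        linear_combination -h2
      rw [h1, hveq]; ring
    linear_combination hsplit + hkey

/-- Existence of digit expansions, any length. -/
private lemma crs_exists (hint : IsIntegral ℤ τ) (hτ0 : τ ≠ 0)
    (hN : (minpoly ℤ τ).coeff 0 = (-1) ^ (minpoly ℤ τ).natDegree * Nτ) :
    ∀ (w : ℕ) (z : ℂ), z ∈ Algebra.adjoin ℤ ({τ} : Set ℂ) →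
      ∃ a : Fin w → ℤ, (∀ j, 0 ≤ a j ∧ a j < |Nτ|) ∧
        ∃ x ∈ Algebra.adjoin ℤ ({τ} : Set ℂ),
          z - ∑ j : Fin w, (a j : ℂ) * τ ^ (j : ℕ) = τ ^ w * x := by
  intro w
  induction w with
  | zero =>
    intro z hz
    exact ⟨fun j => j.elim0, fun j => j.elim0, z, hz, by simp⟩
  | succ w ih =>
    intro z hz
    obtain ⟨r, hr0, hr1, x₁, hx₁, heq₁⟩ := crs_exists_digit hint hτ0 hN z hz
    obtain ⟨a', ha', x, hx, heq⟩ := ih x₁ hx₁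
    refine ⟨Fin.cons r a', ?_, x, hx, ?_⟩
    · intro j
      refine Fin.cases ?_ ?_ j
      · simpa using ⟨hr0, hr1⟩
      · intro i; simpa using ha' i
    · rw [Fin.sum_univ_succ]
      simp only [Fin.cons_zero, Fin.cons_succ, Fin.val_succ, Fin.val_zero, pow_zero, mul_one]
      have hstep : ∑ j : Fin w, ((a' j : ℂ)) * τ ^ ((j : ℕ) + 1)
          = τ * ∑ j : Fin w, (a' j : ℂ) * τ ^ (j : ℕ) := by
        rw [Finset.mul_sum]
        exact Finset.sum_congr rfl fun j _ => by ring
      rw [hstep]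
      have hkey : z - ((r : ℂ) + τ * ∑ j : Fin w, (a' j : ℂ) * τ ^ (j : ℕ))
          = τ * (x₁ - ∑ j : Fin w, (a' j : ℂ) * τ ^ (j : ℕ)) := by
        rw [mul_sub, ← heq₁]; ring
      rw [hkey, heq, pow_succ]; ring

/-- Uniqueness of digit expansions. -/
private lemma crs_unique (hint : IsIntegral ℤ τ) (hτ0 : τ ≠ 0)
    (hN : (minpoly ℤ τ).coeff 0 = (-1) ^ (minpoly ℤ τ).natDegree * Nτ) :
    ∀ (w : ℕ) (a b : Fin w → ℤ), (∀ j, 0 ≤ a j ∧ a j < |Nτ|) →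
      (∀ j, 0 ≤ b j ∧ b j < |Nτ|) →
      ∀ y ∈ Algebra.adjoin ℤ ({τ} : Set ℂ),
        (∑ j : Fin w, ((a j : ℂ) - (b j : ℂ)) * τ ^ (j : ℕ)) = τ ^ w * y → a = b := by
  intro w
  induction w with
  | zero => intro a b _ _ _ _ _; ext j; exact j.elim0
  | succ w ih =>
    intro a b ha hb y hy heq
    rw [Fin.sum_univ_succ] at heq
    have hstep : ∑ j : Fin w, ((a j.succ : ℂ) - (b j.succ : ℂ)) * τ ^ ((j : ℕ) + 1)
        = τ * ∑ j : Fin w, ((a j.succ : ℂ) - (b j.succ : ℂ)) * τ ^ (j : ℕ) := by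
      rw [Finset.mul_sum]
      exact Finset.sum_congr rfl fun j _ => by ring
    simp only [Fin.val_succ, Fin.val_zero, pow_zero, mul_one] at heq
    rw [hstep] at heq
    set S := ∑ j : Fin w, ((a j.succ : ℂ) - (b j.succ : ℂ)) * τ ^ (j : ℕ) with hS
    have hd : ((a 0 - b 0 : ℤ) : ℂ) = τ * (τ ^ w * y - S) := by
      push_cast
      linear_combination heq
    have hmem : τ ^ w * y - S ∈ Algebra.adjoin ℤ ({τ} : Set ℂ) := by
      refine Subalgebra.sub_mem _ (Subalgebra.mul_mem _ (Subalgebra.pow_mem _ ?_ _) hy) ?_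
      · exact Algebra.self_mem_adjoin_singleton ℤ τ
      · refine Subalgebra.sum_mem _ fun j _ => ?_
        exact Subalgebra.mul_mem _
          (Subalgebra.sub_mem _ (crs_intCast_mem _) (crs_intCast_mem _))
          (Subalgebra.pow_mem _ (Algebra.self_mem_adjoin_singleton ℤ τ) _)
    have hdvd : Nτ ∣ (a 0 - b 0) := crs_norm_dvd hint hN _ _ hmem hd
    have h0 : a 0 = b 0 := by
      have hlt : |a 0 - b 0| < |Nτ| := abs_sub_lt_iff.2 ⟨by have := ha 0; have := hb 0; omega,
        by have := ha 0; have := hb 0; omega⟩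
      have := Int.eq_zero_of_abs_lt_dvd ((abs_dvd _ _).2 hdvd) hlt
      omega
    have hSeq : S = τ ^ w * y := by
      have hcast : ((a 0 : ℤ) : ℂ) - ((b 0 : ℤ) : ℂ) = 0 := by rw [h0]; ring
      refine mul_left_cancel₀ hτ0 ?_
      rw [hcast] at heq
      linear_combination heq
    have htail : (fun j : Fin w => a j.succ) = (fun j : Fin w => b j.succ) :=
      ih _ _ (fun j => ha j.succ) (fun j => hb j.succ) y hy (by rw [← hSeq])
    funext j
    refine Fin.cases h0 (fun i => ?_) j
    exact congrFun htail i

end CRS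

/-- **Complete residue system.** Let `τ` be an algebraic integer with norm `Nτ` and `w ≥ 1`.
The sums `∑_{j<w} a_j τ^j` with `a_j ∈ {0, …, |Nτ|-1}` form a complete residue system
modulo `τ^w` in `ℤ[τ]`: every `z ∈ ℤ[τ]` is congruent modulo `τ^w` to exactly one such sum.
In particular there are exactly `|Nτ|^w` residue classes modulo `τ^w` in `ℤ[τ]`. -/
theorem complete_residue_system_mod_tau_pow
    (τ : ℂ) (hint : IsIntegral ℤ τ) (hτ : 1 < ‖τ‖)
    (Nτ : ℤ) (hN : (minpoly ℤ τ).coeff 0 = (-1) ^ (minpoly ℤ τ).natDegree * Nτ)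
    (w : ℕ) (hw : 1 ≤ w) :
    ∀ z ∈ Algebra.adjoin ℤ ({τ} : Set ℂ),
      ∃! a : Fin w → ℤ,
        (∀ j, 0 ≤ a j ∧ a j < |Nτ|) ∧
        ∃ x ∈ Algebra.adjoin ℤ ({τ} : Set ℂ),
          z - ∑ j : Fin w, (a j : ℂ) * τ ^ (j : ℕ) = τ ^ w * x := by
  have hτ0 : τ ≠ 0 := by
    intro h; rw [h] at hτ; simp at hτ; linarith
  intro z hz
  obtain ⟨a, ha, x, hx, heq⟩ := crs_exists hint hτ0 hN w z hz
  refine ⟨a, ⟨ha, x, hx, heq⟩, ?_⟩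
  rintro b ⟨hb, y, hy, heqb⟩
  refine crs_unique hint hτ0 hN w b a hb ha (x - y)
    (Subalgebra.sub_mem _ hx hy) ?_
  have hsum : ∑ j : Fin w, ((b j : ℂ) - (a j : ℂ)) * τ ^ (j : ℕ)
      = (∑ j : Fin w, (b j : ℂ) * τ ^ (j : ℕ)) - ∑ j : Fin w, (a j : ℂ) * τ ^ (j : ℕ) := by
    rw [← Finset.sum_sub_distrib]
    exact Finset.sum_congr rfl fun j _ => by ring
  rw [hsum]
  linear_combination heq - heqb
end

section
/- Let τ be an algebraic integer with norm N(τ) and let w ≥ 1. A representative Σ_{j=0}^{w-1} a_j τ^j with a_j ∈ {0, ..., |N(τ)|−1} is divisible by τ in Z[τ] if and only if a_0 = 0. Consequently, a reduced residue digit set modulo τ^w (consisting of 0 and one representative of each residue class modulo τ^w not divisible by τ) has cardinality |N(τ)|^{w−1}(|N(τ)|−1) + 1. -/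
open Polynomial

private lemma mem_adj {τ z : ℂ} :
    z ∈ Algebra.adjoin ℤ ({τ} : Set ℂ) ↔ ∃ p : ℤ[X], aeval τ p = z := by
  rw [Algebra.adjoin_singleton_eq_range_aeval]
  exact AlgHom.mem_range _

private lemma intCast_mem_adj (τ : ℂ) (n : ℤ) :
    (n : ℂ) ∈ Algebra.adjoin ℤ ({τ} : Set ℂ) :=
  mem_adj.mpr ⟨C n, by simp⟩

private lemma sum_mem_adj (τ : ℂ) {w : ℕ} (a : Fin w → ℤ) :
    ∑ j : Fin w, (a j : ℂ) * τ ^ (j : ℕ) ∈ Algebra.adjoin ℤ ({τ} : Set ℂ) :=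
  Subalgebra.sum_mem _ fun j _ => mul_mem (intCast_mem_adj τ (a j))
    (pow_mem (Algebra.self_mem_adjoin_singleton ℤ τ) _)

private lemma sum_succ_decomp (τ : ℂ) (v : ℕ) (a : Fin (v + 1) → ℤ) :
    ∑ j : Fin (v + 1), (a j : ℂ) * τ ^ (j : ℕ)
      = (a 0 : ℂ) + τ * ∑ i : Fin v, (a i.succ : ℂ) * τ ^ (i : ℕ) := by
  rw [Fin.sum_univ_succ, Finset.mul_sum]
  simp only [Fin.val_zero, pow_zero, mul_one]
  congr 1
  refine Finset.sum_congr rfl fun i _ => ?_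
  rw [Fin.val_succ, pow_succ]
  ring

private lemma dvd_of_tau_dvd {τ : ℂ} (hint : IsIntegral ℤ τ) {n : ℤ}
    (h : ∃ x ∈ Algebra.adjoin ℤ ({τ} : Set ℂ), (n : ℂ) = τ * x) :
    (minpoly ℤ τ).coeff 0 ∣ n := by
  obtain ⟨x, hx, hxe⟩ := h
  obtain ⟨q, rfl⟩ := mem_adj.mp hx
  have h0 : aeval τ (C n - X * q) = 0 := by
    simp only [map_sub, map_mul, aeval_C, aeval_X, algebraMap_int_eq, eq_intCast,
      map_intCast]
    rw [← hxe]; ring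
  obtain ⟨r, hr⟩ := minpoly.isIntegrallyClosed_dvd hint h0
  have hc := congrArg (fun p => p.coeff 0) hr
  simp only [coeff_sub, coeff_C_zero, mul_coeff_zero, coeff_X_zero, zero_mul,
    sub_zero, intCast_coeff_zero] at hc
  exact ⟨r.coeff 0, hc⟩

private lemma tau_dvd_of_dvd {τ : ℂ} (hint : IsIntegral ℤ τ) {n : ℤ}
    (h : (minpoly ℤ τ).coeff 0 ∣ n) :
    ∃ x ∈ Algebra.adjoin ℤ ({τ} : Set ℂ), (n : ℂ) = τ * x := by
  obtain ⟨k, rfl⟩ := h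
  refine ⟨aeval τ (-(minpoly ℤ τ).divX * C k), mem_adj.mpr ⟨_, rfl⟩, ?_⟩
  have h1 := congrArg (aeval τ) (X_mul_divX_add (minpoly ℤ τ))
  rw [minpoly.aeval] at h1
  simp only [map_add, map_mul, aeval_X, aeval_C, algebraMap_int_eq, eq_intCast,
    map_neg, map_intCast] at h1 ⊢
  push_cast
  linear_combination (k : ℂ) * h1

private lemma coeff0_ne_zero {τ : ℂ} (hint : IsIntegral ℤ τ) (hτ0 : τ ≠ 0) :
    (minpoly ℤ τ).coeff 0 ≠ 0 := by
  intro h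
  have hdec : X * (minpoly ℤ τ).divX = minpoly ℤ τ := by
    have := X_mul_divX_add (minpoly ℤ τ)
    rw [h, map_zero, add_zero] at this
    exact this
  have hdvx : aeval τ (minpoly ℤ τ).divX = 0 := by
    have h0 : τ * aeval τ (minpoly ℤ τ).divX = 0 := by
      have := congrArg (aeval τ) hdec
      rw [minpoly.aeval] at this
      simpa using this
    exact (mul_eq_zero.mp h0).resolve_left hτ0
  have hdvd := minpoly.isIntegrallyClosed_dvd hint hdvx
  have hne : (minpoly ℤ τ).divX ≠ 0 := by
    intro hz
    have : minpoly ℤ τ = 0 := by rw [← hdec, hz, mul_zero]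
    exact minpoly.ne_zero hint this
  have h1 := Polynomial.natDegree_le_of_dvd hdvd hne
  have h2 : (minpoly ℤ τ).divX.natDegree = (minpoly ℤ τ).natDegree - 1 :=
    natDegree_divX_eq_natDegree_tsub_one
  have h3 : 0 < (minpoly ℤ τ).natDegree := minpoly.natDegree_pos hint
  omega

private lemma const_step {τ : ℂ} (hint : IsIntegral ℤ τ)
    (hc0 : (minpoly ℤ τ).coeff 0 ≠ 0) {z : ℂ}
    (hz : z ∈ Algebra.adjoin ℤ ({τ} : Set ℂ)) :
    ∃ n : ℤ, 0 ≤ n ∧ n < |(minpoly ℤ τ).coeff 0| ∧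
      ∃ x ∈ Algebra.adjoin ℤ ({τ} : Set ℂ), z - (n : ℂ) = τ * x := by
  obtain ⟨p, rfl⟩ := mem_adj.mp hz
  set c := p.coeff 0 with hc
  set m := |(minpoly ℤ τ).coeff 0| with hm
  have hmpos : 0 < m := abs_pos.mpr hc0
  refine ⟨c % m, Int.emod_nonneg _ (ne_of_gt hmpos), Int.emod_lt_of_pos _ hmpos, ?_⟩
  have hd : (minpoly ℤ τ).coeff 0 ∣ (c - c % m) := by
    rw [← abs_dvd, ← hm]
    exact ⟨c / m, by have := Int.mul_ediv_add_emod c m; linarith⟩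
  obtain ⟨y, hy, hye⟩ := tau_dvd_of_dvd hint hd
  refine ⟨aeval τ p.divX + y, add_mem (mem_adj.mpr ⟨_, rfl⟩) hy, ?_⟩
  have h1 := congrArg (aeval τ) (X_mul_divX_add p)
  simp only [map_add, map_mul, aeval_X, aeval_C, algebraMap_int_eq, eq_intCast,
    map_intCast] at h1
  push_cast at hye
  linear_combination hye - h1

private lemma digit_exists {τ : ℂ} (hint : IsIntegral ℤ τ)
    (hc0 : (minpoly ℤ τ).coeff 0 ≠ 0) :
    ∀ (w : ℕ) (z : ℂ), z ∈ Algebra.adjoin ℤ ({τ} : Set ℂ) →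
      ∃ a : Fin w → ℤ, (∀ j, 0 ≤ a j ∧ a j < |(minpoly ℤ τ).coeff 0|) ∧
        ∃ x ∈ Algebra.adjoin ℤ ({τ} : Set ℂ),
          z - ∑ j : Fin w, (a j : ℂ) * τ ^ (j : ℕ) = τ ^ w * x := by
  intro w
  induction w with
  | zero =>
    intro z hz
    exact ⟨fun j => 0, fun j => j.elim0, z, hz, by simp⟩
  | succ v ih =>
    intro z hz
    obtain ⟨n, hn0, hn1, y, hy, hye⟩ := const_step hint hc0 hz
    obtain ⟨a, ha, x, hx, hxe⟩ := ih y hy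
    refine ⟨Fin.cons n a, fun j => ?_, x, hx, ?_⟩
    · refine Fin.cases ?_ (fun i => ?_) j
      · exact ⟨hn0, hn1⟩
      · simpa using ha i
    · rw [sum_succ_decomp]
      simp only [Fin.cons_zero, Fin.cons_succ]
      rw [pow_succ]
      linear_combination hye + τ * hxe

private lemma digit_unique {τ : ℂ} (hint : IsIntegral ℤ τ) (hτ0 : τ ≠ 0) :
    ∀ (w : ℕ) (a b : Fin w → ℤ),
      (∀ j, 0 ≤ a j ∧ a j < |(minpoly ℤ τ).coeff 0|) →
      (∀ j, 0 ≤ b j ∧ b j < |(minpoly ℤ τ).coeff 0|) →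
      (∃ x ∈ Algebra.adjoin ℤ ({τ} : Set ℂ),
        (∑ j : Fin w, (a j : ℂ) * τ ^ (j : ℕ))
          - ∑ j : Fin w, (b j : ℂ) * τ ^ (j : ℕ) = τ ^ w * x) → a = b := by
  intro w
  induction w with
  | zero => intro a b _ _ _; funext j; exact j.elim0
  | succ v ih =>
    rintro a b ha hb ⟨x, hx, he⟩
    rw [sum_succ_decomp, sum_succ_decomp] at he
    have key : ((a 0 - b 0 : ℤ) : ℂ) = τ * (τ ^ v * x -
        ((∑ i : Fin v, (a i.succ : ℂ) * τ ^ (i : ℕ))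
          - ∑ i : Fin v, (b i.succ : ℂ) * τ ^ (i : ℕ))) := by
      push_cast
      rw [pow_succ] at he
      linear_combination he
    have hdvd : (minpoly ℤ τ).coeff 0 ∣ (a 0 - b 0) :=
      dvd_of_tau_dvd hint ⟨_, sub_mem (mul_mem (pow_mem
        (Algebra.self_mem_adjoin_singleton ℤ τ) v) hx)
        (sub_mem (sum_mem_adj τ _) (sum_mem_adj τ _)), key⟩
    have h00 : a 0 = b 0 := by
      have habs : |a 0 - b 0| < |(minpoly ℤ τ).coeff 0| := by
        have h1 := ha 0; have h2 := hb 0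
        rw [abs_lt]; omega
      have := Int.eq_zero_of_abs_lt_dvd ((abs_dvd _ _).mpr hdvd) habs
      omega
    have he2 : (∑ i : Fin v, (a i.succ : ℂ) * τ ^ (i : ℕ))
        - ∑ i : Fin v, (b i.succ : ℂ) * τ ^ (i : ℕ) = τ ^ v * x := by
      have hm : τ * ((∑ i : Fin v, (a i.succ : ℂ) * τ ^ (i : ℕ))
          - ∑ i : Fin v, (b i.succ : ℂ) * τ ^ (i : ℕ)) = τ * (τ ^ v * x) := by
        rw [pow_succ] at he
        rw [h00] at he
        push_cast at he ⊢
        linear_combination he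
      exact mul_left_cancel₀ hτ0 hm
    have hsucc := ih (a ∘ Fin.succ) (b ∘ Fin.succ)
      (fun i => ha i.succ) (fun i => hb i.succ) ⟨x, hx, he2⟩
    funext j
    refine Fin.cases h00 (fun i => ?_) j
    exact congrFun hsucc i

private lemma part1_iff {τ : ℂ} (hint : IsIntegral ℤ τ) (hτ0 : τ ≠ 0)
    (v : ℕ) (a : Fin (v + 1) → ℤ)
    (ha : ∀ j, 0 ≤ a j ∧ a j < |(minpoly ℤ τ).coeff 0|) :
    (∃ x ∈ Algebra.adjoin ℤ ({τ} : Set ℂ),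
      ∑ j : Fin (v + 1), (a j : ℂ) * τ ^ (j : ℕ) = τ * x) ↔ a 0 = 0 := by
  constructor
  · rintro ⟨x, hx, he⟩
    rw [sum_succ_decomp] at he
    have key : ((a 0 : ℤ) : ℂ) = τ * (x - ∑ i : Fin v, (a i.succ : ℂ) * τ ^ (i : ℕ)) := by
      push_cast
      linear_combination he
    have hdvd := dvd_of_tau_dvd hint ⟨_, sub_mem hx (sum_mem_adj τ _), key⟩
    have habs : |a 0| < |(minpoly ℤ τ).coeff 0| := by
      have h1 := ha 0; rw [abs_lt]; omega
    exact Int.eq_zero_of_abs_lt_dvd ((abs_dvd _ _).mpr hdvd) habs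
  · intro h0
    refine ⟨∑ i : Fin v, (a i.succ : ℂ) * τ ^ (i : ℕ), sum_mem_adj τ _, ?_⟩
    rw [sum_succ_decomp, h0]
    push_cast
    ring

/-- `D` is a reduced residue digit set modulo `τ^w`: it consists of `0` together with exactly
one representative of every residue class of `ℤ[τ]` modulo `τ^w` that is not divisible by `τ`. -/
def IsReducedResidueDigitSet (τ : ℂ) (w : ℕ) (D : Finset ℂ) : Prop :=
  (0 : ℂ) ∈ D ∧
  (∀ d ∈ D, d ∈ Algebra.adjoin ℤ ({τ} : Set ℂ)) ∧
  (∀ d ∈ D, d ≠ 0 → ¬ ∃ x ∈ Algebra.adjoin ℤ ({τ} : Set ℂ), d = τ * x) ∧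
  (∀ d₁ ∈ D, ∀ d₂ ∈ D, d₁ ≠ 0 → d₂ ≠ 0 →
    (∃ x ∈ Algebra.adjoin ℤ ({τ} : Set ℂ), d₁ - d₂ = τ ^ w * x) → d₁ = d₂) ∧
  (∀ z ∈ Algebra.adjoin ℤ ({τ} : Set ℂ),
    (¬ ∃ x ∈ Algebra.adjoin ℤ ({τ} : Set ℂ), z = τ * x) →
    ∃ d ∈ D, ∃ x ∈ Algebra.adjoin ℤ ({τ} : Set ℂ), z - d = τ ^ w * x)

/-- A representative `∑_{j<w} a_j τ^j` with `a_j ∈ {0, …, |Nτ|-1}` is divisible by `τ` in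
`ℤ[τ]` if and only if `a_0 = 0`. Consequently, any reduced residue digit set modulo `τ^w`
has cardinality `|Nτ|^(w-1) (|Nτ|-1) + 1`. -/
theorem representative_div_iff_and_card_digit_set
    (τ : ℂ) (hint : IsIntegral ℤ τ) (hτ : 1 < ‖τ‖)
    (Nτ : ℤ) (hN : (minpoly ℤ τ).coeff 0 = (-1) ^ (minpoly ℤ τ).natDegree * Nτ)
    (w : ℕ) (hw : 1 ≤ w) :
    (∀ a : Fin w → ℤ, (∀ j, 0 ≤ a j ∧ a j < |Nτ|) →
      ((∃ x ∈ Algebra.adjoin ℤ ({τ} : Set ℂ),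
          ∑ j : Fin w, (a j : ℂ) * τ ^ (j : ℕ) = τ * x) ↔ a ⟨0, by omega⟩ = 0)) ∧
    (∀ D : Finset ℂ, IsReducedResidueDigitSet τ w D →
      (D.card : ℤ) = |Nτ| ^ (w - 1) * (|Nτ| - 1) + 1) := by
  obtain ⟨v, rfl⟩ : ∃ v, w = v + 1 := ⟨w - 1, by omega⟩
  have hτ0 : τ ≠ 0 := by
    intro h; rw [h] at hτ; simp at hτ; norm_num at hτ
  have hc0 : (minpoly ℤ τ).coeff 0 ≠ 0 := coeff0_ne_zero hint hτ0
  have hNτ : Nτ ≠ 0 := fun h => hc0 (by rw [hN, h, mul_zero])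
  have habs : |(minpoly ℤ τ).coeff 0| = |Nτ| := by
    rw [hN, abs_mul, abs_pow, abs_neg, abs_one, one_pow, one_mul]
  have tauA : τ ∈ Algebra.adjoin ℤ ({τ} : Set ℂ) :=
    Algebra.self_mem_adjoin_singleton ℤ τ
  constructor
  · intro a ha
    have := part1_iff hint hτ0 v a (by rw [habs]; exact ha)
    simpa using this
  · rintro D ⟨h0D, hAD, hndD, huD, hcD⟩
    classical
    have hm1 : 1 ≤ |Nτ| := by have := abs_pos.mpr hNτ; omega
    have hdigall : ∀ z : ℂ, z ∈ Algebra.adjoin ℤ ({τ} : Set ℂ) →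
        ∃ a : Fin (v + 1) → ℤ, (∀ j, 0 ≤ a j ∧ a j < |Nτ|) ∧
          ∃ x ∈ Algebra.adjoin ℤ ({τ} : Set ℂ),
            z - ∑ j : Fin (v + 1), (a j : ℂ) * τ ^ (j : ℕ) = τ ^ (v + 1) * x := by
      intro z hz
      obtain ⟨a, ha, hx⟩ := digit_exists hint hc0 (v + 1) z hz
      exact ⟨a, by rw [← habs]; exact ha, hx⟩
    choose! dig hdig1 hdig2 using hdigall
    have huniq : ∀ a b : Fin (v + 1) → ℤ,
        (∀ j, 0 ≤ a j ∧ a j < |Nτ|) → (∀ j, 0 ≤ b j ∧ b j < |Nτ|) →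
        (∃ x ∈ Algebra.adjoin ℤ ({τ} : Set ℂ),
          (∑ j : Fin (v + 1), (a j : ℂ) * τ ^ (j : ℕ))
            - ∑ j : Fin (v + 1), (b j : ℂ) * τ ^ (j : ℕ) = τ ^ (v + 1) * x) → a = b :=
      fun a b ha hb h => digit_unique hint hτ0 (v + 1) a b
        (by rw [habs]; exact ha) (by rw [habs]; exact hb) h
    have key_div : ∀ z ∈ Algebra.adjoin ℤ ({τ} : Set ℂ), dig z 0 = 0 →
        ∃ x ∈ Algebra.adjoin ℤ ({τ} : Set ℂ), z = τ * x := by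
      intro z hz h00
      obtain ⟨x, hx, hxe⟩ := hdig2 z hz
      obtain ⟨y, hy, hye⟩ := (part1_iff hint hτ0 v (dig z)
        (by rw [habs]; exact hdig1 z hz)).mpr h00
      refine ⟨τ ^ v * x + y, add_mem (mul_mem (pow_mem tauA v) hx) hy, ?_⟩
      rw [pow_succ] at hxe
      linear_combination hxe + hye
    set T : Finset (Fin (v + 1) → ℤ) :=
      Fintype.piFinset (fun j => if j = 0 then Finset.Ico 1 |Nτ| else Finset.Ico 0 |Nτ|)
      with hT
    have hcard : (D.erase 0).card = T.card := by
      refine Finset.card_bij (fun d _ => dig d) ?_ ?_ ?_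
      · intro d hd
        have hdD := Finset.mem_of_mem_erase hd
        have hdne := Finset.ne_of_mem_erase hd
        have hdA := hAD d hdD
        rw [hT, Fintype.mem_piFinset]
        intro j
        have hb := hdig1 d hdA j
        by_cases hj : j = 0
        · subst hj
          rw [if_pos rfl, Finset.mem_Ico]
          refine ⟨?_, hb.2⟩
          show (1 : ℤ) ≤ dig d 0
          by_contra hlt
          have h00 : dig d 0 = 0 := by omega
          exact hndD d hdD hdne (key_div d hdA h00)
        · rw [if_neg hj, Finset.mem_Ico]; exact hb
      · intro d1 h1 d2 h2 heq
        refine huD d1 (Finset.mem_of_mem_erase h1) d2 (Finset.mem_of_mem_erase h2)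
          (Finset.ne_of_mem_erase h1) (Finset.ne_of_mem_erase h2) ?_
        obtain ⟨x1, hx1, he1⟩ := hdig2 d1 (hAD _ (Finset.mem_of_mem_erase h1))
        obtain ⟨x2, hx2, he2⟩ := hdig2 d2 (hAD _ (Finset.mem_of_mem_erase h2))
        have heq' : dig d1 = dig d2 := heq
        rw [heq'] at he1
        exact ⟨x1 - x2, sub_mem hx1 hx2, by linear_combination he1 - he2⟩
      · intro b hb
        rw [hT, Fintype.mem_piFinset] at hb
        have hbb : ∀ j, 0 ≤ b j ∧ b j < |Nτ| := by
          intro j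
          have := hb j
          by_cases hj : j = 0
          · subst hj; rw [if_pos rfl, Finset.mem_Ico] at this; omega
          · rw [if_neg hj, Finset.mem_Ico] at this; exact this
        have hb0 : b 0 ≠ 0 := by
          have := hb 0; rw [if_pos rfl, Finset.mem_Ico] at this; omega
        have hzA : (∑ j : Fin (v + 1), (b j : ℂ) * τ ^ (j : ℕ))
            ∈ Algebra.adjoin ℤ ({τ} : Set ℂ) := sum_mem_adj τ b
        have hznd : ¬ ∃ x ∈ Algebra.adjoin ℤ ({τ} : Set ℂ),
            (∑ j : Fin (v + 1), (b j : ℂ) * τ ^ (j : ℕ)) = τ * x :=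
          fun hex => hb0 ((part1_iff hint hτ0 v b (by rw [habs]; exact hbb)).mp hex)
        obtain ⟨d, hdD, x, hx, hxe⟩ := hcD _ hzA hznd
        have hdne : d ≠ 0 := by
          rintro rfl
          refine hznd ⟨τ ^ v * x, mul_mem (pow_mem tauA v) hx, ?_⟩
          rw [sub_zero] at hxe
          rw [hxe, pow_succ]; ring
        refine ⟨d, Finset.mem_erase.mpr ⟨hdne, hdD⟩, ?_⟩
        obtain ⟨y, hy, hye⟩ := hdig2 d (hAD d hdD)
        refine huniq (dig d) b (hdig1 d (hAD d hdD)) hbb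
          ⟨-(x + y), neg_mem (add_mem hx hy), by linear_combination -hxe - hye⟩
    have hDcard : D.card = T.card + 1 := by
      rw [← Finset.card_erase_add_one h0D, hcard]
    have hTcard : (T.card : ℤ) = (|Nτ| - 1) * |Nτ| ^ v := by
      rw [hT, Fintype.card_piFinset, Fin.prod_univ_succ, if_pos rfl]
      have hstep : ∀ i : Fin v,
          (if (i.succ : Fin (v + 1)) = 0 then Finset.Ico (1 : ℤ) |Nτ|
            else Finset.Ico 0 |Nτ|).card = (Finset.Ico (0 : ℤ) |Nτ|).card :=
        fun i => by rw [if_neg (Fin.succ_ne_zero i)]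
      rw [Finset.prod_congr rfl (fun i _ => hstep i), Finset.prod_const,
        Finset.card_univ, Fintype.card_fin, Int.card_Ico, Int.card_Ico]
      push_cast
      rw [Int.toNat_of_nonneg (by omega : (0 : ℤ) ≤ |Nτ| - 1),
        Int.toNat_of_nonneg (by omega : (0 : ℤ) ≤ |Nτ| - 0)]
      ring
    rw [hDcard]
    push_cast
    rw [hTcard]
    ring
end

section
/- Let t ≥ 2 be a real number and w ≥ 2 an integer, and consider the polynomial f(z) = 1 − (1/t)z − (1 − 1/t)z^w. Then f has exactly one complex root z with |z| ≤ 1 + 1/(t w^3), namely z = 1. -/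
open Real

lemma aux_pow_bound (ε : ℝ) (hε : 0 ≤ ε) : ∀ n : ℕ, 2*n*ε ≤ 1 → (1+ε)^n ≤ 1 + 2*n*ε := by
  intro n
  induction n with
  | zero => simp
  | succ n ih =>
    intro h
    push_cast at h
    have hn : 2*(n:ℝ)*ε ≤ 1 := by nlinarith
    have h1 := ih (by exact_mod_cast hn)
    have h2 : (1+ε)^(n+1) = (1+ε)^n * (1+ε) := pow_succ _ _
    push_cast
    push_cast at h1
    nlinarith [pow_nonneg (by linarith : (0:ℝ) ≤ 1+ε) n]

set_option maxHeartbeats 1600000 in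
/-- Let `t ≥ 2` be real and `w ≥ 2` an integer, and let
`f(z) = 1 - (1/t) z - (1 - 1/t) z^w`. Then `f` has exactly one complex root `z` with
`|z| ≤ 1 + 1/(t w³)`, namely `z = 1`. -/
theorem unique_root_in_disc (t : ℝ) (ht : 2 ≤ t) (w : ℕ) (hw : 2 ≤ w) :
    {z : ℂ | 1 - (1 / (t : ℂ)) * z - (1 - 1 / (t : ℂ)) * z ^ w = 0 ∧
      ‖z‖ ≤ 1 + 1 / (t * (w : ℝ) ^ 3)} = {1} := by
  have ht0 : (0:ℝ) < t := by linarith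
  have hw2 : (2:ℝ) ≤ (w:ℝ) := by exact_mod_cast hw
  have hw0 : (0:ℝ) < (w:ℝ) := by linarith
  have hε0 : 0 < 1 / (t * (w:ℝ)^3) := by positivity
  ext z
  simp only [Set.mem_setOf_eq, Set.mem_singleton_iff]
  constructor
  · rintro ⟨hf, hle⟩
    set a : ℝ := 1/t with ha_def
    have ha0 : 0 < a := by positivity
    have ha2 : a ≤ 1/2 := by
      rw [ha_def, div_le_div_iff₀ ht0 two_pos]; linarith
    have hE : (a:ℂ) * z + ((1-a:ℝ):ℂ) * z^w = 1 := by
      push_cast [ha_def]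
      linear_combination -hf
    have hz0 : z ≠ 0 := by
      rintro rfl
      simp [zero_pow (by omega : w ≠ 0)] at hf
    set r := ‖z‖ with hr_def
    set θ := Complex.arg z with hθ_def
    have hr0 : 0 < r := norm_pos_iff.mpr hz0
    have hpolar : (r:ℂ) * Complex.exp ((θ:ℝ)*Complex.I) = z := Complex.norm_mul_exp_arg_mul_I z
    have hzw : z^w = ((r^w : ℝ):ℂ) * Complex.exp (((w*θ : ℝ) : ℂ) * Complex.I) := by
      rw [← hpolar, mul_pow, ← Complex.exp_nat_mul]
      push_cast
      ring_nf
    rw [hzw, ← hpolar] at hE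
    have hre : a*(r*Real.cos θ) + (1-a)*(r^w*Real.cos (w*θ)) = 1 := by
      have := congrArg Complex.re hE
      simp only [← Complex.ofReal_pow, ← Complex.ofReal_natCast, ← Complex.ofReal_mul, Complex.add_re, Complex.re_ofReal_mul, Complex.exp_ofReal_mul_I_re, Complex.one_re] at this
      convert this using 3
    have him : a*(r*Real.sin θ) + (1-a)*(r^w*Real.sin (w*θ)) = 0 := by
      have := congrArg Complex.im hE
      simp only [← Complex.ofReal_pow, ← Complex.ofReal_natCast, ← Complex.ofReal_mul, Complex.add_im, Complex.im_ofReal_mul, Complex.exp_ofReal_mul_I_im, Complex.one_im] at this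
      convert this using 3
    -- real-analysis part
    clear_value r θ
    clear_value a
    have hθpi : -π < θ := hθ_def ▸ Complex.neg_pi_lt_arg z
    have hθpi' : θ ≤ π := hθ_def ▸ Complex.arg_le_pi z
    have h1a : (1:ℝ)/2 ≤ 1 - a := by linarith
    have hcos1 : Real.cos θ ≤ 1 := Real.cos_le_one θ
    have hcos2 : Real.cos ((w:ℝ)*θ) ≤ 1 := Real.cos_le_one _
    have hrw0 : 0 < r^w := pow_pos hr0 w
    have p1 : a*(r*Real.cos θ) ≤ a*r := by
      nlinarith [mul_le_mul_of_nonneg_left hcos1 (mul_pos ha0 hr0).le]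
    have p2 : (1-a)*(r^w*Real.cos ((w:ℝ)*θ)) ≤ (1-a)*r^w := by
      nlinarith [mul_le_mul_of_nonneg_left hcos2 (mul_pos (by linarith : (0:ℝ) < 1-a) hrw0).le]
    have huv : 1 ≤ a*r + (1-a)*r^w := by nlinarith [hre]
    have hr1 : 1 ≤ r := by
      by_contra hcon
      push_neg at hcon
      have hrw : r^w ≤ r := pow_le_of_le_one hr0.le hcon.le (by omega)
      nlinarith
    -- upper bound
    have hX : (0:ℝ) < t*(w:ℝ)^3 := by positivity
    have hwε : 2*(w:ℝ)*(1/(t*(w:ℝ)^3)) ≤ 1 := by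
      rw [mul_one_div, div_le_one hX]
      have hw3 : (w:ℝ) ≤ (w:ℝ)^3 := le_self_pow₀ (by linarith) (by omega)
      nlinarith [hw3, pow_pos hw0 3]
    have hpow : (1 + 1/(t*(w:ℝ)^3))^w ≤ 1 + 2*(w:ℝ)*(1/(t*(w:ℝ)^3)) :=
      aux_pow_bound _ hε0.le w hwε
    have hRw1 : r ≤ (1 + 1/(t*(w:ℝ)^3))^w :=
      hle.trans (le_self_pow₀ (by linarith) (by omega))
    have hRw2 : r^w ≤ (1 + 1/(t*(w:ℝ)^3))^w := pow_le_pow_left₀ hr0.le hle w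
    have hub : a*r + (1-a)*r^w ≤ 1 + 2*(w:ℝ)*(1/(t*(w:ℝ)^3)) := by
      nlinarith [hpow, mul_le_mul_of_nonneg_left hRw1 ha0.le,
        mul_le_mul_of_nonneg_left hRw2 (by linarith : (0:ℝ) ≤ 1-a)]
    have hkey : a*r*(1 - Real.cos θ) ≤ 2*(w:ℝ)*(1/(t*(w:ℝ)^3)) := by nlinarith [hre]
    have h3 : 2*(w:ℝ)*(1/(t*(w:ℝ)^3)) = 2*a/(w:ℝ)^2 := by
      rw [ha_def]; field_simp
    have hcosb : 1 - Real.cos θ ≤ 2/(w:ℝ)^2 := by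
      have hmono : a*(1-Real.cos θ) ≤ a*r*(1-Real.cos θ) := by
        nlinarith [mul_nonneg (mul_nonneg ha0.le (by linarith : (0:ℝ) ≤ 1 - Real.cos θ)) (by linarith : (0:ℝ) ≤ r - 1)]
      have h2 : a*(1-Real.cos θ) ≤ a*(2/(w:ℝ)^2) := by
        have h3' : 2*(w:ℝ)*(1/(t*(w:ℝ)^3)) ≤ 2*a/(w:ℝ)^2 := le_of_eq h3
        have hgoal : a*(2/(w:ℝ)^2) = 2*a/(w:ℝ)^2 := by ring
        linarith [hmono, hkey, h3', hgoal.ge]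
      exact le_of_mul_le_mul_left h2 ha0
    -- Jordan
    have habs : |θ| ≤ π := abs_le.mpr ⟨hθpi.le, hθpi'⟩
    have hJ := Real.cos_le_one_sub_mul_cos_sq habs
    have hπ := Real.pi_pos
    have hπ2 : (0:ℝ) < π^2 := by positivity
    have hθsq : θ^2 ≤ (π/(w:ℝ))^2 := by
      have h4 : 2/π^2*θ^2 ≤ 2/(w:ℝ)^2 := by linarith
      rw [div_pow]
      calc θ^2 = π^2/2 * (2/π^2*θ^2) := by field_simp
        _ ≤ π^2/2 * (2/(w:ℝ)^2) := by
            exact mul_le_mul_of_nonneg_left h4 (by positivity)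
        _ = π^2/(w:ℝ)^2 := by field_simp
    have hθw : |θ| ≤ π/(w:ℝ) := by
      calc |θ| = Real.sqrt (θ^2) := (Real.sqrt_sq_eq_abs θ).symm
        _ ≤ Real.sqrt ((π/(w:ℝ))^2) := Real.sqrt_le_sqrt hθsq
        _ = π/(w:ℝ) := Real.sqrt_sq (by positivity)
    obtain ⟨hθw1, hθw2⟩ := abs_le.mp hθw
    have hwθub : (w:ℝ)*θ ≤ π := by
      have := mul_le_mul_of_nonneg_left hθw2 hw0.le
      have hid : (w:ℝ)*(π/(w:ℝ)) = π := by field_simp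
      linarith
    have hwθlb : -π ≤ (w:ℝ)*θ := by
      have := mul_le_mul_of_nonneg_left hθw1 hw0.le
      have hid : (w:ℝ)*(-(π/(w:ℝ))) = -π := by field_simp
      linarith
    rcases lt_trichotomy θ 0 with hneg | hzero | hpos
    · -- θ < 0 : contradiction
      exfalso
      have hsin : Real.sin θ < 0 := Real.sin_neg_of_neg_of_neg_pi_lt hneg hθpi
      have hsw : Real.sin ((w:ℝ)*θ) ≤ 0 := by
        have hwθ0 : (w:ℝ)*θ ≤ 0 := mul_nonpos_of_nonneg_of_nonpos hw0.le hneg.le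
        have h6 : 0 ≤ Real.sin (-((w:ℝ)*θ)) :=
          Real.sin_nonneg_of_nonneg_of_le_pi (by linarith) (by linarith)
        rw [Real.sin_neg] at h6; linarith
      have q1 : a*(r*Real.sin θ) < 0 :=
        mul_neg_of_pos_of_neg ha0 (mul_neg_of_pos_of_neg hr0 hsin)
      have q2 : (1-a)*(r^w*Real.sin ((w:ℝ)*θ)) ≤ 0 :=
        mul_nonpos_of_nonneg_of_nonpos (by linarith)
          (mul_nonpos_of_nonneg_of_nonpos hrw0.le hsw)
      linarith
    · -- θ = 0 : z = 1
      have hre0 : a*r + (1-a)*r^w = 1 := by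
        rw [hzero] at hre
        simpa using hre
      have hrw : r ≤ r^w := le_self_pow₀ hr1 (by omega)
      have hr_eq : r = 1 := le_antisymm
        (by nlinarith [mul_le_mul_of_nonneg_left hrw (by linarith : (0:ℝ) ≤ 1-a)]) hr1
      rw [← hpolar, hzero, hr_eq]
      simp
    · -- θ > 0 : contradiction
      exfalso
      have hθltπ : θ < π := lt_of_le_of_lt hθw2 (div_lt_self hπ (by linarith))
      have hsin : 0 < Real.sin θ := Real.sin_pos_of_pos_of_lt_pi hpos hθltπ
      have hsw : 0 ≤ Real.sin ((w:ℝ)*θ) :=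
        Real.sin_nonneg_of_nonneg_of_le_pi (by positivity) hwθub
      have q1 : 0 < a*(r*Real.sin θ) :=
        mul_pos ha0 (mul_pos hr0 hsin)
      have q2 : 0 ≤ (1-a)*(r^w*Real.sin ((w:ℝ)*θ)) :=
        mul_nonneg (by linarith) (mul_nonneg hrw0.le hsw)
      linarith
  · rintro rfl
    constructor
    · simp only [one_pow, mul_one]
      ring
    · simp only [norm_one]
      linarith
end

section
/- Let τ be an imaginary quadratic algebraic integer and let V = {z ∈ C : |z| ≤ |z − y| for all y ∈ Z[τ]} be the Voronoi cell of 0 for the lattice Z[τ]. Then the closed disc of radius 1/2 around 0 is contained in V, and V is contained in the closed disc of radius |τ|·√(7/12) around 0. -/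
set_option maxHeartbeats 1000000 in
/-- Let `τ` be an imaginary quadratic algebraic integer and let
`V = {z ∈ ℂ : |z| ≤ |z - y| for all y ∈ ℤ[τ]}` be the Voronoi cell of `0` for the lattice
`ℤ[τ] = ℤ + ℤτ`. Then the closed disc of radius `1/2` around `0` is contained in `V`,
and `V` is contained in the closed disc of radius `|τ|·√(7/12)` around `0`. -/
theorem voronoi_cell_bounds (p q : ℤ) (τ : ℂ)
    (hτ : τ ^ 2 - (p : ℂ) * τ + (q : ℂ) = 0) (hdisc : p ^ 2 < 4 * q) :
    Metric.closedBall (0 : ℂ) (1 / 2) ⊆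
      {z : ℂ | ∀ a b : ℤ, ‖z‖ ≤ ‖z - ((a : ℂ) + (b : ℂ) * τ)‖} ∧
    {z : ℂ | ∀ a b : ℤ, ‖z‖ ≤ ‖z - ((a : ℂ) + (b : ℂ) * τ)‖} ⊆
      Metric.closedBall (0 : ℂ) (‖τ‖ * Real.sqrt (7 / 12)) := by
  have h1 := congrArg Complex.re hτ
  have h2 := congrArg Complex.im hτ
  simp [Complex.ext_iff, pow_two, Complex.mul_re, Complex.mul_im] at h1 h2
  set x := τ.re with hxdef
  set y := τ.im with hydef
  clear_value x y
  have hdiscR : (p:ℝ)^2 < 4*(q:ℝ) := by exact_mod_cast hdisc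
  have hy : y ≠ 0 := by
    intro h
    rw [h] at h1
    nlinarith [h1, sq_nonneg (2*x - (p:ℝ))]
  have hx2 : 2*x = (p:ℝ) := by
    have h : y * (2*x - p) = 0 := by linear_combination h2
    rcases mul_eq_zero.mp h with h' | h'
    · exact absurd h' hy
    · linarith
  have hq : x^2 + y^2 = (q:ℝ) := by linear_combination x*hx2 - h1
  have hy2 : y^2 = (q:ℝ) - (p:ℝ)^2/4 := by nlinarith [hq, hx2]
  have hq1 : (1:ℝ) ≤ (q:ℝ) := by
    have : (1:ℤ) ≤ q := by nlinarith [sq_nonneg p]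
    exact_mod_cast this
  constructor
  · intro z hz a b
    rw [Metric.mem_closedBall, Complex.dist_eq, sub_zero] at hz
    by_cases hab : a = 0 ∧ b = 0
    · simp [hab.1, hab.2]
    · set w : ℂ := (a : ℂ) + (b : ℂ) * τ with hw
      have hwre : w.re = a + b*x := by
        rw [hw, hxdef]; simp [Complex.add_re, Complex.mul_re]
      have hwim : w.im = b*y := by
        rw [hw, hydef]; simp [Complex.add_im, Complex.mul_im]
      have hsq : (‖w‖)^2 = ((a:ℝ) + b*x)^2 + ((b:ℝ)*y)^2 := by
        rw [Complex.sq_norm, Complex.normSq_apply, hwre, hwim]; ring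
      have key : ((a:ℝ) + b*x)^2 + ((b:ℝ)*y)^2 = ((a^2 + a*b*p + b^2*q : ℤ) : ℝ) := by
        push_cast
        linear_combination ((a:ℝ)*b)*hx2 + ((b:ℝ)^2)*hq
      have hpos : (0:ℤ) < a^2 + a*b*p + b^2*q := by
        have : (0:ℝ) < ((a^2 + a*b*p + b^2*q : ℤ) : ℝ) := by
          rw [← key]
          rcases eq_or_ne b 0 with hb | hb
          · have ha : a ≠ 0 := fun h => hab ⟨h, hb⟩
            have : ((a:ℝ)) ≠ 0 := Int.cast_ne_zero.mpr ha
            rw [hb]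
            have ha2 : (0:ℝ) < (a:ℝ)^2 := by positivity
            push_cast
            nlinarith [ha2]
          · have hb' : ((b:ℝ)) ≠ 0 := Int.cast_ne_zero.mpr hb
            have : ((b:ℝ)*y)^2 > 0 := by positivity
            nlinarith [sq_nonneg ((a:ℝ) + b*x)]
        exact_mod_cast this
      have hge1 : (1:ℝ) ≤ (‖w‖)^2 := by
        rw [hsq, key]
        exact_mod_cast hpos
      have habs1 : 1 ≤ ‖w‖ := by
        nlinarith [norm_nonneg w]
      have htri : ‖w‖ - ‖z‖ ≤ ‖z - w‖ := by
        have h := norm_sub_norm_le w z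
        rwa [norm_sub_rev] at h
      linarith
  · intro z hz
    simp only [Set.mem_setOf_eq] at hz
    obtain ⟨b, hbb⟩ : ∃ b : ℤ, |z.im / y - b| ≤ 1/2 := ⟨round (z.im / y), abs_sub_round _⟩
    obtain ⟨a, hre⟩ : ∃ a : ℤ, |z.re - (b:ℝ)*x - a| ≤ 1/2 :=
      ⟨round (z.re - (b:ℝ)*x), abs_sub_round _⟩
    have hzab := hz a b
    set w : ℂ := (a : ℂ) + (b : ℂ) * τ with hw
    have him : |z.im - b*y| ≤ |y|/2 := by
      have heq : z.im - b*y = y * (z.im / y - b) := by field_simp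
      rw [heq, abs_mul]
      have hy' : 0 < |y| := abs_pos.mpr hy
      calc |y| * |z.im / y - (b:ℝ)| ≤ |y| * (1/2) :=
            mul_le_mul_of_nonneg_left hbb (le_of_lt hy')
        _ = |y|/2 := by ring
    have hzwre : (z - w).re = z.re - ((a:ℝ) + (b:ℝ)*x) := by
      rw [hw, hxdef]
      simp [Complex.sub_re, Complex.add_re, Complex.mul_re]
    have hzwim : (z - w).im = z.im - (b:ℝ)*y := by
      rw [hw, hydef]
      simp [Complex.sub_im, Complex.add_im, Complex.mul_im]
    have hwsq : (‖z - w‖)^2 = (z.re - (a:ℝ) - b*x)^2 + (z.im - b*y)^2 := by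
      rw [Complex.sq_norm, Complex.normSq_apply, hzwre, hzwim]
      ring
    have him2 : (z.im - b*y)^2 ≤ y^2/4 := by
      have t1 : |z.im - (b:ℝ)*y|^2 ≤ (|y|/2)^2 := pow_le_pow_left₀ (abs_nonneg _) him 2
      rw [sq_abs] at t1
      have t2 : (|y|/2)^2 = y^2/4 := by rw [div_pow, sq_abs]; norm_num
      linarith
    have hre2 : (z.re - (a:ℝ) - b*x)^2 ≤ 1/4 := by
      have t1 : |z.re - (b:ℝ)*x - a|^2 ≤ ((1:ℝ)/2)^2 := pow_le_pow_left₀ (abs_nonneg _) hre 2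
      rw [sq_abs] at t1
      have t2 : (z.re - (a:ℝ) - b*x)^2 = (z.re - (b:ℝ)*x - a)^2 := by ring
      rw [t2]
      linarith [t1]
    have hbound : (‖z - w‖)^2 ≤ 7*(q:ℝ)/12 := by
      rw [hwsq]
      have := sq_nonneg (p:ℝ)
      linarith
    have htau : (‖τ‖)^2 = (q:ℝ) := by
      rw [Complex.sq_norm, Complex.normSq_apply, ← hxdef, ← hydef]; nlinarith
    rw [Metric.mem_closedBall, Complex.dist_eq, sub_zero]
    have hrhs : (‖τ‖ * Real.sqrt (7/12))^2 = 7*(q:ℝ)/12 := by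
      rw [mul_pow, htau, Real.sq_sqrt (by norm_num : (7:ℝ)/12 ≥ 0)]
      ring
    have h0 : 0 ≤ ‖τ‖ * Real.sqrt (7/12) := by positivity
    have hzw : ‖z - w‖ ≤ ‖τ‖ * Real.sqrt (7/12) := by
      nlinarith [norm_nonneg (z - w), h0, hbound, hrhs]
    linarith [hzab, hzw]
end

section
/- Let τ be an imaginary quadratic algebraic integer and V the Voronoi cell of 0 for the lattice Z[τ]. Then the Lebesgue measure of V equals |Im τ|. -/
open MeasureTheory Submodule

theorem voronoi_isFD (L : AddSubgroup ℂ) (hLc : IsClosed (L : Set ℂ)) :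
    IsAddFundamentalDomain L
      {z : ℂ | ∀ w ∈ L, ‖z‖ ≤ ‖z - w‖} volume := by
  set V : Set ℂ := {z : ℂ | ∀ w ∈ L, ‖z‖ ≤ ‖z - w‖} with hVdef
  have hvadd : ∀ (u : L) (x : ℂ), u +ᵥ x = (↑u : ℂ) + x := fun u x => rfl
  have hVclosed : IsClosed V := by
    have : V = ⋂ w : L, {z : ℂ | ‖z‖ ≤ ‖z - ↑w‖} := by
      ext z
      simp [hVdef, Set.mem_iInter, Subtype.forall]
    rw [this]
    exact isClosed_iInter fun w => isClosed_le continuous_norm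
      (continuous_norm.comp (continuous_id.sub continuous_const))
  refine ⟨hVclosed.measurableSet.nullMeasurableSet, Filter.Eventually.of_forall fun x => ?_, ?_⟩
  · -- covers
    set K := (L : Set ℂ) ∩ Metric.closedBall x (dist x 0) with hK
    have h0K : (0 : ℂ) ∈ K := ⟨L.zero_mem, by simp [Metric.mem_closedBall, dist_comm]⟩
    have hKc : IsCompact K := (isCompact_closedBall x _).inter_left hLc
    obtain ⟨y, hyK, hmin⟩ := hKc.exists_isMinOn ⟨0, h0K⟩
      ((continuous_const.dist continuous_id).continuousOn)
    refine ⟨⟨-y, L.neg_mem hyK.1⟩, fun w hw => ?_⟩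
    rw [hvadd]
    have key : dist x y ≤ dist x (y + w) := by
      by_cases hball : y + w ∈ Metric.closedBall x (dist x 0)
      · exact hmin ⟨L.add_mem hyK.1 hw, hball⟩
      · have h1 : dist x y ≤ dist x 0 := hmin h0K
        have h2 : dist x 0 < dist (y + w) x :=
          lt_of_not_ge (by simpa [Metric.mem_closedBall] using hball)
        rw [dist_comm (y + w) x] at h2
        linarith
    have coemk : (↑(⟨-y, L.neg_mem hyK.1⟩ : L) : ℂ) = -y := rfl
    rw [coemk]
    have lhs : ‖-y + x‖ = dist x y := by
      rw [Complex.dist_eq]; congr 1; ring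
    have rhs : ‖-y + x - w‖ = dist x (y + w) := by
      rw [Complex.dist_eq]; congr 1; ring
    rw [lhs, rhs]; exact key
  · -- aedisjoint
    intro g h hgh
    have hco : (↑g : ℂ) ≠ ↑h := fun e => hgh (Subtype.coe_injective e)
    refine measure_mono_null (fun z hz => ?_)
      (show volume {z : ℂ | dist z (↑g : ℂ) = dist z (↑h : ℂ)} = 0 from ?_)
    · obtain ⟨hz1, hz2⟩ := hz
      rw [Set.mem_vadd_set_iff_neg_vadd_mem] at hz1 hz2
      have e1 := hz1 ((↑h : ℂ) - ↑g) (L.sub_mem h.2 g.2)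
      have e2 := hz2 ((↑g : ℂ) - ↑h) (L.sub_mem g.2 h.2)
      rw [hvadd] at e1 e2
      have e1' : ‖z - ↑g‖ ≤ ‖z - ↑h‖ := by
        convert e1 using 2 <;> push_cast <;> ring
      have e2' : ‖z - ↑h‖ ≤ ‖z - ↑g‖ := by
        convert e2 using 2 <;> push_cast <;> ring
      simp only [Set.mem_setOf_eq, Complex.dist_eq]
      exact le_antisymm e1' e2'
    · have : {z : ℂ | dist z (↑g : ℂ) = dist z ↑h} =
          (AffineSubspace.perpBisector (↑g : ℂ) ↑h : Set ℂ) := by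
        ext z; simp [AffineSubspace.mem_perpBisector_iff_dist_eq]
      rw [this]
      exact Measure.addHaar_affineSubspace _ _ (by simpa using hco)
private theorem voronoi_li (τ : ℂ) (him : τ.im ≠ 0) : LinearIndependent ℝ ![(1:ℂ), τ] := by
  rw [linearIndependent_fin2]
  refine ⟨by simpa using fun h => him (by simp [h]), fun a h => ?_⟩
  simp only [Matrix.cons_val_one, Matrix.head_cons, Matrix.cons_val_zero] at h
  have h2 := congrArg Complex.im h
  simp [Complex.smul_im] at h2
  rcases h2 with h2 | h2
  · rw [h2] at h; simp at h
  · exact him h2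

/-- Let `τ` be an imaginary quadratic algebraic integer and `V` the Voronoi cell of `0` for
the lattice `ℤ[τ] = ℤ + ℤτ`. Then the Lebesgue measure of `V` equals `|Im τ|`. -/
theorem voronoi_cell_volume (p q : ℤ) (τ : ℂ)
    (hτ : τ ^ 2 - (p : ℂ) * τ + (q : ℂ) = 0) (hdisc : p ^ 2 < 4 * q) :
    MeasureTheory.volume
      {z : ℂ | ∀ a b : ℤ, ‖z‖ ≤ ‖z - ((a : ℂ) + (b : ℂ) * τ)‖} =
    ENNReal.ofReal |τ.im| := by
  have him : τ.im ≠ 0 := by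
    intro h
    have hre := congrArg Complex.re hτ
    simp [pow_two, Complex.mul_re, Complex.mul_im, h] at hre
    have hd : (p:ℝ)^2 < 4*q := by exact_mod_cast hdisc
    nlinarith [sq_nonneg (2*τ.re - (p:ℝ))]
  set b : Module.Basis (Fin 2) ℝ ℂ :=
    basisOfLinearIndependentOfCardEqFinrank (voronoi_li τ him)
      (by simp [Complex.finrank_real_complex]) with hbdef
  have hrange : Set.range ⇑b = {1, τ} := by
    rw [hbdef, coe_basisOfLinearIndependentOfCardEqFinrank]
    ext z; simp [Fin.exists_fin_two, or_comm]
  set L : AddSubgroup ℂ := (span ℤ (Set.range ⇑b)).toAddSubgroup with hLdef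
  have hmem : ∀ w : ℂ, w ∈ L ↔ ∃ a c : ℤ, (a:ℂ) + (c:ℂ) * τ = w := by
    intro w
    rw [hLdef, Submodule.mem_toAddSubgroup, hrange, mem_span_pair]
    simp only [zsmul_eq_mul, mul_one]
  have hLc : IsClosed (L : Set ℂ) := AddSubgroup.isClosed_of_discrete
  have hsets : {z : ℂ | ∀ a b : ℤ, ‖z‖ ≤ ‖z - ((a : ℂ) + (b : ℂ) * τ)‖} =
      {z : ℂ | ∀ w ∈ L, ‖z‖ ≤ ‖z - w‖} := by
    ext z
    constructor
    · intro hz w hw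
      obtain ⟨a, c, rfl⟩ := (hmem w).1 hw
      exact hz a c
    · intro hz a c
      exact hz _ ((hmem _).2 ⟨a, c, rfl⟩)
  have hFD := voronoi_isFD L hLc
  have hcount : Countable L := (inferInstance : Countable (span ℤ (Set.range ⇑b)))
  rw [hsets, hFD.measure_eq (ZSpan.isAddFundamentalDomain' b volume),
    ZSpan.measure_fundamentalDomain b volume Complex.basisOneI]
  have hvol1 : volume (ZSpan.fundamentalDomain Complex.basisOneI) = 1 := by
    have : ZSpan.fundamentalDomain Complex.basisOneI =
        Complex.measurableEquivRealProd ⁻¹' (Set.Ico 0 1 ×ˢ Set.Ico 0 1) := by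
      ext z
      simp [ZSpan.mem_fundamentalDomain, Complex.coe_basisOneI_repr, Fin.forall_fin_two,
        Complex.measurableEquivRealProd_apply, and_comm]
    rw [this, Complex.volume_preserving_equiv_real_prod.measure_preimage
      (measurableSet_Ico.prod measurableSet_Ico).nullMeasurableSet,
      Measure.volume_eq_prod, Measure.prod_prod, Real.volume_Ico]
    simp
  have hdet : Complex.basisOneI.det ⇑b = τ.im := by
    rw [Module.Basis.det_apply, Matrix.det_fin_two]
    simp [Module.Basis.toMatrix_apply, hbdef, coe_basisOfLinearIndependentOfCardEqFinrank,
      Complex.coe_basisOneI_repr]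
  rw [hvol1, hdet, mul_one]
end

section
/- Let τ be an imaginary quadratic algebraic integer with |τ| > 1 and V the Voronoi cell of 0 for the lattice Z[τ]. Then τ^{-1} V ⊆ V. -/
/-- Let `τ` be an imaginary quadratic algebraic integer with `|τ| > 1` and `V` the Voronoi
cell of `0` for the lattice `ℤ[τ]`. Then `τ⁻¹ V ⊆ V`. -/
theorem voronoi_cell_inv_smul_subset (p q : ℤ) (τ : ℂ)
    (hτ : τ ^ 2 - (p : ℂ) * τ + (q : ℂ) = 0) (hdisc : p ^ 2 < 4 * q)
    (habs : 1 < ‖τ‖) :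
    ∀ z ∈ {z : ℂ | ∀ a b : ℤ, ‖z‖ ≤ ‖z - ((a : ℂ) + (b : ℂ) * τ)‖},
      τ⁻¹ * z ∈ {z : ℂ | ∀ a b : ℤ, ‖z‖ ≤ ‖z - ((a : ℂ) + (b : ℂ) * τ)‖} := by
  intro z hz a b
  have hτ0 : τ ≠ 0 := by
    intro h
    rw [h] at habs
    simp at habs
    linarith
  have key := hz (-(b * q)) (a + b * p)
  have eq1 : z - ((↑(-(b * q)) : ℂ) + (↑(a + b * p) : ℂ) * τ)
      = τ * (τ⁻¹ * z - ((a : ℂ) + (b : ℂ) * τ)) := by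
    push_cast
    field_simp
    linear_combination (b : ℂ) * hτ
  rw [eq1, norm_mul] at key
  have eq2 : ‖τ⁻¹ * z‖ = ‖z‖ / ‖τ‖ := by
    rw [norm_mul, norm_inv]
    field_simp
  rw [eq2]
  rw [div_le_iff₀ (by linarith)]
  linarith [key]
end

section
/- Let τ be an imaginary quadratic algebraic integer and V its Voronoi cell of 0. Then V is convex, and all vertices of V have the same absolute value. -/
set_option maxHeartbeats 1000000

-- Lemma I: minimum of the form
theorem formMin (A B s : ℝ) (hA : 0 ≤ A) (hB : 0 ≤ B) (hs : s ≤ 0)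
    (h13 : 0 ≤ A + s) (h23 : 0 ≤ B + s) (m n : ℤ) (hmn : ¬(m = 0 ∧ n = 0)) :
    min A (min B (A + B + 2*s)) ≤ (m:ℝ)^2*A + (n:ℝ)^2*B + 2*m*n*s := by
  have hC : (0:ℝ) ≤ A + B + 2*s := by linarith
  have key : ∀ x : ℤ, x ≠ 0 → (1:ℝ) ≤ (x:ℝ)^2 := by
    intro x hx
    have h := Int.one_le_abs hx
    have : (1:ℤ) ≤ x^2 := by nlinarith [sq_abs x]
    exact_mod_cast this
  rcases eq_or_ne m 0 with hm | hm
  · subst hm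
    have hn : n ≠ 0 := by tauto
    have h1 := key n hn
    have : min A (min B (A+B+2*s)) ≤ B := le_trans (min_le_right _ _) (min_le_left _ _)
    push_cast
    nlinarith
  · rcases eq_or_ne n 0 with hn | hn
    · subst hn
      have h1 := key m hm
      have : min A (min B (A+B+2*s)) ≤ A := min_le_left _ _
      push_cast
      nlinarith
    · -- both nonzero
      have h1 := key m hm
      have h2 := key n hn
      rcases le_or_gt (m*n) 0 with hmn0 | hmn0
      · -- opposite signs: ≥ A + B ≥ min
        have hmn0' : (m:ℝ)*(n:ℝ) ≤ 0 := by exact_mod_cast hmn0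
        have : min A (min B (A+B+2*s)) ≤ A := min_le_left _ _
        nlinarith
      · -- same sign
        have hC' : min A (min B (A+B+2*s)) ≤ A+B+2*s :=
          le_trans (min_le_right _ _) (min_le_right _ _)
        rcases eq_or_ne m n with he | he
        · subst he
          nlinarith
        · -- m ≠ n, same sign
          have hmn0' : (0:ℝ) < (m:ℝ)*(n:ℝ) := by exact_mod_cast hmn0
          rcases le_or_gt 1 m with hm1 | hm1
          · -- m ≥ 1, so n ≥ 1
            have hn1 : (1:ℤ) ≤ n := by nlinarith
            have hm1' : (1:ℝ) ≤ (m:ℝ) := by exact_mod_cast hm1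
            have hn1' : (1:ℝ) ≤ (n:ℝ) := by exact_mod_cast hn1
            rcases lt_or_gt_of_ne he with hlt | hgt
            · -- m < n
              have : (m:ℝ) + 1 ≤ n := by exact_mod_cast hlt
              nlinarith [sq_nonneg ((n:ℝ) - m), mul_nonneg (mul_nonneg (by linarith : (0:ℝ) ≤ (m:ℝ)) (by linarith : (0:ℝ) ≤ (n:ℝ) - m)) h23]
            · have : (n:ℝ) + 1 ≤ m := by exact_mod_cast hgt
              nlinarith [sq_nonneg ((m:ℝ) - n), mul_nonneg (mul_nonneg (by linarith : (0:ℝ) ≤ (n:ℝ)) (by linarith : (0:ℝ) ≤ (m:ℝ) - n)) h13]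
          · -- m ≤ 0, so m ≤ -1, n ≤ -1
            have hm1 : m ≤ -1 := by omega
            have hn1 : n ≤ -1 := by nlinarith
            have hm1' : (m:ℝ) ≤ -1 := by exact_mod_cast hm1
            have hn1' : (n:ℝ) ≤ -1 := by exact_mod_cast hn1
            rcases lt_or_gt_of_ne he with hlt | hgt
            · have : (m:ℝ) + 1 ≤ n := by exact_mod_cast hlt
              nlinarith [sq_nonneg ((n:ℝ) - m), mul_nonneg (mul_nonneg (by linarith : (0:ℝ) ≤ -(n:ℝ)) (by linarith : (0:ℝ) ≤ (n:ℝ) - m)) h13]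
            · have : (n:ℝ) + 1 ≤ m := by exact_mod_cast hgt
              nlinarith [sq_nonneg ((m:ℝ) - n), mul_nonneg (mul_nonneg (by linarith : (0:ℝ) ≤ -(m:ℝ)) (by linarith : (0:ℝ) ≤ (m:ℝ) - n)) h23]

-- helper: vectors strictly shorter than the "mid" value are parallel to a superbase vector
theorem formMid (A B s : ℝ) (hA : 0 < A) (hB : 0 < B) (hs : s ≤ 0)
    (h13 : 0 ≤ A + s) (h23 : 0 ≤ B + s) (hC : 0 < A + B + 2*s)
    (m n : ℤ) (hmn : ¬(m = 0 ∧ n = 0))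
    (hlt : (m:ℝ)^2*A + (n:ℝ)^2*B + 2*m*n*s
      < min (max A B) (min (max A (A+B+2*s)) (max B (A+B+2*s)))) :
    (n = 0 ∧ A < min (max A B) (min (max A (A+B+2*s)) (max B (A+B+2*s)))) ∨
    (m = 0 ∧ B < min (max A B) (min (max A (A+B+2*s)) (max B (A+B+2*s)))) ∨
    (m = n ∧ (A+B+2*s) < min (max A B) (min (max A (A+B+2*s)) (max B (A+B+2*s)))) := by
  set C := A + B + 2*s with hCdef
  set mid := min (max A B) (min (max A C) (max B C)) with hmid
  have hmAB : mid ≤ max A B := min_le_left _ _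
  have hmAC : mid ≤ max A C := le_trans (min_le_right _ _) (min_le_left _ _)
  have hmBC : mid ≤ max B C := le_trans (min_le_right _ _) (min_le_right _ _)
  have key : ∀ x : ℤ, x ≠ 0 → (1:ℝ) ≤ (x:ℝ)^2 := by
    intro x hx
    have h := Int.one_le_abs hx
    have : (1:ℤ) ≤ x^2 := by nlinarith [sq_abs x]
    exact_mod_cast this
  rcases eq_or_ne n 0 with hn | hn
  · left
    refine ⟨hn, ?_⟩
    subst hn
    have hm : m ≠ 0 := by tauto
    have h1 := key m hm
    push_cast at hlt
    nlinarith
  · rcases eq_or_ne m 0 with hm | hm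
    · right; left
      refine ⟨hm, ?_⟩
      subst hm
      have h1 := key n hn
      push_cast at hlt
      nlinarith
    · rcases eq_or_ne m n with he | he
      · right; right
        refine ⟨he, ?_⟩
        subst he
        have h1 := key m hm
        push_cast at hlt
        nlinarith
      · -- impossible: show expr ≥ mid
        exfalso
        have h1 := key m hm
        have h2 := key n hn
        rcases le_or_gt (m*n) 0 with hmn0 | hmn0
        · have hmn0' : (m:ℝ)*(n:ℝ) ≤ 0 := by exact_mod_cast hmn0
          have : mid ≤ max A B := hmAB
          have hmax : max A B ≤ A + B := by
            rcases max_cases A B with ⟨h,_⟩|⟨h,_⟩ <;> rw [h] <;> linarith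
          nlinarith
        · have hmn0' : (0:ℝ) < (m:ℝ)*(n:ℝ) := by exact_mod_cast hmn0
          rcases le_or_gt 1 m with hm1 | hm1
          · have hn1 : (1:ℤ) ≤ n := by nlinarith
            have hm1' : (1:ℝ) ≤ (m:ℝ) := by exact_mod_cast hm1
            have hn1' : (1:ℝ) ≤ (n:ℝ) := by exact_mod_cast hn1
            rcases lt_or_gt_of_ne he with hlt2 | hgt
            · -- m < n : expr ≥ B + C ≥ max B C ≥ mid
              have h3 : (m:ℝ) + 1 ≤ n := by exact_mod_cast hlt2
              have hmax : max B C ≤ B + C := by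
                rcases max_cases B C with ⟨h,_⟩|⟨h,_⟩ <;> rw [h] <;> linarith
              have hd : (1:ℝ) ≤ (n:ℝ)-m := by linarith
              have e1 : (0:ℝ) ≤ (((n:ℝ)-m)^2 - 1) * B :=
                mul_nonneg (by nlinarith) hB.le
              have e2 : (0:ℝ) ≤ ((m:ℝ)^2 - 1) * C :=
                mul_nonneg (by nlinarith) hC.le
              have e3 : (0:ℝ) ≤ (2*(m:ℝ)*((n:ℝ)-m))*(B+s) :=
                mul_nonneg (by nlinarith) h23
              nlinarith [e1, e2, e3]
            · have h3 : (n:ℝ) + 1 ≤ m := by exact_mod_cast hgt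
              have hmax : max A C ≤ A + C := by
                rcases max_cases A C with ⟨h,_⟩|⟨h,_⟩ <;> rw [h] <;> linarith
              have hd : (1:ℝ) ≤ (m:ℝ)-n := by linarith
              have e1 : (0:ℝ) ≤ (((m:ℝ)-n)^2 - 1) * A :=
                mul_nonneg (by nlinarith) hA.le
              have e2 : (0:ℝ) ≤ ((n:ℝ)^2 - 1) * C :=
                mul_nonneg (by nlinarith) hC.le
              have e3 : (0:ℝ) ≤ (2*(n:ℝ)*((m:ℝ)-n))*(A+s) :=
                mul_nonneg (by nlinarith) h13
              nlinarith [e1, e2, e3]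
          · have hm1 : m ≤ -1 := by omega
            have hn1 : n ≤ -1 := by nlinarith
            have hm1' : (m:ℝ) ≤ -1 := by exact_mod_cast hm1
            have hn1' : (n:ℝ) ≤ -1 := by exact_mod_cast hn1
            rcases lt_or_gt_of_ne he with hlt2 | hgt
            · -- m < n ≤ -1: |m| > |n|: expr ≥ A + C ≥ max A C
              have h3 : (m:ℝ) + 1 ≤ n := by exact_mod_cast hlt2
              have hmax : max A C ≤ A + C := by
                rcases max_cases A C with ⟨h,_⟩|⟨h,_⟩ <;> rw [h] <;> linarith
              have hd : (1:ℝ) ≤ (n:ℝ)-m := by linarith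
              have e1 : (0:ℝ) ≤ (((m:ℝ)-n)^2 - 1) * A :=
                mul_nonneg (by nlinarith) hA.le
              have e2 : (0:ℝ) ≤ ((n:ℝ)^2 - 1) * C :=
                mul_nonneg (by nlinarith) hC.le
              have e3 : (0:ℝ) ≤ (2*(n:ℝ)*((m:ℝ)-n))*(A+s) :=
                mul_nonneg (by nlinarith) h13
              nlinarith [e1, e2, e3]
            · have h3 : (n:ℝ) + 1 ≤ m := by exact_mod_cast hgt
              have hmax : max B C ≤ B + C := by
                rcases max_cases B C with ⟨h,_⟩|⟨h,_⟩ <;> rw [h] <;> linarith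
              have hd : (1:ℝ) ≤ (m:ℝ)-n := by linarith
              have e1 : (0:ℝ) ≤ (((n:ℝ)-m)^2 - 1) * B :=
                mul_nonneg (by nlinarith) hB.le
              have e2 : (0:ℝ) ≤ ((m:ℝ)^2 - 1) * C :=
                mul_nonneg (by nlinarith) hC.le
              have e3 : (0:ℝ) ≤ (2*(m:ℝ)*((n:ℝ)-m))*(B+s) :=
                mul_nonneg (by nlinarith) h23
              nlinarith [e1, e2, e3]

open Complex

private structure SB (D : ℝ) (v1 v2 v3 : ℂ) : Prop where
  sum : v1 + v2 + v3 = 0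
  ip12 : v1.re*v2.re + v1.im*v2.im ≤ 0
  ip13 : v1.re*v3.re + v1.im*v3.im ≤ 0
  ip23 : v2.re*v3.re + v2.im*v3.im ≤ 0
  det : (v1.re*v2.im - v1.im*v2.re)^2 = D

private lemma SB.swap12 {D v1 v2 v3} (h : SB D v1 v2 v3) : SB D v2 v1 v3 := by
  obtain ⟨hs, h12, h13, h23, hd⟩ := h
  exact ⟨by linear_combination hs, by linarith, h23, h13, by linear_combination hd⟩

private lemma SB.v3eq {D v1 v2 v3} (h : SB D v1 v2 v3) : v3 = -v1 - v2 := by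
  linear_combination h.sum

private lemma SB.swap23 {D v1 v2 v3} (h : SB D v1 v2 v3) : SB D v1 v3 v2 := by
  obtain ⟨hs, h12, h13, h23, hd⟩ := h
  refine ⟨by linear_combination hs, h13, h12, by linarith, ?_⟩
  have h3 : v3 = -v1 - v2 := by linear_combination hs
  rw [h3]
  simp only [Complex.sub_re, Complex.sub_im, Complex.neg_re, Complex.neg_im]
  linear_combination hd

private lemma SB.nsq3 {D v1 v2 v3} (h : SB D v1 v2 v3) :
    Complex.normSq v3 = Complex.normSq v1 + Complex.normSq v2
      + 2*(v1.re*v2.re + v1.im*v2.im) := by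
  rw [h.v3eq]
  simp only [Complex.normSq_apply, Complex.sub_re, Complex.sub_im, Complex.neg_re,
    Complex.neg_im]
  ring

private lemma SB.sum13 {D v1 v2 v3} (h : SB D v1 v2 v3) :
    0 ≤ Complex.normSq v1 + (v1.re*v2.re + v1.im*v2.im) := by
  have h3 := h.v3eq
  have := h.ip13
  rw [h3] at this
  simp only [Complex.sub_re, Complex.sub_im, Complex.neg_re, Complex.neg_im] at this
  simp only [Complex.normSq_apply]
  nlinarith [this]

private lemma SB.pos1 {D v1 v2 v3} (hD : 0 < D) (h : SB D v1 v2 v3) :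
    0 < Complex.normSq v1 := by
  rcases eq_or_ne v1 0 with rfl | hv
  · exfalso
    have hd := h.det
    simp only [Complex.zero_re, Complex.zero_im] at hd
    nlinarith
  · exact Complex.normSq_pos.2 hv

private lemma normSq_combo (v1 v2 : ℂ) (m n : ℤ) :
    Complex.normSq ((m:ℂ)*v1 + (n:ℂ)*v2)
      = (m:ℝ)^2 * Complex.normSq v1 + (n:ℝ)^2 * Complex.normSq v2
        + 2*(m:ℝ)*(n:ℝ)*(v1.re*v2.re + v1.im*v2.im) := by
  simp only [Complex.normSq_apply, Complex.add_re, Complex.add_im, Complex.mul_re,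
    Complex.mul_im, Complex.intCast_re, Complex.intCast_im]
  ring

private lemma det_combo (v1 v2 : ℂ) (m n m' n' : ℤ) :
    ((m:ℂ)*v1 + (n:ℂ)*v2).re * ((m':ℂ)*v1 + (n':ℂ)*v2).im
      - ((m:ℂ)*v1 + (n:ℂ)*v2).im * ((m':ℂ)*v1 + (n':ℂ)*v2).re
    = ((m:ℝ)*n' - (m':ℝ)*n) * (v1.re*v2.im - v1.im*v2.re) := by
  simp only [Complex.add_re, Complex.add_im, Complex.mul_re, Complex.mul_im,
    Complex.intCast_re, Complex.intCast_im]
  ring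

-- min₃ of the superbase is ≤ any nonzero lattice combo
private lemma SB.min_le {D v1 v2 v3} (hD : 0 < D) (h : SB D v1 v2 v3)
    (m n : ℤ) (hmn : ¬(m = 0 ∧ n = 0)) :
    min (Complex.normSq v1) (min (Complex.normSq v2) (Complex.normSq v3))
      ≤ Complex.normSq ((m:ℂ)*v1 + (n:ℂ)*v2) := by
  have h1 := h.sum13
  have h2 := h.swap12.sum13
  have h3 := h.nsq3
  rw [normSq_combo, h3]
  have h2' : 0 ≤ Complex.normSq v2 + (v1.re*v2.re + v1.im*v2.im) := by
    have := h2; nlinarith [this]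
  have := formMin (Complex.normSq v1) (Complex.normSq v2) (v1.re*v2.re + v1.im*v2.im)
    (Complex.normSq_nonneg v1) (Complex.normSq_nonneg v2) h.ip12 h1 h2' m n hmn
  linarith [this]

private lemma SB.mid_le {D v1 v2 v3} (hD : 0 < D) (h : SB D v1 v2 v3)
    (m n m' n' : ℤ) (hdet : m * n' - m' * n ≠ 0) :
    min (max (Complex.normSq v1) (Complex.normSq v2))
      (min (max (Complex.normSq v1) (Complex.normSq v3))
        (max (Complex.normSq v2) (Complex.normSq v3)))
      ≤ max (Complex.normSq ((m:ℂ)*v1 + (n:ℂ)*v2))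
          (Complex.normSq ((m':ℂ)*v1 + (n':ℂ)*v2)) := by
  have hA : 0 < Complex.normSq v1 := h.pos1 hD
  have hB : 0 < Complex.normSq v2 := h.swap12.pos1 hD
  have hCpos : 0 < Complex.normSq v3 := h.swap23.swap12.pos1 hD
  have h13 : 0 ≤ Complex.normSq v1 + (v1.re*v2.re + v1.im*v2.im) := h.sum13
  have h23' := h.swap12.sum13
  have h23 : 0 ≤ Complex.normSq v2 + (v1.re*v2.re + v1.im*v2.im) := by nlinarith [h23']
  have hip := h.ip12
  have hC3 : Complex.normSq v3 = Complex.normSq v1 + Complex.normSq v2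
      + 2*(v1.re*v2.re + v1.im*v2.im) := h.nsq3
  have hm1 : ¬(m = 0 ∧ n = 0) := by rintro ⟨rfl, rfl⟩; exact hdet (by ring)
  have hm2 : ¬(m' = 0 ∧ n' = 0) := by rintro ⟨rfl, rfl⟩; exact hdet (by ring)
  obtain ⟨A, B, s, hA', hB', hs'⟩ :
      ∃ A B s, Complex.normSq v1 = A ∧ Complex.normSq v2 = B
        ∧ v1.re*v2.re + v1.im*v2.im = s := ⟨_, _, _, rfl, rfl, rfl⟩
  rw [normSq_combo, normSq_combo, hC3]
  simp only [hA', hB', hs'] at *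
  rw [hC3] at hCpos
  by_contra hcon
  push_neg at hcon
  obtain ⟨hlt1, hlt2⟩ := max_lt_iff.1 hcon
  have key1 := formMid A B s hA hB hip h13 h23 hCpos m n hm1 (by linarith)
  have key2 := formMid A B s hA hB hip h13 h23 hCpos m' n' hm2 (by linarith)
  have hmAB : min (max A B) (min (max A (A+B+2*s)) (max B (A+B+2*s))) ≤ max A B :=
    min_le_left _ _
  have hmAC : min (max A B) (min (max A (A+B+2*s)) (max B (A+B+2*s))) ≤ max A (A+B+2*s) :=
    le_trans (min_le_right _ _) (min_le_left _ _)
  have hmBC : min (max A B) (min (max A (A+B+2*s)) (max B (A+B+2*s))) ≤ max B (A+B+2*s) :=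
    le_trans (min_le_right _ _) (min_le_right _ _)
  rcases key1 with ⟨hn0, hAlt⟩ | ⟨hm0, hBlt⟩ | ⟨hmn, hClt⟩ <;>
    rcases key2 with ⟨hn0', hAlt'⟩ | ⟨hm0', hBlt'⟩ | ⟨hmn', hClt'⟩
  · subst hn0; subst hn0'; exact hdet (by ring)
  · exact absurd hmAB (not_le.2 (max_lt hAlt hBlt'))
  · exact absurd hmAC (not_le.2 (max_lt hAlt hClt'))
  · exact absurd hmAB (not_le.2 (max_lt hAlt' hBlt))
  · subst hm0; subst hm0'; exact hdet (by ring)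
  · exact absurd hmBC (not_le.2 (max_lt hBlt hClt'))
  · exact absurd hmAC (not_le.2 (max_lt hAlt' hClt))
  · exact absurd hmBC (not_le.2 (max_lt hBlt' hClt))
  · subst hmn; subst hmn'; exact hdet (by ring)

private lemma SB.sorted_data {D : ℝ} {v1 v2 v3 : ℂ} (h : SB D v1 v2 v3)
    (h12 : Complex.normSq v1 ≤ Complex.normSq v2) :
    ∃ t : ℝ, t ≤ 0 ∧ t^2 = Complex.normSq v1 * Complex.normSq v2 - D ∧
      Complex.normSq v1 * Complex.normSq v2 * Complex.normSq v3
        = Complex.normSq v1 * Complex.normSq v2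
          * (Complex.normSq v1 + Complex.normSq v2 + 2*t) := by
  refine ⟨v1.re*v2.re + v1.im*v2.im, h.ip12, ?_, by rw [h.nsq3]⟩
  have lag : (v1.re*v2.re + v1.im*v2.im)^2 + (v1.re*v2.im - v1.im*v2.re)^2
      = Complex.normSq v1 * Complex.normSq v2 := by
    simp only [Complex.normSq_apply]; ring
  linear_combination lag - h.det

private lemma SB.canonical {D : ℝ} (hD : 0 < D) {v1 v2 v3 : ℂ} (h : SB D v1 v2 v3) :
    ∃ t : ℝ, t ≤ 0 ∧
      t^2 = min (Complex.normSq v1) (min (Complex.normSq v2) (Complex.normSq v3))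
          * min (max (Complex.normSq v1) (Complex.normSq v2))
              (min (max (Complex.normSq v1) (Complex.normSq v3))
                (max (Complex.normSq v2) (Complex.normSq v3))) - D ∧
      Complex.normSq v1 * Complex.normSq v2 * Complex.normSq v3
        = min (Complex.normSq v1) (min (Complex.normSq v2) (Complex.normSq v3))
          * min (max (Complex.normSq v1) (Complex.normSq v2))
              (min (max (Complex.normSq v1) (Complex.normSq v3))
                (max (Complex.normSq v2) (Complex.normSq v3)))
          * (min (Complex.normSq v1) (min (Complex.normSq v2) (Complex.normSq v3))
            + min (max (Complex.normSq v1) (Complex.normSq v2))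
              (min (max (Complex.normSq v1) (Complex.normSq v3))
                (max (Complex.normSq v2) (Complex.normSq v3))) + 2*t) := by
  obtain ⟨a, b, c, ha, hb, hc⟩ :
      ∃ a b c, Complex.normSq v1 = a ∧ Complex.normSq v2 = b ∧ Complex.normSq v3 = c :=
    ⟨_, _, _, rfl, rfl, rfl⟩
  rcases le_total a b with hab | hab <;> rcases le_total b c with hbc | hbc <;>
    rcases le_total a c with hac | hac
  -- case a≤b, b≤c, a≤c : sorted a b c
  · obtain ⟨t, ht0, ht2, hp⟩ := h.sorted_data (by rw [ha, hb]; exact hab)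
    refine ⟨t, ht0, ?_, ?_⟩
    · rw [ha, hb] at ht2
      have hmin : min a (min b c) = a := by simp only [min_def]; split_ifs <;> linarith
      have hmid : min (max a b) (min (max a c) (max b c)) = b := by
        simp only [min_def, max_def]; split_ifs <;> linarith
      rw [ha, hb, hc, hmin, hmid]; linear_combination ht2
    · rw [ha, hb, hc] at hp ⊢
      have hmin : min a (min b c) = a := by simp only [min_def]; split_ifs <;> linarith
      have hmid : min (max a b) (min (max a c) (max b c)) = b := by
        simp only [min_def, max_def]; split_ifs <;> linarith
      rw [hmin, hmid]; linear_combination hp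
  -- case a≤b, b≤c, c≤a : all equal
  · obtain ⟨t, ht0, ht2, hp⟩ := h.sorted_data (by rw [ha, hb]; exact hab)
    refine ⟨t, ht0, ?_, ?_⟩
    · rw [ha, hb] at ht2
      have hmin : min a (min b c) = a := by simp only [min_def]; split_ifs <;> linarith
      have hmid : min (max a b) (min (max a c) (max b c)) = b := by
        simp only [min_def, max_def]; split_ifs <;> linarith
      rw [ha, hb, hc, hmin, hmid]; linear_combination ht2
    · rw [ha, hb, hc] at hp ⊢
      have hmin : min a (min b c) = a := by simp only [min_def]; split_ifs <;> linarith
      have hmid : min (max a b) (min (max a c) (max b c)) = b := by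
        simp only [min_def, max_def]; split_ifs <;> linarith
      rw [hmin, hmid]; linear_combination hp
  -- case a≤b, c≤b, a≤c : sorted a c b : use (v1,v3,v2)
  · obtain ⟨t, ht0, ht2, hp⟩ := h.swap23.sorted_data (by rw [ha, hc]; exact hac)
    refine ⟨t, ht0, ?_, ?_⟩
    · rw [ha, hc] at ht2
      have hmin : min a (min b c) = a := by simp only [min_def]; split_ifs <;> linarith
      have hmid : min (max a b) (min (max a c) (max b c)) = c := by
        simp only [min_def, max_def]; split_ifs <;> linarith
      rw [ha, hb, hc, hmin, hmid]; linear_combination ht2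
    · rw [ha, hb, hc] at hp ⊢
      have hmin : min a (min b c) = a := by simp only [min_def]; split_ifs <;> linarith
      have hmid : min (max a b) (min (max a c) (max b c)) = c := by
        simp only [min_def, max_def]; split_ifs <;> linarith
      rw [hmin, hmid]; linear_combination hp
  -- case a≤b, c≤b, c≤a : sorted c a b : use (v3,v1,v2)
  · obtain ⟨t, ht0, ht2, hp⟩ := h.swap23.swap12.sorted_data (by rw [ha, hc]; exact hac)
    refine ⟨t, ht0, ?_, ?_⟩
    · rw [ha, hc] at ht2
      have hmin : min a (min b c) = c := by simp only [min_def]; split_ifs <;> linarith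
      have hmid : min (max a b) (min (max a c) (max b c)) = a := by
        simp only [min_def, max_def]; split_ifs <;> linarith
      rw [ha, hb, hc, hmin, hmid]; linear_combination ht2
    · rw [ha, hb, hc] at hp ⊢
      have hmin : min a (min b c) = c := by simp only [min_def]; split_ifs <;> linarith
      have hmid : min (max a b) (min (max a c) (max b c)) = a := by
        simp only [min_def, max_def]; split_ifs <;> linarith
      rw [hmin, hmid]; linear_combination hp
  -- case b≤a, b≤c, a≤c : sorted b a c : use (v2,v1,v3)
  · obtain ⟨t, ht0, ht2, hp⟩ := h.swap12.sorted_data (by rw [ha, hb]; exact hab)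
    refine ⟨t, ht0, ?_, ?_⟩
    · rw [ha, hb] at ht2
      have hmin : min a (min b c) = b := by simp only [min_def]; split_ifs <;> linarith
      have hmid : min (max a b) (min (max a c) (max b c)) = a := by
        simp only [min_def, max_def]; split_ifs <;> linarith
      rw [ha, hb, hc, hmin, hmid]; linear_combination ht2
    · rw [ha, hb, hc] at hp ⊢
      have hmin : min a (min b c) = b := by simp only [min_def]; split_ifs <;> linarith
      have hmid : min (max a b) (min (max a c) (max b c)) = a := by
        simp only [min_def, max_def]; split_ifs <;> linarith
      rw [hmin, hmid]; linear_combination hp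
  -- case b≤a, b≤c, c≤a : sorted b c a : use (v2,v3,v1)
  · obtain ⟨t, ht0, ht2, hp⟩ := h.swap12.swap23.sorted_data (by rw [hb, hc]; exact hbc)
    refine ⟨t, ht0, ?_, ?_⟩
    · rw [hb, hc] at ht2
      have hmin : min a (min b c) = b := by simp only [min_def]; split_ifs <;> linarith
      have hmid : min (max a b) (min (max a c) (max b c)) = c := by
        simp only [min_def, max_def]; split_ifs <;> linarith
      rw [ha, hb, hc, hmin, hmid]; linear_combination ht2
    · rw [ha, hb, hc] at hp ⊢
      have hmin : min a (min b c) = b := by simp only [min_def]; split_ifs <;> linarith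
      have hmid : min (max a b) (min (max a c) (max b c)) = c := by
        simp only [min_def, max_def]; split_ifs <;> linarith
      rw [hmin, hmid]; linear_combination hp
  -- case b≤a, c≤b, a≤c : all equal : sorted c b a use (v3,v2,v1)
  · obtain ⟨t, ht0, ht2, hp⟩ := h.swap23.swap12.swap23.sorted_data (by rw [hb, hc]; exact hbc)
    refine ⟨t, ht0, ?_, ?_⟩
    · rw [hb, hc] at ht2
      have hmin : min a (min b c) = c := by simp only [min_def]; split_ifs <;> linarith
      have hmid : min (max a b) (min (max a c) (max b c)) = b := by
        simp only [min_def, max_def]; split_ifs <;> linarith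
      rw [ha, hb, hc, hmin, hmid]; linear_combination ht2
    · rw [ha, hb, hc] at hp ⊢
      have hmin : min a (min b c) = c := by simp only [min_def]; split_ifs <;> linarith
      have hmid : min (max a b) (min (max a c) (max b c)) = b := by
        simp only [min_def, max_def]; split_ifs <;> linarith
      rw [hmin, hmid]; linear_combination hp
  -- case b≤a, c≤b, c≤a : sorted c b a : use (v3,v2,v1)
  · obtain ⟨t, ht0, ht2, hp⟩ := h.swap23.swap12.swap23.sorted_data (by rw [hb, hc]; exact hbc)
    refine ⟨t, ht0, ?_, ?_⟩
    · rw [hb, hc] at ht2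
      have hmin : min a (min b c) = c := by simp only [min_def]; split_ifs <;> linarith
      have hmid : min (max a b) (min (max a c) (max b c)) = b := by
        simp only [min_def, max_def]; split_ifs <;> linarith
      rw [ha, hb, hc, hmin, hmid]; linear_combination ht2
    · rw [ha, hb, hc] at hp ⊢
      have hmin : min a (min b c) = c := by simp only [min_def]; split_ifs <;> linarith
      have hmid : min (max a b) (min (max a c) (max b c)) = b := by
        simp only [min_def, max_def]; split_ifs <;> linarith
      rw [hmin, hmid]; linear_combination hp

private lemma coeffs_ne_zero {v : ℂ} (hv : 0 < Complex.normSq v) {v1 v2 : ℂ} {m n : ℤ}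
    (he : v = (m:ℂ)*v1 + (n:ℂ)*v2) : ¬(m = 0 ∧ n = 0) := by
  rintro ⟨rfl, rfl⟩
  simp at he
  rw [he] at hv
  simp at hv

private theorem SB.product_eq {D : ℝ} (hD : 0 < D) {v1 v2 v3 w1 w2 w3 : ℂ}
    (hv : SB D v1 v2 v3) (hw : SB D w1 w2 w3)
    (m1 n1 m2 n2 m3 n3 : ℤ)
    (e1 : w1 = (m1:ℂ)*v1 + (n1:ℂ)*v2) (e2 : w2 = (m2:ℂ)*v1 + (n2:ℂ)*v2)
    (e3 : w3 = (m3:ℂ)*v1 + (n3:ℂ)*v2)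
    (m1' n1' m2' n2' m3' n3' : ℤ)
    (f1 : v1 = (m1':ℂ)*w1 + (n1':ℂ)*w2) (f2 : v2 = (m2':ℂ)*w1 + (n2':ℂ)*w2)
    (f3 : v3 = (m3':ℂ)*w1 + (n3':ℂ)*w2) :
    Complex.normSq v1 * Complex.normSq v2 * Complex.normSq v3
      = Complex.normSq w1 * Complex.normSq w2 * Complex.normSq w3 := by
  -- positivity
  have pv1 := hv.pos1 hD
  have pv2 := hv.swap12.pos1 hD
  have pv3 := hv.swap23.swap12.pos1 hD
  have pw1 := hw.pos1 hD
  have pw2 := hw.swap12.pos1 hD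
  have pw3 := hw.swap23.swap12.pos1 hD
  -- min equality
  have minv_le : ∀ (u : ℂ) (m n : ℤ), 0 < Complex.normSq u → u = (m:ℂ)*v1 + (n:ℂ)*v2 →
      min (Complex.normSq v1) (min (Complex.normSq v2) (Complex.normSq v3))
        ≤ Complex.normSq u := by
    intro u m n hu he
    rw [he]
    exact hv.min_le hD m n (coeffs_ne_zero hu he)
  have minw_le : ∀ (u : ℂ) (m n : ℤ), 0 < Complex.normSq u → u = (m:ℂ)*w1 + (n:ℂ)*w2 →
      min (Complex.normSq w1) (min (Complex.normSq w2) (Complex.normSq w3))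
        ≤ Complex.normSq u := by
    intro u m n hu he
    rw [he]
    exact hw.min_le hD m n (coeffs_ne_zero hu he)
  have hminvw : min (Complex.normSq v1) (min (Complex.normSq v2) (Complex.normSq v3))
      = min (Complex.normSq w1) (min (Complex.normSq w2) (Complex.normSq w3)) := by
    apply le_antisymm
    · exact le_min (minv_le w1 m1 n1 pw1 e1) (le_min (minv_le w2 m2 n2 pw2 e2)
        (minv_le w3 m3 n3 pw3 e3))
    · exact le_min (minw_le v1 m1' n1' pv1 f1) (le_min (minw_le v2 m2' n2' pv2 f2)
        (minw_le v3 m3' n3' pv3 f3))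
  -- coefficient determinants are nonzero
  have detv2 : (v1.re*v2.im - v1.im*v2.re)^2 = D := hv.det
  have coeffdet : ∀ (u u' : ℂ) (m n m' n' : ℤ), u = (m:ℂ)*v1 + (n:ℂ)*v2 →
      u' = (m':ℂ)*v1 + (n':ℂ)*v2 → (u.re*u'.im - u.im*u'.re)^2 = D →
      m * n' - m' * n ≠ 0 := by
    intro u u' m n m' n' he he' hd
    intro hzero
    rw [he, he', det_combo] at hd
    have : ((m*n' - m'*n : ℤ):ℝ) = 0 := by exact_mod_cast congrArg Int.cast hzero
    push_cast at this
    rw [show (m:ℝ)*n' - (m':ℝ)*n = 0 from this] at hd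
    simp at hd
    rw [← hd] at hD
    exact lt_irrefl _ hD
  have hd12 : (w1.re*w2.im - w1.im*w2.re)^2 = D := hw.det
  have hd13 : (w1.re*w3.im - w1.im*w3.re)^2 = D := hw.swap23.det
  have hd23 : (w2.re*w3.im - w2.im*w3.re)^2 = D := hw.swap12.swap23.det
  have hdv13 : (v1.re*v3.im - v1.im*v3.re)^2 = D := hv.swap23.det
  have hdv23 : (v2.re*v3.im - v2.im*v3.re)^2 = D := hv.swap12.swap23.det
  -- mid equality
  have midv_le : ∀ (u u' : ℂ) (m n m' n' : ℤ), u = (m:ℂ)*v1 + (n:ℂ)*v2 →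
      u' = (m':ℂ)*v1 + (n':ℂ)*v2 → (u.re*u'.im - u.im*u'.re)^2 = D →
      min (max (Complex.normSq v1) (Complex.normSq v2))
        (min (max (Complex.normSq v1) (Complex.normSq v3))
          (max (Complex.normSq v2) (Complex.normSq v3)))
        ≤ max (Complex.normSq u) (Complex.normSq u') := by
    intro u u' m n m' n' he he' hd
    rw [he, he']
    exact hv.mid_le hD m n m' n' (coeffdet u u' m n m' n' he he' hd)
  have midw_le : ∀ (u u' : ℂ) (m n m' n' : ℤ), u = (m:ℂ)*w1 + (n:ℂ)*w2 →
      u' = (m':ℂ)*w1 + (n':ℂ)*w2 → (u.re*u'.im - u.im*u'.re)^2 = D →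
      min (max (Complex.normSq w1) (Complex.normSq w2))
        (min (max (Complex.normSq w1) (Complex.normSq w3))
          (max (Complex.normSq w2) (Complex.normSq w3)))
        ≤ max (Complex.normSq u) (Complex.normSq u') := by
    intro u u' m n m' n' he he' hd
    have hcd : ∀ (a b : ℂ) (x y x' y' : ℤ), a = (x:ℂ)*w1 + (y:ℂ)*w2 →
        b = (x':ℂ)*w1 + (y':ℂ)*w2 → (a.re*b.im - a.im*b.re)^2 = D →
        x * y' - x' * y ≠ 0 := by
      intro a b x y x' y' ha hb hd2
      intro hzero
      rw [ha, hb, det_combo] at hd2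
      have : ((x*y' - x'*y : ℤ):ℝ) = 0 := by exact_mod_cast congrArg Int.cast hzero
      push_cast at this
      rw [show (x:ℝ)*y' - (x':ℝ)*y = 0 from this] at hd2
      simp at hd2
      rw [← hd2] at hD
      exact lt_irrefl _ hD
    rw [he, he']
    exact hw.mid_le hD m n m' n' (hcd u u' m n m' n' he he' hd)
  have hmidvw : min (max (Complex.normSq v1) (Complex.normSq v2))
        (min (max (Complex.normSq v1) (Complex.normSq v3))
          (max (Complex.normSq v2) (Complex.normSq v3)))
      = min (max (Complex.normSq w1) (Complex.normSq w2))
        (min (max (Complex.normSq w1) (Complex.normSq w3))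
          (max (Complex.normSq w2) (Complex.normSq w3))) := by
    apply le_antisymm
    · exact le_min (midv_le w1 w2 m1 n1 m2 n2 e1 e2 hd12)
        (le_min (midv_le w1 w3 m1 n1 m3 n3 e1 e3 hd13)
          (midv_le w2 w3 m2 n2 m3 n3 e2 e3 hd23))
    · exact le_min (midw_le v1 v2 m1' n1' m2' n2' f1 f2 hv.det)
        (le_min (midw_le v1 v3 m1' n1' m3' n3' f1 f3 hdv13)
          (midw_le v2 v3 m2' n2' m3' n3' f2 f3 hdv23))
  -- canonical forms
  obtain ⟨t, ht0, ht2, hp⟩ := hv.canonical hD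
  obtain ⟨t', ht0', ht2', hp'⟩ := hw.canonical hD
  rw [← hminvw, ← hmidvw] at ht2' hp'
  have htt : t = t' := by
    have hsq : t^2 = t'^2 := by rw [ht2, ht2']
    have h1 : |t| = |t'| := by
      rw [← Real.sqrt_sq_eq_abs, ← Real.sqrt_sq_eq_abs, hsq]
    rw [abs_of_nonpos ht0, abs_of_nonpos ht0'] at h1
    linarith
  rw [hp, hp', htt]

private lemma lattice_re (a b : ℤ) (τ : ℂ) : ((a:ℂ)+(b:ℂ)*τ).re = a + b*τ.re := by
  simp [Complex.add_re, Complex.mul_re]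

private lemma lattice_im (a b : ℤ) (τ : ℂ) : ((a:ℂ)+(b:ℂ)*τ).im = b*τ.im := by
  simp [Complex.add_im, Complex.mul_im]

private lemma lattice_det (a1 b1 a2 b2 : ℤ) (τ : ℂ) :
    ((a1:ℂ)+(b1:ℂ)*τ).re * ((a2:ℂ)+(b2:ℂ)*τ).im
      - ((a1:ℂ)+(b1:ℂ)*τ).im * ((a2:ℂ)+(b2:ℂ)*τ).re
    = ((a1*b2 - a2*b1 : ℤ) : ℝ) * τ.im := by
  rw [lattice_re, lattice_im, lattice_re, lattice_im]
  push_cast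
  ring

private lemma lattice_combo (τ : ℂ) (him : τ.im ≠ 0) (a b a1 b1 a2 b2 : ℤ)
    (hdet : (((a1:ℂ)+(b1:ℂ)*τ).re * ((a2:ℂ)+(b2:ℂ)*τ).im
      - ((a1:ℂ)+(b1:ℂ)*τ).im * ((a2:ℂ)+(b2:ℂ)*τ).re)^2 = τ.im^2) :
    ∃ m n : ℤ, ((a:ℂ)+(b:ℂ)*τ)
      = (m:ℂ)*((a1:ℂ)+(b1:ℂ)*τ) + (n:ℂ)*((a2:ℂ)+(b2:ℂ)*τ) := by
  rw [lattice_det] at hdet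
  have him2 : τ.im^2 ≠ 0 := pow_ne_zero _ him
  have he2R : ((a1*b2 - a2*b1 : ℤ) : ℝ)^2 = 1 := by
    have hz : (((a1*b2 - a2*b1 : ℤ):ℝ)^2 - 1) * τ.im^2 = 0 := by linear_combination hdet
    rcases mul_eq_zero.1 hz with h | h
    · linarith
    · exact absurd h him2
  have he2 : (a1*b2 - a2*b1)^2 = 1 := by exact_mod_cast he2R
  have hunit : a1*b2 - a2*b1 = 1 ∨ a1*b2 - a2*b1 = -1 := by
    have h := Int.isUnit_iff.1 (IsUnit.of_mul_eq_one (a := a1*b2 - a2*b1) (a1*b2 - a2*b1)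
      (by linear_combination he2))
    exact h
  rcases hunit with he | he
  · refine ⟨a*b2 - b*a2, a1*b - b1*a, ?_⟩
    have hm : (a*b2 - b*a2)*a1 + (a1*b - b1*a)*a2 = a := by linear_combination a * he
    have hn : (a*b2 - b*a2)*b1 + (a1*b - b1*a)*b2 = b := by linear_combination b * he
    have hmc : ((a*b2 - b*a2 : ℤ):ℂ)*a1 + ((a1*b - b1*a : ℤ):ℂ)*a2 = a := by
      exact_mod_cast congrArg (Int.cast : ℤ → ℂ) hm
    have hnc : ((a*b2 - b*a2 : ℤ):ℂ)*b1 + ((a1*b - b1*a : ℤ):ℂ)*b2 = b := by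
      exact_mod_cast congrArg (Int.cast : ℤ → ℂ) hn
    linear_combination (-1 : ℂ) * hmc - τ * hnc
  · refine ⟨-(a*b2 - b*a2), -(a1*b - b1*a), ?_⟩
    have hm : (-(a*b2 - b*a2))*a1 + (-(a1*b - b1*a))*a2 = a := by linear_combination (-a) * he
    have hn : (-(a*b2 - b*a2))*b1 + (-(a1*b - b1*a))*b2 = b := by linear_combination (-b) * he
    have hmc : ((-(a*b2 - b*a2) : ℤ):ℂ)*a1 + ((-(a1*b - b1*a) : ℤ):ℂ)*a2 = a := by
      exact_mod_cast congrArg (Int.cast : ℤ → ℂ) hm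
    have hnc : ((-(a*b2 - b*a2) : ℤ):ℂ)*b1 + ((-(a1*b - b1*a) : ℤ):ℂ)*b2 = b := by
      exact_mod_cast congrArg (Int.cast : ℤ → ℂ) hn
    linear_combination (-1 : ℂ) * hmc - τ * hnc

private lemma abs_le_iff_cond (z w : ℂ) :
    ‖z‖ ≤ ‖z - w‖ ↔
      2*(z.re*w.re + z.im*w.im) ≤ Complex.normSq w := by
  have habs : ‖z‖ ≤ ‖z - w‖ ↔
      Complex.normSq z ≤ Complex.normSq (z - w) := by
    rw [← Complex.sq_norm, ← Complex.sq_norm]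
    constructor
    · intro h; nlinarith [norm_nonneg z, norm_nonneg (z - w)]
    · intro h; nlinarith [norm_nonneg z, norm_nonneg (z - w)]
  have hexp : Complex.normSq (z - w) = Complex.normSq z
      - 2*(z.re*w.re + z.im*w.im) + Complex.normSq w := by
    simp only [Complex.normSq_apply, Complex.sub_re, Complex.sub_im]; ring
  rw [habs, hexp]
  constructor <;> intro <;> linarith

private lemma ip_abs (x w : ℂ) : |x.re*w.re + x.im*w.im| ≤ ‖x‖ * ‖w‖ := by
  rw [Complex.norm_def, Complex.norm_def, ← Real.sqrt_mul (Complex.normSq_nonneg x)]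
  apply Real.abs_le_sqrt
  simp only [Complex.normSq_apply]
  nlinarith [sq_nonneg (x.re*w.im - x.im*w.re)]

private lemma lattice_ne_zero (τ : ℂ) (him : τ.im ≠ 0) (a b : ℤ) (hab : ¬(a = 0 ∧ b = 0)) :
    ((a:ℂ)+(b:ℂ)*τ) ≠ 0 := by
  intro h
  have h1 : ((a:ℂ)+(b:ℂ)*τ).im = 0 := by rw [h]; simp
  have h2 : ((a:ℂ)+(b:ℂ)*τ).re = 0 := by rw [h]; simp
  rw [lattice_im] at h1
  rw [lattice_re] at h2
  have hb : (b:ℝ) = 0 := by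
    rcases mul_eq_zero.1 h1 with h | h
    · exact h
    · exact absurd h him
  have hb' : b = 0 := by exact_mod_cast hb
  subst hb'
  simp at h2
  exact hab ⟨by exact_mod_cast h2, rfl⟩

private lemma finite_small (τ : ℂ) (him : τ.im ≠ 0) (M : ℝ) :
    Set.Finite {pr : ℤ × ℤ | ‖(pr.1:ℂ) + (pr.2:ℂ)*τ‖ ≤ M} := by
  have himpos : 0 < |τ.im| := abs_pos.2 him
  set B : ℤ := ⌈M/|τ.im|⌉ with hB
  set A : ℤ := ⌈M + (B:ℝ)*|τ.re|⌉ with hA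
  apply Set.Finite.subset (Set.finite_Icc ((-A, -B) : ℤ×ℤ) (A, B))
  rintro ⟨a, b⟩ hab
  simp only [Set.mem_setOf_eq] at hab
  have h0M : (0:ℝ) ≤ M := le_trans (norm_nonneg _) hab
  have him1 : |((a:ℂ)+(b:ℂ)*τ).im| ≤ M := le_trans (Complex.abs_im_le_norm _) hab
  have hre1 : |((a:ℂ)+(b:ℂ)*τ).re| ≤ M := le_trans (Complex.abs_re_le_norm _) hab
  rw [lattice_im] at him1
  rw [lattice_re] at hre1
  rw [abs_mul] at him1
  have hbB : |(b:ℝ)| ≤ B := by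
    have h1 : |(b:ℝ)| ≤ M/|τ.im| := by
      rw [le_div_iff₀ himpos]; exact him1
    exact le_trans h1 (Int.le_ceil _)
  have hbB' : -B ≤ b ∧ b ≤ B := by
    constructor
    · have : -(B:ℝ) ≤ (b:ℝ) := by cases abs_le.1 hbB; linarith
      exact_mod_cast this
    · have : (b:ℝ) ≤ (B:ℝ) := (abs_le.1 hbB).2
      exact_mod_cast this
  have haA : |(a:ℝ)| ≤ A := by
    have h2 : |(a:ℝ)| ≤ |(a:ℝ) + b*τ.re| + |(b:ℝ)*τ.re| := by
      have := abs_sub_abs_le_abs_sub ((a:ℝ) + b*τ.re) ((b:ℝ)*τ.re)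
      have h3 := abs_add_le ((a:ℝ)) ((b:ℝ)*τ.re)
      calc |(a:ℝ)| = |((a:ℝ) + b*τ.re) + (-(b*τ.re))| := by ring_nf
        _ ≤ |(a:ℝ) + b*τ.re| + |(-(b*τ.re))| := abs_add_le _ _
        _ = |(a:ℝ) + b*τ.re| + |(b:ℝ)*τ.re| := by rw [abs_neg]
    have h4 : |(b:ℝ)*τ.re| ≤ (B:ℝ)*|τ.re| := by
      rw [abs_mul]
      exact mul_le_mul_of_nonneg_right hbB (abs_nonneg _)
    have h5 : |(a:ℝ)| ≤ M + (B:ℝ)*|τ.re| := by linarith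
    exact le_trans h5 (Int.le_ceil _)
  have haA' : -A ≤ a ∧ a ≤ A := by
    constructor
    · have : -(A:ℝ) ≤ (a:ℝ) := by cases abs_le.1 haA; linarith
      exact_mod_cast this
    · have : (a:ℝ) ≤ (A:ℝ) := (abs_le.1 haA).2
      exact_mod_cast this
  constructor
  · exact ⟨haA'.1, hbB'.1⟩
  · exact ⟨haA'.2, hbB'.2⟩

private lemma exists_indep_active (τ : ℂ) (him : τ.im ≠ 0) (z : ℂ)
    (hz : z ∈ Set.extremePoints ℝ
      {z : ℂ | ∀ a b : ℤ, ‖z‖ ≤ ‖z - ((a : ℂ) + (b : ℂ) * τ)‖}) :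
    ∃ a1 b1 a2 b2 : ℤ,
      2*(z.re*((a1:ℂ)+(b1:ℂ)*τ).re + z.im*((a1:ℂ)+(b1:ℂ)*τ).im)
        = Complex.normSq ((a1:ℂ)+(b1:ℂ)*τ) ∧
      2*(z.re*((a2:ℂ)+(b2:ℂ)*τ).re + z.im*((a2:ℂ)+(b2:ℂ)*τ).im)
        = Complex.normSq ((a2:ℂ)+(b2:ℂ)*τ) ∧
      a1*b2 - a2*b1 ≠ 0 := by
  classical
  have hzV := hz.1
  simp only [Set.mem_setOf_eq] at hzV
  have cond : ∀ a b : ℤ, 2*(z.re*((a:ℂ)+(b:ℂ)*τ).re + z.im*((a:ℂ)+(b:ℂ)*τ).im)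
      ≤ Complex.normSq ((a:ℂ)+(b:ℂ)*τ) := fun a b => (abs_le_iff_cond z _).1 (hzV a b)
  by_contra hcon
  push_neg at hcon
  -- find perturbation direction orthogonal to all active constraints
  obtain ⟨v, hv0, hvip⟩ : ∃ v : ℂ, v ≠ 0 ∧ ∀ a b : ℤ,
      2*(z.re*((a:ℂ)+(b:ℂ)*τ).re + z.im*((a:ℂ)+(b:ℂ)*τ).im)
        = Complex.normSq ((a:ℂ)+(b:ℂ)*τ) →
      v.re*((a:ℂ)+(b:ℂ)*τ).re + v.im*((a:ℂ)+(b:ℂ)*τ).im = 0 := by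
    by_cases hex : ∃ a b : ℤ, ¬(a = 0 ∧ b = 0) ∧
        2*(z.re*((a:ℂ)+(b:ℂ)*τ).re + z.im*((a:ℂ)+(b:ℂ)*τ).im)
          = Complex.normSq ((a:ℂ)+(b:ℂ)*τ)
    · obtain ⟨a0, b0, hab0, hact0⟩ := hex
      refine ⟨Complex.I * ((a0:ℂ)+(b0:ℂ)*τ), mul_ne_zero Complex.I_ne_zero
        (lattice_ne_zero τ him a0 b0 hab0), ?_⟩
      intro a b hact
      by_cases hab : a = 0 ∧ b = 0
      · obtain ⟨rfl, rfl⟩ := hab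
        simp
      · have hdet0 : a0*b - a*b0 = 0 := hcon a0 b0 a b hact0 hact
        have hre : (Complex.I * ((a0:ℂ)+(b0:ℂ)*τ)).re = -(((a0:ℂ)+(b0:ℂ)*τ).im) := by
          simp [Complex.mul_re]
        have him' : (Complex.I * ((a0:ℂ)+(b0:ℂ)*τ)).im = ((a0:ℂ)+(b0:ℂ)*τ).re := by
          simp [Complex.mul_im]
        rw [hre, him']
        have hld := lattice_det a0 b0 a b τ
        have hc0 : ((a0*b - a*b0 : ℤ):ℝ) = 0 := by exact_mod_cast congrArg Int.cast hdet0
        rw [hc0, zero_mul] at hld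
        linear_combination hld
    · refine ⟨1, one_ne_zero, ?_⟩
      intro a b hact
      by_cases hab : a = 0 ∧ b = 0
      · obtain ⟨rfl, rfl⟩ := hab
        simp
      · exact absurd ⟨a, b, hab, hact⟩ hex
  -- build the epsilon
  set M := 2*‖z‖ + 2*‖v‖ + 1 with hM
  have hM1 : 1 ≤ M := by
    have := norm_nonneg z
    have := norm_nonneg v
    linarith
  have hS := finite_small τ him M
  set g : ℤ×ℤ → ℝ := fun pr =>
    if 2*(z.re*((pr.1:ℂ)+(pr.2:ℂ)*τ).re + z.im*((pr.1:ℂ)+(pr.2:ℂ)*τ).im)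
        < Complex.normSq ((pr.1:ℂ)+(pr.2:ℂ)*τ) then
      (Complex.normSq ((pr.1:ℂ)+(pr.2:ℂ)*τ)
        - 2*(z.re*((pr.1:ℂ)+(pr.2:ℂ)*τ).re + z.im*((pr.1:ℂ)+(pr.2:ℂ)*τ).im))
      / (2*|v.re*((pr.1:ℂ)+(pr.2:ℂ)*τ).re + v.im*((pr.1:ℂ)+(pr.2:ℂ)*τ).im| + 1)
    else 1 with hg
  have hgpos : ∀ pr : ℤ×ℤ, 0 < g pr := by
    intro pr
    rw [hg]
    dsimp only
    split_ifs with h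
    · apply div_pos (by linarith) (by positivity)
    · norm_num
  have hFne : (insert (1:ℝ) (hS.toFinset.image g)).Nonempty := ⟨1, Finset.mem_insert_self _ _⟩
  obtain ⟨ε, hεmem, hεle⟩ : ∃ ε : ℝ, ε ∈ insert (1:ℝ) (hS.toFinset.image g) ∧
      ∀ x ∈ insert (1:ℝ) (hS.toFinset.image g), ε ≤ x :=
    ⟨_, Finset.min'_mem _ hFne, fun x hx => Finset.min'_le _ x hx⟩
  have hεpos : 0 < ε := by
    rcases Finset.mem_insert.1 hεmem with h | h
    · rw [h]; norm_num
    · obtain ⟨pr, _, hpr⟩ := Finset.mem_image.1 h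
      rw [← hpr]; exact hgpos pr
  have hε1 : ε ≤ 1 := hεle 1 (Finset.mem_insert_self _ _)
  have hεg : ∀ pr : ℤ×ℤ, ‖(pr.1:ℂ)+(pr.2:ℂ)*τ‖ ≤ M → ε ≤ g pr := by
    intro pr hpr
    exact hεle (g pr) (Finset.mem_insert_of_mem (Finset.mem_image_of_mem g
      ((Set.Finite.mem_toFinset hS).2 hpr)))
  -- both perturbed points are in V
  have key : ∀ s : ℝ, s = 1 ∨ s = -1 → (z + ((s*ε : ℝ):ℂ)*v) ∈
      {z : ℂ | ∀ a b : ℤ, ‖z‖ ≤ ‖z - ((a : ℂ) + (b : ℂ) * τ)‖} := by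
    intro s hs a b
    rw [abs_le_iff_cond]
    have hre : (z + ((s*ε : ℝ):ℂ)*v).re = z.re + s*ε*v.re := by
      simp [Complex.add_re, Complex.mul_re]
    have him2 : (z + ((s*ε : ℝ):ℂ)*v).im = z.im + s*ε*v.im := by
      simp [Complex.add_im, Complex.mul_im]
    rw [hre, him2]
    have hexpand : 2*((z.re + s*ε*v.re)*((a:ℂ)+(b:ℂ)*τ).re
        + (z.im + s*ε*v.im)*((a:ℂ)+(b:ℂ)*τ).im)
      = 2*(z.re*((a:ℂ)+(b:ℂ)*τ).re + z.im*((a:ℂ)+(b:ℂ)*τ).im)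
        + 2*(s*ε*(v.re*((a:ℂ)+(b:ℂ)*τ).re + v.im*((a:ℂ)+(b:ℂ)*τ).im)) := by ring
    rw [hexpand]
    by_cases hact : 2*(z.re*((a:ℂ)+(b:ℂ)*τ).re + z.im*((a:ℂ)+(b:ℂ)*τ).im)
        = Complex.normSq ((a:ℂ)+(b:ℂ)*τ)
    · have hip0 := hvip a b hact
      rw [hip0, mul_zero, mul_zero, add_zero]
      linarith [hact]
    · have hstrict : 2*(z.re*((a:ℂ)+(b:ℂ)*τ).re + z.im*((a:ℂ)+(b:ℂ)*τ).im)
          < Complex.normSq ((a:ℂ)+(b:ℂ)*τ) := lt_of_le_of_ne (cond a b) hact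
      have hsip : s*ε*(v.re*((a:ℂ)+(b:ℂ)*τ).re + v.im*((a:ℂ)+(b:ℂ)*τ).im)
          ≤ ε*|v.re*((a:ℂ)+(b:ℂ)*τ).re + v.im*((a:ℂ)+(b:ℂ)*τ).im| := by
        rcases hs with rfl | rfl
        · rw [one_mul]
          exact mul_le_mul_of_nonneg_left (le_abs_self _) hεpos.le
        · have : -(ε*(v.re*((a:ℂ)+(b:ℂ)*τ).re + v.im*((a:ℂ)+(b:ℂ)*τ).im))
              ≤ ε*|v.re*((a:ℂ)+(b:ℂ)*τ).re + v.im*((a:ℂ)+(b:ℂ)*τ).im| := by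
            rw [← mul_neg]
            exact mul_le_mul_of_nonneg_left (neg_le_abs _) hεpos.le
          linarith
      by_cases hball : ‖(a:ℂ)+(b:ℂ)*τ‖ ≤ M
      · have hgle := hεg (a, b) hball
        rw [hg] at hgle
        dsimp only at hgle
        rw [if_pos hstrict] at hgle
        have hdenpos : (0:ℝ) < 2*|v.re*((a:ℂ)+(b:ℂ)*τ).re + v.im*((a:ℂ)+(b:ℂ)*τ).im| + 1 := by
          positivity
        rw [le_div_iff₀ hdenpos] at hgle
        linarith [hsip, hgle, hεpos]
      · push_neg at hball
        have habs : M ≤ ‖(a:ℂ)+(b:ℂ)*τ‖ := hball.le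
        have hz1 := ip_abs z ((a:ℂ)+(b:ℂ)*τ)
        have hv1 := ip_abs v ((a:ℂ)+(b:ℂ)*τ)
        have hsq : Complex.normSq ((a:ℂ)+(b:ℂ)*τ)
            = ‖(a:ℂ)+(b:ℂ)*τ‖ * ‖(a:ℂ)+(b:ℂ)*τ‖ := by
          rw [Complex.norm_def]
          exact (Real.mul_self_sqrt (Complex.normSq_nonneg _)).symm
        have hWpos : 1 ≤ ‖(a:ℂ)+(b:ℂ)*τ‖ := le_trans hM1 habs
        have e1 : z.re*((a:ℂ)+(b:ℂ)*τ).re + z.im*((a:ℂ)+(b:ℂ)*τ).im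
            ≤ ‖z‖ * ‖(a:ℂ)+(b:ℂ)*τ‖ :=
          le_trans (le_abs_self _) hz1
        have e2 : ε*|v.re*((a:ℂ)+(b:ℂ)*τ).re + v.im*((a:ℂ)+(b:ℂ)*τ).im|
            ≤ 1*(‖v‖ * ‖(a:ℂ)+(b:ℂ)*τ‖) :=
          mul_le_mul hε1 hv1 (abs_nonneg _) (by norm_num)
        have e3 : (M - 1) * ‖(a:ℂ)+(b:ℂ)*τ‖
            ≤ (‖(a:ℂ)+(b:ℂ)*τ‖ - 1) * ‖(a:ℂ)+(b:ℂ)*τ‖ :=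
          mul_le_mul_of_nonneg_right (by linarith) (norm_nonneg _)
        rw [hsq]
        rw [hM] at e3
        nlinarith [hsip, e1, e2, e3, hWpos]

  -- contradiction with extremality
  have h1 := key 1 (Or.inl rfl)
  have h2 := key (-1) (Or.inr rfl)
  have hseg : z ∈ openSegment ℝ (z + ((1*ε : ℝ):ℂ)*v) (z + (((-1)*ε : ℝ):ℂ)*v) := by
    refine ⟨1/2, 1/2, by norm_num, by norm_num, by norm_num, ?_⟩
    rw [Complex.real_smul, Complex.real_smul]
    push_cast
    ring
  have heq1 := hz.2 h1 h2 hseg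
  have hX : ((1*ε : ℝ):ℂ)*v = 0 := by linear_combination heq1
  rcases mul_eq_zero.1 hX with h | h
  · rw [Complex.ofReal_eq_zero] at h
    simp at h
    exact hεpos.ne' h
  · exact hv0 h

private lemma comb_identity (g1 g2 : ℝ) (y1 y2 z : ℂ) :
    Complex.normSq (((g1:ℝ):ℂ)*y1 + ((g2:ℝ):ℂ)*y2 - z)
      = g1*Complex.normSq (y1 - z) + g2*Complex.normSq (y2 - z)
        + (1-g1-g2)*Complex.normSq z
        - (g1*g2*Complex.normSq (y1-y2) + g1*(1-g1-g2)*Complex.normSq y1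
          + g2*(1-g1-g2)*Complex.normSq y2) := by
  simp only [Complex.normSq_apply, Complex.add_re, Complex.add_im, Complex.sub_re,
    Complex.sub_im, Complex.mul_re, Complex.mul_im, Complex.ofReal_re, Complex.ofReal_im]
  ring

private lemma fract_zero_dvd (u n : ℤ) (hn : n ≠ 0) (h : Int.fract ((u:ℝ)/(n:ℝ)) = 0) :
    n ∣ u := by
  have hnR : (n:ℝ) ≠ 0 := Int.cast_ne_zero.2 hn
  have hfl : ((u:ℝ)/(n:ℝ)) = (⌊(u:ℝ)/(n:ℝ)⌋ : ℝ) := by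
    have := Int.floor_add_fract ((u:ℝ)/(n:ℝ))
    rw [h] at this; linarith
  have : (u:ℝ) = (⌊(u:ℝ)/(n:ℝ)⌋ : ℝ) * n := by
    field_simp at hfl
    linarith [hfl]
  have hint : u = ⌊(u:ℝ)/(n:ℝ)⌋ * n := by exact_mod_cast this
  exact ⟨⌊(u:ℝ)/(n:ℝ)⌋, by linarith [hint]⟩

private lemma lattice_re' (a b : ℤ) (τ : ℂ) : ((a:ℂ)+(b:ℂ)*τ).re = a + b*τ.re := by
  simp [Complex.add_re, Complex.mul_re]

private lemma lattice_im' (a b : ℤ) (τ : ℂ) : ((a:ℂ)+(b:ℂ)*τ).im = b*τ.im := by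
  simp [Complex.add_im, Complex.mul_im]

private lemma lattice_ne_zero' (τ : ℂ) (him : τ.im ≠ 0) (a b : ℤ) (hab : ¬(a = 0 ∧ b = 0)) :
    ((a:ℂ)+(b:ℂ)*τ) ≠ 0 := by
  intro h
  have h1 : ((a:ℂ)+(b:ℂ)*τ).im = 0 := by rw [h]; simp
  have h2 : ((a:ℂ)+(b:ℂ)*τ).re = 0 := by rw [h]; simp
  rw [lattice_im'] at h1
  rw [lattice_re'] at h2
  have hb : (b:ℝ) = 0 := by
    rcases mul_eq_zero.1 h1 with h | h
    · exact h
    · exact absurd h him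
  have hb' : b = 0 := by exact_mod_cast hb
  subst hb'
  simp at h2
  exact hab ⟨by exact_mod_cast h2, rfl⟩

private lemma active_unimodular (τ : ℂ) (him : τ.im ≠ 0) (z : ℂ)
    (cond : ∀ a b : ℤ, 2*(z.re*((a:ℂ)+(b:ℂ)*τ).re + z.im*((a:ℂ)+(b:ℂ)*τ).im)
      ≤ Complex.normSq ((a:ℂ)+(b:ℂ)*τ))
    (a1 b1 a2 b2 : ℤ)
    (hact1 : 2*(z.re*((a1:ℂ)+(b1:ℂ)*τ).re + z.im*((a1:ℂ)+(b1:ℂ)*τ).im)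
      = Complex.normSq ((a1:ℂ)+(b1:ℂ)*τ))
    (hact2 : 2*(z.re*((a2:ℂ)+(b2:ℂ)*τ).re + z.im*((a2:ℂ)+(b2:ℂ)*τ).im)
      = Complex.normSq ((a2:ℂ)+(b2:ℂ)*τ))
    (hdet : a1*b2 - a2*b1 ≠ 0) : (a1*b2 - a2*b1)^2 = 1 := by
  by_contra hn2
  -- notation
  set y1 : ℂ := (a1:ℂ)+(b1:ℂ)*τ with hy1
  set y2 : ℂ := (a2:ℂ)+(b2:ℂ)*τ with hy2
  set n : ℤ := a1*b2 - a2*b1 with hn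
  -- find (a, b) whose coordinates w.r.t. (y1,y2) are not both integers
  obtain ⟨a, b, hdvd⟩ : ∃ a b : ℤ, ¬(n ∣ (a*b2 - b*a2)) ∨ ¬(n ∣ (a1*b - b1*a)) := by
    by_cases h1 : n ∣ b1
    · by_cases h2 : n ∣ b2
      · by_cases h3 : n ∣ a1
        · by_cases h4 : n ∣ a2
          · exfalso
            obtain ⟨c1, hc1⟩ := h3
            obtain ⟨d1, hd1⟩ := h1
            obtain ⟨c2, hc2⟩ := h4
            obtain ⟨d2, hd2⟩ := h2
            have : n = n*n*(c1*d2 - c2*d1) := by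
              rw [hn]
              nth_rewrite 1 [hc1, hd1, hc2, hd2]
              ring
            have h5 : n*(c1*d2 - c2*d1) = 1 := by
              have := mul_left_cancel₀ hdet (by linarith [this] : n * (n*(c1*d2 - c2*d1)) = n * 1)
              exact this
            have h6 : n = 1 ∨ n = -1 :=
              Int.isUnit_iff.1 (IsUnit.of_mul_eq_one _ h5)
            rcases h6 with h | h <;> rw [h] at hn2 <;> simp at hn2
          · exact ⟨0, 1, Or.inl (by simpa using h4)⟩
        · exact ⟨0, 1, Or.inr (by simpa using h3)⟩
      · exact ⟨1, 0, Or.inl (by simpa using h2)⟩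
    · exact ⟨1, 0, Or.inr (by simpa using h1)⟩
  have hnR : (n:ℝ) ≠ 0 := Int.cast_ne_zero.2 hdet
  have hnC : (n:ℂ) ≠ 0 := Int.cast_ne_zero.2 hdet
  set u : ℤ := a*b2 - b*a2 with hu
  set w : ℤ := a1*b - b1*a with hw
  -- the big identity
  have hbig : (u:ℂ)*y1 + (w:ℂ)*y2 = (n:ℂ)*((a:ℂ)+(b:ℂ)*τ) := by
    rw [hy1, hy2, hu, hw, hn]
    push_cast
    ring
  -- fractional coordinates
  set al : ℝ := Int.fract ((u:ℝ)/(n:ℝ)) with hal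
  set be : ℝ := Int.fract ((w:ℝ)/(n:ℝ)) with hbe
  have hal0 : 0 ≤ al := Int.fract_nonneg _
  have hbe0 : 0 ≤ be := Int.fract_nonneg _
  have hal1 : al < 1 := Int.fract_lt_one _
  have hbe1 : be < 1 := Int.fract_lt_one _
  have hne : al ≠ 0 ∨ be ≠ 0 := by
    rcases hdvd with h | h
    · exact Or.inl (fun hz0 => h (fract_zero_dvd u n hdet (by rw [← hal]; exact hz0)))
    · exact Or.inr (fun hz0 => h (fract_zero_dvd w n hdet (by rw [← hbe]; exact hz0)))
  -- the reduced lattice point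
  set A : ℤ := a - ⌊(u:ℝ)/(n:ℝ)⌋*a1 - ⌊(w:ℝ)/(n:ℝ)⌋*a2 with hA
  set B : ℤ := b - ⌊(u:ℝ)/(n:ℝ)⌋*b1 - ⌊(w:ℝ)/(n:ℝ)⌋*b2 with hB
  have hWc : ((al:ℝ):ℂ)*y1 + ((be:ℝ):ℂ)*y2 = (A:ℂ)+(B:ℂ)*τ := by
    have hfr1 : ((al:ℝ):ℂ) = (u:ℂ)/(n:ℂ) - (⌊(u:ℝ)/(n:ℝ)⌋:ℂ) := by
      rw [hal]
      have : Int.fract ((u:ℝ)/(n:ℝ)) = (u:ℝ)/(n:ℝ) - ⌊(u:ℝ)/(n:ℝ)⌋ := rfl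
      rw [this]
      push_cast
      ring
    have hfr2 : ((be:ℝ):ℂ) = (w:ℂ)/(n:ℂ) - (⌊(w:ℝ)/(n:ℝ)⌋:ℂ) := by
      rw [hbe]
      have : Int.fract ((w:ℝ)/(n:ℝ)) = (w:ℝ)/(n:ℝ) - ⌊(w:ℝ)/(n:ℝ)⌋ := rfl
      rw [this]
      push_cast
      ring
    rw [hfr1, hfr2, hA, hB]
    push_cast
    field_simp
    linear_combination hbig
  -- active constraints rewritten: normSq (yi - z) = normSq z
  have hact1' : Complex.normSq (y1 - z) = Complex.normSq z := by
    simp only [Complex.normSq_apply, Complex.sub_re, Complex.sub_im] at *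
    linarith [hact1]
  have hact2' : Complex.normSq (y2 - z) = Complex.normSq z := by
    simp only [Complex.normSq_apply, Complex.sub_re, Complex.sub_im] at *
    linarith [hact2]
  -- nonzero norms
  have hy1ne : y1 ≠ 0 := lattice_ne_zero' τ him a1 b1 (by
    rintro ⟨rfl, rfl⟩; exact hdet (by rw [hn]; ring))
  have hy2ne : y2 ≠ 0 := lattice_ne_zero' τ him a2 b2 (by
    rintro ⟨rfl, rfl⟩; exact hdet (by rw [hn]; ring))
  have hy12ne : y1 - y2 ≠ 0 := by
    rw [hy1, hy2]
    have : ((a1:ℂ)+(b1:ℂ)*τ) - ((a2:ℂ)+(b2:ℂ)*τ) = ((a1-a2 : ℤ):ℂ) + ((b1-b2 : ℤ):ℂ)*τ := by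
      push_cast; ring
    rw [this]
    apply lattice_ne_zero' τ him
    rintro ⟨h1, h2⟩
    apply hdet
    rw [hn]
    have e1 : a1 = a2 := by omega
    have e2 : b1 = b2 := by omega
    rw [e1, e2]
    ring
  have hP1 : 0 < Complex.normSq y1 := Complex.normSq_pos.2 hy1ne
  have hP2 : 0 < Complex.normSq y2 := Complex.normSq_pos.2 hy2ne
  have hP12 : 0 < Complex.normSq (y1 - y2) := Complex.normSq_pos.2 hy12ne
  -- choose the final convex combination
  obtain ⟨g1, g2, A', B', hg1, hg2, hgsum, hcomb, hbracket⟩ :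
      ∃ (g1 g2 : ℝ) (A' B' : ℤ), 0 ≤ g1 ∧ 0 ≤ g2 ∧ g1 + g2 ≤ 1 ∧
        ((g1:ℝ):ℂ)*y1 + ((g2:ℝ):ℂ)*y2 = (A':ℂ)+(B':ℂ)*τ ∧
        0 < g1*g2*Complex.normSq (y1-y2) + g1*(1-g1-g2)*Complex.normSq y1
          + g2*(1-g1-g2)*Complex.normSq y2 := by
    rcases le_or_gt (al + be) 1 with hcase | hcase
    · refine ⟨al, be, A, B, hal0, hbe0, hcase, hWc, ?_⟩
      rcases hne with h | h
      · have halpos : 0 < al := lt_of_le_of_ne hal0 (Ne.symm h)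
        rcases eq_or_lt_of_le hbe0 with hbz | hbpos
        · have hg : 0 < al*(1-al-be)*Complex.normSq y1 := by
            apply mul_pos (mul_pos halpos (by rw [← hbz] at hcase ⊢; linarith))
            exact hP1
          have t1 : 0 ≤ al*be*Complex.normSq (y1-y2) := by
            apply mul_nonneg (mul_nonneg hal0 hbe0) hP12.le
          have t2 : 0 ≤ be*(1-al-be)*Complex.normSq y2 := by
            apply mul_nonneg (mul_nonneg hbe0 (by linarith)) hP2.le
          linarith
        · have hg : 0 < al*be*Complex.normSq (y1-y2) :=
            mul_pos (mul_pos halpos hbpos) hP12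
          have t1 : 0 ≤ al*(1-al-be)*Complex.normSq y1 :=
            mul_nonneg (mul_nonneg hal0 (by linarith)) hP1.le
          have t2 : 0 ≤ be*(1-al-be)*Complex.normSq y2 :=
            mul_nonneg (mul_nonneg hbe0 (by linarith)) hP2.le
          linarith
      · have hbpos : 0 < be := lt_of_le_of_ne hbe0 (Ne.symm h)
        rcases eq_or_lt_of_le hal0 with haz | hapos
        · have hg : 0 < be*(1-al-be)*Complex.normSq y2 := by
            apply mul_pos (mul_pos hbpos (by rw [← haz] at hcase ⊢; linarith))
            exact hP2
          have t1 : 0 ≤ al*be*Complex.normSq (y1-y2) :=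
            mul_nonneg (mul_nonneg hal0 hbe0) hP12.le
          have t2 : 0 ≤ al*(1-al-be)*Complex.normSq y1 :=
            mul_nonneg (mul_nonneg hal0 (by linarith)) hP1.le
          linarith
        · have hg : 0 < al*be*Complex.normSq (y1-y2) :=
            mul_pos (mul_pos hapos hbpos) hP12
          have t1 : 0 ≤ al*(1-al-be)*Complex.normSq y1 :=
            mul_nonneg (mul_nonneg hal0 (by linarith)) hP1.le
          have t2 : 0 ≤ be*(1-al-be)*Complex.normSq y2 :=
            mul_nonneg (mul_nonneg hbe0 (by linarith)) hP2.le
          linarith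
    · refine ⟨1-al, 1-be, a1+a2-A, b1+b2-B, by linarith, by linarith, by linarith, ?_, ?_⟩
      · have : ((1-al : ℝ):ℂ)*y1 + ((1-be : ℝ):ℂ)*y2
            = (y1 + y2) - (((al:ℝ):ℂ)*y1 + ((be:ℝ):ℂ)*y2) := by
          push_cast; ring
        rw [this, hWc, hy1, hy2]
        push_cast
        ring
      · have hg : 0 < (1-al)*(1-be)*Complex.normSq (y1-y2) :=
          mul_pos (mul_pos (by linarith) (by linarith)) hP12
        have t1 : 0 ≤ (1-al)*(1-(1-al)-(1-be))*Complex.normSq y1 :=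
          mul_nonneg (mul_nonneg (by linarith) (by linarith)) hP1.le
        have t2 : 0 ≤ (1-be)*(1-(1-al)-(1-be))*Complex.normSq y2 :=
          mul_nonneg (mul_nonneg (by linarith) (by linarith)) hP2.le
        linarith
  -- contradiction with the Voronoi condition at (A', B')
  have hcond := cond A' B'
  have hcond' : Complex.normSq z ≤ Complex.normSq (((A':ℂ)+(B':ℂ)*τ) - z) := by
    simp only [Complex.normSq_apply, Complex.sub_re, Complex.sub_im] at *
    linarith [hcond]
  rw [← hcomb] at hcond'
  rw [comb_identity, hact1', hact2'] at hcond'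
  linarith [hbracket, hcond']

private lemma radius_formula (z y1 y2 : ℂ)
    (hact1 : 2*(z.re*y1.re + z.im*y1.im) = Complex.normSq y1)
    (hact2 : 2*(z.re*y2.re + z.im*y2.im) = Complex.normSq y2) :
    Complex.normSq z * (4*(y1.re*y2.im - y1.im*y2.re)^2)
      = Complex.normSq y1 * Complex.normSq y2 * Complex.normSq (y1 - y2) := by
  simp only [Complex.normSq_apply, Complex.sub_re, Complex.sub_im] at *
  have e1 : 2*z.re*(y1.re*y2.im - y1.im*y2.re)
      = (y1.re*y1.re + y1.im*y1.im)*y2.im - (y2.re*y2.re + y2.im*y2.im)*y1.im := by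
    linear_combination y2.im * hact1 - y1.im * hact2
  have e2 : 2*z.im*(y1.re*y2.im - y1.im*y2.re)
      = (y2.re*y2.re + y2.im*y2.im)*y1.re - (y1.re*y1.re + y1.im*y1.im)*y2.re := by
    linear_combination y1.re * hact2 - y2.re * hact1
  linear_combination
    (2*z.re*(y1.re*y2.im - y1.im*y2.re)
      + ((y1.re*y1.re + y1.im*y1.im)*y2.im - (y2.re*y2.re + y2.im*y2.im)*y1.im)) * e1
    + (2*z.im*(y1.re*y2.im - y1.im*y2.re)
      + ((y2.re*y2.re + y2.im*y2.im)*y1.re - (y1.re*y1.re + y1.im*y1.im)*y2.re)) * e2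

private lemma extreme_data (τ : ℂ) (him : τ.im ≠ 0) (z : ℂ)
    (hz : z ∈ Set.extremePoints ℝ
      {z : ℂ | ∀ a b : ℤ, ‖z‖ ≤ ‖z - ((a : ℂ) + (b : ℂ) * τ)‖}) :
    ∃ v1 v2 v3 : ℂ, SB (τ.im^2) v1 v2 v3 ∧
      (∃ a b : ℤ, v1 = (a:ℂ)+(b:ℂ)*τ) ∧ (∃ a b : ℤ, v2 = (a:ℂ)+(b:ℂ)*τ) ∧
      (∃ a b : ℤ, v3 = (a:ℂ)+(b:ℂ)*τ) ∧
      Complex.normSq z * (4*τ.im^2)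
        = Complex.normSq v1 * Complex.normSq v2 * Complex.normSq v3 := by
  have hzV := hz.1
  simp only [Set.mem_setOf_eq] at hzV
  have cond : ∀ a b : ℤ, 2*(z.re*((a:ℂ)+(b:ℂ)*τ).re + z.im*((a:ℂ)+(b:ℂ)*τ).im)
      ≤ Complex.normSq ((a:ℂ)+(b:ℂ)*τ) := fun a b => (abs_le_iff_cond z _).1 (hzV a b)
  obtain ⟨a1, b1, a2, b2, hact1, hact2, hdet⟩ := exists_indep_active τ him z hz
  have huni := active_unimodular τ him z cond a1 b1 a2 b2 hact1 hact2 hdet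
  set y1 : ℂ := (a1:ℂ)+(b1:ℂ)*τ with hy1
  set y2 : ℂ := (a2:ℂ)+(b2:ℂ)*τ with hy2
  -- obtuse conditions
  have hc12 := cond (a1+a2) (b1+b2)
  rw [show ((a1+a2:ℤ):ℂ)+((b1+b2:ℤ):ℂ)*τ = y1 + y2 by rw [hy1, hy2]; push_cast; ring] at hc12
  have hcm1 := cond (a1-a2) (b1-b2)
  rw [show ((a1-a2:ℤ):ℂ)+((b1-b2:ℤ):ℂ)*τ = y1 - y2 by rw [hy1, hy2]; push_cast; ring] at hcm1
  have hcm2 := cond (a2-a1) (b2-b1)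
  rw [show ((a2-a1:ℤ):ℂ)+((b2-b1:ℤ):ℂ)*τ = y2 - y1 by rw [hy1, hy2]; push_cast; ring] at hcm2
  have ht0 : 0 ≤ y1.re*y2.re + y1.im*y2.im := by
    simp only [Complex.normSq_apply, Complex.add_re, Complex.add_im] at hc12 hact1 hact2
    linarith
  have ht1 : y1.re*y2.re + y1.im*y2.im ≤ Complex.normSq y2 := by
    simp only [Complex.normSq_apply, Complex.sub_re, Complex.sub_im] at hcm1 hact1 hact2 ⊢
    linarith
  have ht2 : y1.re*y2.re + y1.im*y2.im ≤ Complex.normSq y1 := by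
    simp only [Complex.normSq_apply, Complex.sub_re, Complex.sub_im] at hcm2 hact1 hact2 ⊢
    linarith
  -- superbase
  refine ⟨y1, -y2, y2 - y1, ⟨by ring, ?_, ?_, ?_, ?_⟩, ⟨a1, b1, hy1⟩,
    ⟨-a2, -b2, by rw [hy2]; push_cast; ring⟩,
    ⟨a2-a1, b2-b1, by rw [hy1, hy2]; push_cast; ring⟩, ?_⟩
  · simp only [Complex.neg_re, Complex.neg_im]
    linarith
  · simp only [Complex.sub_re, Complex.sub_im, Complex.normSq_apply] at *
    nlinarith [ht2]
  · simp only [Complex.neg_re, Complex.neg_im, Complex.sub_re, Complex.sub_im,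
      Complex.normSq_apply] at *
    nlinarith [ht1]
  · simp only [Complex.neg_re, Complex.neg_im]
    have hld := lattice_det a1 b1 a2 b2 τ
    rw [← hy1, ← hy2] at hld
    have huniR : ((a1*b2 - a2*b1 : ℤ):ℝ)^2 = 1 := by exact_mod_cast congrArg Int.cast huni
    have h2 : (y1.re * -y2.im - y1.im * -y2.re) = -(((a1*b2 - a2*b1 : ℤ):ℝ) * τ.im) := by
      linear_combination -hld
    rw [h2, neg_sq, mul_pow, huniR, one_mul]
  · have hrad := radius_formula z y1 y2 (by
      simpa only [Complex.normSq_apply] using hact1) (by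
      simpa only [Complex.normSq_apply] using hact2)
    have hld := lattice_det a1 b1 a2 b2 τ
    rw [← hy1, ← hy2] at hld
    have hdet2 : (y1.re*y2.im - y1.im*y2.re)^2 = τ.im^2 := by
      rw [hld]
      have huniR : ((a1*b2 - a2*b1 : ℤ):ℝ)^2 = 1 := by exact_mod_cast congrArg Int.cast huni
      rw [mul_pow, huniR]; ring
    rw [hdet2] at hrad
    have hneg : Complex.normSq (-y2) = Complex.normSq y2 := by
      simp only [Complex.normSq_apply, Complex.neg_re, Complex.neg_im]
      ring
    have hsub : Complex.normSq (y2 - y1) = Complex.normSq (y1 - y2) := by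
      simp only [Complex.normSq_apply, Complex.sub_re, Complex.sub_im]
      ring
    rw [hneg, hsub]
    exact hrad

/-- Let `τ` be an imaginary quadratic algebraic integer and `V` its Voronoi cell of `0`
for the lattice `ℤ[τ]`. Then `V` is convex and all vertices (extreme points) of `V` have
the same absolute value. -/
theorem voronoi_cell_convex_and_vertices_equal_abs (p q : ℤ) (τ : ℂ)
    (hτ : τ ^ 2 - (p : ℂ) * τ + (q : ℂ) = 0) (hdisc : p ^ 2 < 4 * q) :
    Convex ℝ {z : ℂ | ∀ a b : ℤ, ‖z‖ ≤ ‖z - ((a : ℂ) + (b : ℂ) * τ)‖} ∧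
    ∃ r : ℝ, ∀ z ∈ Set.extremePoints ℝ
        {z : ℂ | ∀ a b : ℤ, ‖z‖ ≤ ‖z - ((a : ℂ) + (b : ℂ) * τ)‖},
      ‖z‖ = r := by
  -- facts about τ
  have him : τ.im ≠ 0 := by
    intro h
    rw [Complex.ext_iff] at hτ
    obtain ⟨h1, h2⟩ := hτ
    simp [pow_two, Complex.mul_re, Complex.mul_im, Complex.add_re, Complex.add_im,
      Complex.sub_re, Complex.sub_im, h] at h1
    have hd : (p:ℝ)^2 < 4*q := by exact_mod_cast hdisc
    nlinarith [sq_nonneg (2*τ.re - (p:ℝ))]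
  constructor
  · -- convexity
    intro x hx y hy a b ha hb hab
    intro A B
    rw [abs_le_iff_cond]
    simp only [Set.mem_setOf_eq] at hx hy
    have hx' := (abs_le_iff_cond x _).1 (hx A B)
    have hy' := (abs_le_iff_cond y _).1 (hy A B)
    have hre : (a • x + b • y).re = a*x.re + b*y.re := by
      rw [Complex.add_re, Complex.real_smul, Complex.real_smul]
      simp [Complex.mul_re]
    have him2 : (a • x + b • y).im = a*x.im + b*y.im := by
      rw [Complex.add_im, Complex.real_smul, Complex.real_smul]
      simp [Complex.mul_im]
    rw [hre, him2]
    have h1 := mul_le_mul_of_nonneg_left hx' ha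
    have h2 := mul_le_mul_of_nonneg_left hy' hb
    nlinarith [h1, h2, hab, Complex.normSq_nonneg ((A:ℂ)+(B:ℂ)*τ)]
  · -- equal absolute values of extreme points
    rcases Set.eq_empty_or_nonempty (Set.extremePoints ℝ
        {z : ℂ | ∀ a b : ℤ, ‖z‖ ≤ ‖z - ((a : ℂ) + (b : ℂ) * τ)‖})
      with he | ⟨z0, hz0⟩
    · exact ⟨0, fun z hzmem => absurd (he ▸ hzmem) (Set.notMem_empty z)⟩
    · refine ⟨‖z0‖, fun z hzmem => ?_⟩
      obtain ⟨v1, v2, v3, hSBv, ⟨c1, d1, ev1⟩, ⟨c2, d2, ev2⟩, ⟨c3, d3, ev3⟩, hradv⟩ :=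
        extreme_data τ him z0 hz0
      obtain ⟨w1, w2, w3, hSBw, ⟨e1, f1, ew1⟩, ⟨e2, f2, ew2⟩, ⟨e3, f3, ew3⟩, hradw⟩ :=
        extreme_data τ him z hzmem
      have hD : (0:ℝ) < τ.im^2 := by positivity
      -- determinant conditions in lattice coordinates
      have hdv : ((((c1:ℂ)+(d1:ℂ)*τ)).re * (((c2:ℂ)+(d2:ℂ)*τ)).im
          - (((c1:ℂ)+(d1:ℂ)*τ)).im * (((c2:ℂ)+(d2:ℂ)*τ)).re)^2 = τ.im^2 := by
        rw [← ev1, ← ev2]; exact hSBv.det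
      have hdw : ((((e1:ℂ)+(f1:ℂ)*τ)).re * (((e2:ℂ)+(f2:ℂ)*τ)).im
          - (((e1:ℂ)+(f1:ℂ)*τ)).im * (((e2:ℂ)+(f2:ℂ)*τ)).re)^2 = τ.im^2 := by
        rw [← ew1, ← ew2]; exact hSBw.det
      -- coefficients of w's in terms of v's
      have getc : ∀ (u : ℂ) (a b : ℤ), u = (a:ℂ)+(b:ℂ)*τ →
          ∃ m n : ℤ, u = (m:ℂ)*v1 + (n:ℂ)*v2 := by
        intro u a b hu
        obtain ⟨m, n, hmn⟩ := lattice_combo τ him a b c1 d1 c2 d2 hdv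
        exact ⟨m, n, by rw [hu, ev1, ev2]; exact hmn⟩
      have getc' : ∀ (u : ℂ) (a b : ℤ), u = (a:ℂ)+(b:ℂ)*τ →
          ∃ m n : ℤ, u = (m:ℂ)*w1 + (n:ℂ)*w2 := by
        intro u a b hu
        obtain ⟨m, n, hmn⟩ := lattice_combo τ him a b e1 f1 e2 f2 hdw
        exact ⟨m, n, by rw [hu, ew1, ew2]; exact hmn⟩
      obtain ⟨m1, n1, g1⟩ := getc w1 e1 f1 ew1
      obtain ⟨m2, n2, g2⟩ := getc w2 e2 f2 ew2
      obtain ⟨m3, n3, g3⟩ := getc w3 e3 f3 ew3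
      obtain ⟨m1', n1', g1'⟩ := getc' v1 c1 d1 ev1
      obtain ⟨m2', n2', g2'⟩ := getc' v2 c2 d2 ev2
      obtain ⟨m3', n3', g3'⟩ := getc' v3 c3 d3 ev3
      have hprod := SB.product_eq hD hSBv hSBw m1 n1 m2 n2 m3 n3 g1 g2 g3
        m1' n1' m2' n2' m3' n3' g1' g2' g3'
      have hnseq : Complex.normSq z0 = Complex.normSq z := by
        have h4 : (0:ℝ) < 4*τ.im^2 := by positivity
        have := hradv.trans (hprod.trans hradw.symm)
        exact mul_right_cancel₀ (ne_of_gt h4) this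
      rw [Complex.norm_def, Complex.norm_def, hnseq]
end

section
/- Let τ ∈ C with |τ| > 1, D a finite digit set containing 0, and w ≥ 2. For each ℓ ≥ 0, the set of w-NAFs with left-length at most ℓ and infinite right-length, equipped with the metric d(η, ξ) = |τ|^{max{j : η_j ≠ ξ_j}}, is a compact metric space. -/
open scoped Classical

/-- The metric on `w`-NAF sequences: `d(η, ξ) = |τ| ^ (max {j : η_j ≠ ξ_j})` for `η ≠ ξ`,
and `0` otherwise. -/
noncomputable def nafDist (τ : ℂ) (η ξ : ℤ → ℂ) : ℝ :=
  if η = ξ then 0 else ‖τ‖ ^ (sSup {j : ℤ | η j ≠ ξ j})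

/-- Let `τ ∈ ℂ` with `|τ| > 1`, `D` a finite digit set containing `0`, and `w ≥ 2`.
For each `ℓ ≥ 0`, the set of `w`-NAFs of left-length at most `ℓ` (and arbitrary, possibly
infinite, right-length), equipped with the metric `nafDist`, is a compact metric space:
every sequence of such `w`-NAFs has a subsequence converging (in the metric) to a `w`-NAF
of the same kind. -/
theorem naf_space_compact (τ : ℂ) (habs : 1 < ‖τ‖)
    (D : Finset ℂ) (hD0 : (0 : ℂ) ∈ D) (w : ℕ) (hw : 2 ≤ w) (ℓ : ℕ) :
    ∀ u : ℕ → ℤ → ℂ,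
      (∀ n, (∀ j, u n j ∈ D) ∧ (∀ j : ℤ, (ℓ : ℤ) ≤ j → u n j = 0) ∧
        (∀ i j : ℤ, i < j → j < i + w → u n i ≠ 0 → u n j = 0)) →
      ∃ η : ℤ → ℂ,
        ((∀ j, η j ∈ D) ∧ (∀ j : ℤ, (ℓ : ℤ) ≤ j → η j = 0) ∧
          (∀ i j : ℤ, i < j → j < i + w → η i ≠ 0 → η j = 0)) ∧
        ∃ φ : ℕ → ℕ, StrictMono φ ∧
          Filter.Tendsto (fun n => nafDist τ (u (φ n)) η) Filter.atTop (nhds 0) := by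
  intro u hu
  set S : Set (ℤ → ℂ) := {f | (∀ j, f j ∈ (D : Set ℂ)) ∧ (∀ j : ℤ, (ℓ : ℤ) ≤ j → f j = 0) ∧
      (∀ i j : ℤ, i < j → j < i + w → f i ≠ 0 → f j = 0)} with hSdef
  have hA : IsClosed {f : ℤ → ℂ | ∀ j, f j ∈ (D : Set ℂ)} := by
    have : {f : ℤ → ℂ | ∀ j, f j ∈ (D : Set ℂ)} = ⋂ j, (fun f : ℤ → ℂ => f j) ⁻¹' (D : Set ℂ) := by
      ext f; simp
    rw [this]
    exact isClosed_iInter fun j => (D.finite_toSet.isClosed).preimage (continuous_apply j)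
  have hB : IsClosed {f : ℤ → ℂ | ∀ j : ℤ, (ℓ : ℤ) ≤ j → f j = 0} := by
    have : {f : ℤ → ℂ | ∀ j : ℤ, (ℓ : ℤ) ≤ j → f j = 0}
        = ⋂ j : ℤ, ⋂ (_ : (ℓ : ℤ) ≤ j), (fun f : ℤ → ℂ => f j) ⁻¹' {0} := by
      ext f; simp
    rw [this]
    exact isClosed_iInter fun j => isClosed_iInter fun _ =>
      isClosed_singleton.preimage (continuous_apply j)
  have hC : IsClosed {f : ℤ → ℂ | ∀ i j : ℤ, i < j → j < i + w → f i ≠ 0 → f j = 0} := by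
    have : {f : ℤ → ℂ | ∀ i j : ℤ, i < j → j < i + w → f i ≠ 0 → f j = 0}
        = ⋂ i : ℤ, ⋂ j : ℤ, ⋂ (_ : i < j), ⋂ (_ : j < i + w),
            ((fun f : ℤ → ℂ => f i) ⁻¹' {0} ∪ (fun f : ℤ → ℂ => f j) ⁻¹' {0}) := by
      ext f
      simp only [Set.mem_setOf_eq, Set.mem_iInter, Set.mem_union, Set.mem_preimage,
        Set.mem_singleton_iff]
      constructor
      · intro h i j hij hjw
        by_cases hfi : f i = 0
        · exact Or.inl hfi
        · exact Or.inr (h i j hij hjw hfi)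
      · intro h i j hij hjw hfi
        rcases h i j hij hjw with h0 | h0
        · exact absurd h0 hfi
        · exact h0
    rw [this]
    exact isClosed_iInter fun i => isClosed_iInter fun j => isClosed_iInter fun _ =>
      isClosed_iInter fun _ =>
        ((isClosed_singleton.preimage (continuous_apply i)).union
          (isClosed_singleton.preimage (continuous_apply j)))
  have hSclosed : IsClosed S := by
    have : S = {f : ℤ → ℂ | ∀ j, f j ∈ (D : Set ℂ)} ∩
        ({f : ℤ → ℂ | ∀ j : ℤ, (ℓ : ℤ) ≤ j → f j = 0} ∩
          {f : ℤ → ℂ | ∀ i j : ℤ, i < j → j < i + w → f i ≠ 0 → f j = 0}) := by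
      ext f
      simp only [hSdef, Set.mem_setOf_eq, Set.mem_inter_iff]
    rw [this]
    exact hA.inter (hB.inter hC)
  have hScompact : IsCompact S := by
    have hpi : IsCompact (Set.pi Set.univ fun _ : ℤ => (D : Set ℂ)) :=
      isCompact_univ_pi fun _ => D.finite_toSet.isCompact
    exact hpi.of_isClosed_subset hSclosed fun f hf j _ => hf.1 j
  have huS : ∀ n, u n ∈ S := fun n => ⟨fun j => (hu n).1 j, (hu n).2.1, (hu n).2.2⟩
  obtain ⟨η, hηS, φ, hφ, hconv⟩ := hScompact.isSeqCompact huS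
  have hpt : ∀ j : ℤ, Filter.Tendsto (fun n => u (φ n) j) Filter.atTop (nhds (η j)) :=
    fun j => tendsto_pi_nhds.mp hconv j
  have hev : ∀ j : ℤ, ∀ᶠ n in Filter.atTop, u (φ n) j = η j := by
    intro j
    have hfin : ((D : Set ℂ) \ {η j}).Finite := D.finite_toSet.subset Set.diff_subset
    have hopen : IsOpen (((D : Set ℂ) \ {η j})ᶜ) := hfin.isClosed.isOpen_compl
    have hmem : η j ∈ (((D : Set ℂ) \ {η j})ᶜ) := by simp
    filter_upwards [(hpt j).eventually (hopen.mem_nhds hmem)] with n hn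
    by_contra hne
    exact hn ⟨(hu (φ n)).1 j, by simpa using hne⟩
  refine ⟨η, ⟨fun j => hηS.1 j, hηS.2.1, hηS.2.2⟩, φ, hφ, ?_⟩
  have hτ0 : (0 : ℝ) < ‖τ‖ := lt_trans one_pos habs
  rw [Metric.tendsto_atTop]
  intro ε hε
  obtain ⟨N, hN⟩ : ∃ N : ℕ, ‖τ‖⁻¹ ^ N < ε := by
    refine exists_pow_lt_of_lt_one hε ?_
    rw [inv_lt_one_iff₀]
    exact Or.inr habs
  have hkey : ∀ k : ℤ, k ≤ -(N : ℤ) → ‖τ‖ ^ k < ε := by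
    intro k hk
    have h1 : ‖τ‖ ^ k ≤ ‖τ‖ ^ (-(N : ℤ)) :=
      zpow_le_zpow_right₀ habs.le hk
    have h2 : ‖τ‖ ^ (-(N : ℤ)) = ‖τ‖⁻¹ ^ N := by
      rw [zpow_neg, zpow_natCast, inv_pow]
    calc ‖τ‖ ^ k ≤ ‖τ‖ ^ (-(N : ℤ)) := h1
      _ = ‖τ‖⁻¹ ^ N := h2
      _ < ε := hN
  have hwin : ∀ᶠ n in Filter.atTop, ∀ j ∈ Finset.Icc (-(N : ℤ)) (ℓ : ℤ), u (φ n) j = η j :=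
    (Filter.eventually_all_finset _).mpr fun j _ => hev j
  obtain ⟨M, hM⟩ := Filter.eventually_atTop.mp hwin
  refine ⟨M, fun n hn => ?_⟩
  have hagree : ∀ j : ℤ, -(N : ℤ) ≤ j → u (φ n) j = η j := by
    intro j hj'
    by_cases hjl : j ≤ (ℓ : ℤ)
    · exact hM n hn j (Finset.mem_Icc.mpr ⟨hj', hjl⟩)
    · rw [(hu (φ n)).2.1 j (by omega), hηS.2.1 j (by omega)]
  by_cases heq : u (φ n) = η
  · simpa [nafDist, heq] using hε
  · have hne : {j : ℤ | u (φ n) j ≠ η j}.Nonempty := by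
      rcases Function.ne_iff.mp heq with ⟨j, hj'⟩
      exact ⟨j, hj'⟩
    have hsup : sSup {j : ℤ | u (φ n) j ≠ η j} ≤ -(N : ℤ) := by
      refine csSup_le hne fun j hjmem => ?_
      by_contra hcon
      push_neg at hcon
      exact hjmem (hagree j hcon.le)
    have hval : nafDist τ (u (φ n)) η
        = ‖τ‖ ^ sSup {j : ℤ | u (φ n) j ≠ η j} := if_neg heq
    have hpos : (0 : ℝ) < ‖τ‖ ^ sSup {j : ℤ | u (φ n) j ≠ η j} := zpow_pos hτ0 _
    rw [hval, Real.dist_eq, sub_zero, abs_of_pos hpos]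
    exact lt_of_le_of_lt (zpow_le_zpow_right₀ habs.le hsup) (by
      calc ‖τ‖ ^ (-(N : ℤ)) = ‖τ‖⁻¹ ^ N := by
            rw [zpow_neg, zpow_natCast, inv_pow]
        _ < ε := hN)
end

section
/- Let τ be an imaginary quadratic algebraic integer with |τ| > 1, w ≥ 2, and D a minimal norm representatives digit set modulo τ^w. Then there exists a constant f_L > 0 (depending only on τ and w) such that every fractional w-NAF 0.η_{-1}η_{-2}... with η_{-1} ≠ 0 satisfies |Σ_{j≥1} η_{-j}τ^{-j}| ≥ |τ|^{-1} f_L. -/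
/-- `D` is a minimal norm representatives digit set modulo `τ^w`: a reduced residue digit
set in which every nonzero digit has minimal absolute value (equivalently, minimal norm)
within its residue class modulo `τ^w`. -/
def IsMinimalNormDigitSet (τ : ℂ) (w : ℕ) (D : Finset ℂ) : Prop :=
  IsReducedResidueDigitSet τ w D ∧
  ∀ d ∈ D, d ≠ 0 → ∀ ξ ∈ Algebra.adjoin ℤ ({τ} : Set ℂ),
    (∃ x ∈ Algebra.adjoin ℤ ({τ} : Set ℂ), ξ - d = τ ^ w * x) →
    ‖d‖ ≤ ‖ξ‖

section NafProofAux

open Complex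

private lemma cx_eq_of_abs_add {a b : ℂ} (h1 : ‖a‖ = ‖b‖)
    (h2 : ‖a + b‖ = ‖a‖ + ‖b‖) : a = b :=
  eq_of_norm_eq_of_norm_add_eq (by simpa using h1)
    (by simpa using h2)

private lemma adjoin_repr {p q : ℤ} {τ : ℂ} (hτq : τ ^ 2 - (p : ℂ) * τ + (q : ℂ) = 0)
    {z : ℂ} (hz : z ∈ Algebra.adjoin ℤ ({τ} : Set ℂ)) :
    ∃ m n : ℤ, z = (m : ℂ) + (n : ℂ) * τ := by
  induction hz using Algebra.adjoin_induction with
  | mem x hx =>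
    rcases hx with rfl
    exact ⟨0, 1, by simp⟩
  | algebraMap r => exact ⟨r, 0, by simp⟩
  | add x y hx hy ihx ihy =>
    obtain ⟨m, n, rfl⟩ := ihx
    obtain ⟨m', n', rfl⟩ := ihy
    exact ⟨m + m', n + n', by push_cast; ring⟩
  | mul x y hx hy ihx ihy =>
    obtain ⟨m, n, rfl⟩ := ihx
    obtain ⟨m', n', rfl⟩ := ihy
    refine ⟨m * m' - q * n * n', m * n' + n * m' + p * n * n', ?_⟩
    have hτ2 : τ ^ 2 = (p : ℂ) * τ - (q : ℂ) := by linear_combination hτq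
    push_cast
    linear_combination ((n : ℂ) * n') * hτ2

section
variable {p q : ℤ} {τ : ℂ}

private lemma im_ne_zero (hτq : τ ^ 2 - (p : ℂ) * τ + (q : ℂ) = 0) (hdisc : p ^ 2 < 4 * q) :
    τ.im ≠ 0 := by
  intro him
  have h2 : ((2 * τ - (p : ℂ)) ^ 2) = ((p ^ 2 - 4 * q : ℤ) : ℂ) := by
    push_cast
    linear_combination 4 * hτq
  have him2 : (2 * τ - (p : ℂ)).im = 0 := by simp [him]
  have hre : ((2 * τ - (p : ℂ)) ^ 2).re = (2 * τ - (p : ℂ)).re ^ 2 := by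
    rw [sq, Complex.mul_re, him2]; ring
  have hcre : ((p ^ 2 - 4 * q : ℤ) : ℂ).re = ((p ^ 2 - 4 * q : ℤ) : ℝ) :=
    Complex.intCast_re _
  have hge : (0 : ℝ) ≤ ((p ^ 2 - 4 * q : ℤ) : ℝ) := by
    rw [← hcre, ← h2, hre]; positivity
  have : ((p ^ 2 - 4 * q : ℤ) : ℝ) < 0 := by
    have : p ^ 2 - 4 * q < 0 := by omega
    exact_mod_cast this
  linarith

private lemma conj_eq (hτq : τ ^ 2 - (p : ℂ) * τ + (q : ℂ) = 0) (hdisc : p ^ 2 < 4 * q) :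
    (starRingEnd ℂ) τ = (p : ℂ) - τ := by
  have hconj : ((starRingEnd ℂ) τ) ^ 2 - (p : ℂ) * ((starRingEnd ℂ) τ) + (q : ℂ) = 0 := by
    have := congrArg (starRingEnd ℂ) hτq
    simpa using this
  have hfac : (((starRingEnd ℂ) τ) - τ) * (((starRingEnd ℂ) τ) - ((p : ℂ) - τ)) = 0 := by
    linear_combination hconj - hτq
  rcases mul_eq_zero.mp hfac with h | h
  · exfalso
    apply im_ne_zero hτq hdisc
    have := sub_eq_zero.mp h
    have him := congrArg Complex.im this
    simpa using (by simpa [Complex.conj_im] using him : -τ.im = τ.im) |> fun h => by linarith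
  · exact sub_eq_zero.mp h

private lemma normSq_eq (hτq : τ ^ 2 - (p : ℂ) * τ + (q : ℂ) = 0) (hdisc : p ^ 2 < 4 * q) :
    (‖τ‖) ^ 2 = (q : ℝ) := by
  have h1 : τ * ((starRingEnd ℂ) τ) = (q : ℂ) := by
    rw [conj_eq hτq hdisc]
    linear_combination -hτq
  have h2 : ((Complex.normSq τ : ℝ) : ℂ) = ((q : ℝ) : ℂ) := by
    rw [← Complex.mul_conj τ] at *
    simpa using h1
  have h3 : (Complex.normSq τ) = (q : ℝ) := by exact_mod_cast h2
  rw [Complex.sq_norm, h3]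

end

section
variable {p : ℤ} {τ : ℂ}

private lemma tau_dvd_of_even (hτ2 : τ ^ 2 - (p : ℂ) * τ + 2 = 0) {m n : ℤ} (hm : 2 ∣ m) :
    ∃ x ∈ Algebra.adjoin ℤ ({τ} : Set ℂ), (m : ℂ) + (n : ℂ) * τ = τ * x := by
  obtain ⟨m', rfl⟩ := hm
  refine ⟨((m' * p + n : ℤ) : ℂ) - (m' : ℂ) * τ, ?_, ?_⟩
  · exact sub_mem (intCast_mem _ _)
      (mul_mem (intCast_mem _ _) (Algebra.subset_adjoin rfl))
  · push_cast
    linear_combination (m' : ℂ) * hτ2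

end

section Analysis

variable {τ : ℂ} {η : ℤ → ℂ} {M B : ℝ} {w : ℕ}

private lemma summable_major (hr1 : 1 < ‖τ‖) (hM : 0 ≤ M) (c : ℤ) :
    Summable (fun k : ℤ => if k < 0 then M * (‖τ‖) ^ (k - c) else 0) := by
  set r := ‖τ‖ with hr
  have hr0 : (0 : ℝ) < r := lt_trans one_pos hr1
  have hinj : Function.Injective (fun n : ℕ => (-1 - n : ℤ)) := by
    intro a b h; simpa using h
  rw [← Function.Injective.summable_iff hinj]
  · have : (fun n : ℕ => (fun k : ℤ => if k < 0 then M * r ^ (k - c) else 0) ((-1 - n : ℤ)))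
        = fun n : ℕ => (M * r ^ (-1 - c)) * (r⁻¹) ^ n := by
      funext n
      have hlt : (-1 - (n : ℤ)) < 0 := by omega
      simp only [if_pos hlt]
      have : r ^ ((-1 - (n : ℤ)) - c) = r ^ (-1 - c) * (r⁻¹) ^ n := by
        rw [← zpow_natCast (r⁻¹) n, inv_zpow, ← zpow_neg, ← zpow_add₀ (ne_of_gt hr0)]
        ring_nf
      rw [this]; ring
    rw [Function.comp_def, this]
    exact (summable_geometric_of_lt_one (by positivity)
      (inv_lt_one_of_one_lt₀ hr1)).mul_left _
  · intro k hk
    by_cases h : k < 0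
    · exfalso
      refine hk ⟨(-1 - k).toNat, ?_⟩
      show (-1 - ((-1 - k).toNat : ℤ)) = k
      omega
    · simp [h]

private lemma norm_term_le (hB : ∀ j, ‖η j‖ ≤ B)
    (hzero : ∀ j : ℤ, 0 ≤ j → η j = 0) (c k : ℤ) :
    ‖η k * τ ^ (k - c)‖ ≤ (if k < 0 then B * (‖τ‖) ^ (k - c) else 0) := by
  by_cases h : k < 0
  · rw [if_pos h]
    rw [norm_mul, norm_zpow]
    exact mul_le_mul_of_nonneg_right (hB k) (by positivity)
  · rw [if_neg h, hzero k (by omega)]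
    simp

private lemma summable_shift (hr1 : 1 < ‖τ‖) (hB0 : 0 ≤ B)
    (hB : ∀ j, ‖η j‖ ≤ B)
    (hzero : ∀ j : ℤ, 0 ≤ j → η j = 0) (c : ℤ) :
    Summable (fun k : ℤ => η k * τ ^ (k - c)) :=
  Summable.of_norm_bounded (summable_major hr1 hB0 c) (norm_term_le hB hzero c)

private lemma summable_cut (hr1 : 1 < ‖τ‖) (hB0 : 0 ≤ B)
    (hB : ∀ j, ‖η j‖ ≤ B)
    (hzero : ∀ j : ℤ, 0 ≤ j → η j = 0) (c d : ℤ) :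
    Summable (fun k : ℤ => if k < d then η k * τ ^ (k - c) else 0) := by
  apply Summable.of_norm_bounded (summable_major hr1 hB0 c)
  intro k
  by_cases h : k < d
  · rw [if_pos h]; exact norm_term_le hB hzero c k
  · rw [if_neg h]
    simp only [norm_zero]
    by_cases h0 : k < 0 <;> simp [h0]
    positivity

private lemma summable_cut_norm (hr1 : 1 < ‖τ‖) (hB0 : 0 ≤ B)
    (hB : ∀ j, ‖η j‖ ≤ B)
    (hzero : ∀ j : ℤ, 0 ≤ j → η j = 0) (c d : ℤ) :
    Summable (fun k : ℤ => ‖if k < d then η k * τ ^ (k - c) else 0‖) := by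
  apply Summable.of_norm_bounded (summable_major hr1 hB0 c)
  intro k
  rw [norm_norm]
  by_cases h : k < d
  · rw [if_pos h]; exact norm_term_le hB hzero c k
  · rw [if_neg h]
    simp only [norm_zero]
    by_cases h0 : k < 0 <;> simp [h0]
    positivity

private lemma tail_bound (hr1 : 1 < ‖τ‖) (hw1 : 1 ≤ w)
    (hB0 : 0 ≤ B) (hB : ∀ j, ‖η j‖ ≤ B)
    (hzero : ∀ j : ℤ, 0 ≤ j → η j = 0)
    (hsp : ∀ i j : ℤ, i < j → η i ≠ 0 → η j ≠ 0 → i + (w : ℤ) ≤ j)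
    (c : ℤ) (g : ℕ) (hg1 : 1 ≤ g)
    (hg : ∀ k, k < c → η k ≠ 0 → k ≤ c - g) :
    ‖∑' k : ℤ, if k < c then η k * τ ^ (k - c) else 0‖
      ≤ B * ((‖τ‖) ^ g)⁻¹ * (1 - ((‖τ‖) ^ w)⁻¹)⁻¹ := by
  set r := ‖τ‖ with hrdef
  have hr0 : (0 : ℝ) < r := lt_trans one_pos hr1
  have hrw1 : (1 : ℝ) < r ^ w := one_lt_pow₀ hr1 (by omega)
  have hxlt : (r ^ w)⁻¹ < 1 := inv_lt_one_of_one_lt₀ hrw1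
  have hx0 : (0 : ℝ) ≤ (r ^ w)⁻¹ := by positivity
  have hsn : Summable (fun k : ℤ => ‖if k < c then η k * τ ^ (k - c) else 0‖) :=
    summable_cut_norm hr1 hB0 hB hzero c c
  refine le_trans (norm_tsum_le_tsum_norm hsn) ?_
  set s : Set ℤ := {k | k < c ∧ η k ≠ 0} with hs
  have hsupp : Function.support (fun k : ℤ => ‖if k < c then η k * τ ^ (k - c) else 0‖) ⊆ s := by
    intro k hk
    simp only [Function.mem_support] at hk
    by_cases h1 : k < c
    · refine ⟨h1, ?_⟩
      intro h2
      apply hk; rw [if_pos h1, h2]; simp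
    · exfalso; apply hk; rw [if_neg h1]; simp
  rw [← tsum_subtype_eq_of_support_subset hsupp]
  -- injection into ℕ
  have key : ∀ k : ℤ, k ∈ s → 0 ≤ c - g - k := by
    intro k hk; have := hg k hk.1 hk.2; omega
  set e : ↥s → ℕ := fun k => ((c - g - k.1) / (w : ℤ)).toNat with he
  have hediv : ∀ k : ↥s, (w : ℤ) * ((c - g - k.1) / (w : ℤ)) + (c - g - k.1) % (w : ℤ)
      = c - g - k.1 := fun k => Int.mul_ediv_add_emod _ _
  have hemod : ∀ k : ↥s, 0 ≤ (c - g - k.1) % (w : ℤ) ∧ (c - g - k.1) % (w : ℤ) < w := by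
    intro k
    constructor
    · exact Int.emod_nonneg _ (by omega)
    · exact Int.emod_lt_of_pos _ (by omega)
  have hecast : ∀ k : ↥s, ((e k : ℤ)) = (c - g - k.1) / (w : ℤ) := by
    intro k
    apply Int.toNat_of_nonneg
    apply Int.ediv_nonneg (key k.1 k.2) (by omega)
  have einj : Function.Injective e := by
    intro k1 k2 hke
    have h1 := hediv k1; have h2 := hediv k2
    have m1 := hemod k1; have m2 := hemod k2
    have hdeq : (c - g - k1.1) / (w : ℤ) = (c - g - k2.1) / (w : ℤ) := by
      rw [← hecast k1, ← hecast k2, hke]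
    have hclose : k1.1 - k2.1 < w ∧ k2.1 - k1.1 < w := by
      rw [hdeq] at h1
      constructor <;> nlinarith [m1.1, m1.2, m2.1, m2.2]
    have : k1.1 = k2.1 := by
      rcases lt_trichotomy k1.1 k2.1 with h | h | h
      · exfalso
        have := hsp k1.1 k2.1 h k1.2.2 k2.2.2
        omega
      · exact h
      · exfalso
        have := hsp k2.1 k1.1 h k2.2.2 k1.2.2
        omega
    exact Subtype.ext this
  have hG : Summable (fun n : ℕ => (B * (r ^ g)⁻¹) * ((r ^ w)⁻¹) ^ n) :=
    (summable_geometric_of_lt_one hx0 hxlt).mul_left _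
  have hle : ∀ k : ↥s, ‖if k.1 < c then η k.1 * τ ^ (k.1 - c) else 0‖
      ≤ (B * (r ^ g)⁻¹) * ((r ^ w)⁻¹) ^ (e k) := by
    intro k
    rw [if_pos k.2.1, norm_mul, norm_zpow]
    have hexp : (k.1 : ℤ) - c ≤ -(g : ℤ) - (w : ℤ) * (e k) := by
      have h1 := hediv k; have m1 := hemod k
      rw [hecast k]
      omega
    have hmono : r ^ ((k.1 : ℤ) - c) ≤ r ^ (-(g : ℤ) - (w : ℤ) * (e k)) :=
      zpow_le_zpow_right₀ (le_of_lt hr1) hexp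
    have hre : r ^ (-(g : ℤ) - (w : ℤ) * (e k)) = (r ^ g)⁻¹ * ((r ^ w)⁻¹) ^ (e k) := by
      rw [sub_eq_add_neg, zpow_add₀ (ne_of_gt hr0), zpow_neg, zpow_natCast]
      congr 1
      rw [← zpow_natCast ((r ^ w)⁻¹) (e k), inv_zpow, ← zpow_neg, ← zpow_natCast r w,
        ← zpow_mul]
      ring_nf
    calc ‖η k.1‖ * r ^ ((k.1 : ℤ) - c) ≤ B * r ^ (-(g : ℤ) - (w : ℤ) * (e k)) := by
          apply mul_le_mul (hB k.1) hmono (by positivity) hB0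
      _ = (B * (r ^ g)⁻¹) * ((r ^ w)⁻¹) ^ (e k) := by rw [hre]; ring
  refine le_trans ((hsn.subtype s).tsum_le_tsum_of_inj e einj (fun n _ => by positivity) hle
    hG) ?_
  rw [tsum_mul_left, tsum_geometric_of_lt_one hx0 hxlt]

end Analysis

private lemma int_comb_eq {τ : ℂ} (him : τ.im ≠ 0) {a b : ℤ}
    (h : (a : ℂ) + (b : ℂ) * τ = 0) : a = 0 ∧ b = 0 := by
  have hbim : (b : ℝ) * τ.im = 0 := by
    have := congrArg Complex.im h
    simpa using this
  have hb : (b : ℝ) = 0 := by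
    rcases mul_eq_zero.mp hbim with h' | h'
    · exact h'
    · exact absurd h' him
  have hb' : b = 0 := by exact_mod_cast hb
  subst hb'
  have : (a : ℂ) = 0 := by simpa using h
  exact ⟨by exact_mod_cast this, rfl⟩

private lemma even_small {p : ℤ} (h8 : p ^ 2 < 8) (hp : 2 ∣ p) :
    p = -2 ∨ p = 0 ∨ p = 2 := by
  obtain ⟨k, rfl⟩ := hp
  have h1 : k ≤ 1 := by nlinarith
  have h2 : -1 ≤ k := by nlinarith
  omega

private lemma parity_endgame {p m0 n0 m1 n1 : ℤ} (hp : ¬ 2 ∣ p) (hm0 : ¬ 2 ∣ m0)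
    (ha : 2 * m1 + 2 * m0 + 2 * (p * n0) = 0)
    (hb : 2 * n1 - p * m0 - p * (p * n0) + 2 * n0 = 0) : 2 ∣ m1 := by
  have hpm : ¬ 2 ∣ p * m0 := fun h => ((Int.prime_two.dvd_mul).mp h).elim hp hm0
  have hn0 : ¬ 2 ∣ n0 := by
    intro h
    have h1 : (2 : ℤ) ∣ p * n0 := Dvd.dvd.mul_left h p
    have h2 : (2 : ℤ) ∣ p * (p * n0) := Dvd.dvd.mul_left h1 p
    have hdv : (2 : ℤ) ∣ (2 * n1 - p * (p * n0) + 2 * n0) :=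
      dvd_add (dvd_sub (Dvd.intro n1 rfl) h2) (Dvd.intro n0 rfl)
    have heq : p * m0 = 2 * n1 - p * (p * n0) + 2 * n0 := by linarith
    exact hpm (heq ▸ hdv)
  have hu : ¬ 2 ∣ p * n0 := fun h => ((Int.prime_two.dvd_mul).mp h).elim hp hn0
  have hm1eq : m1 = -m0 - p * n0 := by linarith
  generalize hk : p * n0 = k at hu hm1eq
  omega

set_option maxHeartbeats 1600000 in
private lemma naf_value_ne_zero (p q : ℤ) (τ : ℂ)
    (hτq : τ ^ 2 - (p : ℂ) * τ + (q : ℂ) = 0) (hdisc : p ^ 2 < 4 * q)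
    (habs : 1 < ‖τ‖) (w : ℕ) (hw : 2 ≤ w)
    (D : Finset ℂ) (hD : IsMinimalNormDigitSet τ w D)
    (η : ℤ → ℂ) (hmem : ∀ j, η j ∈ D) (hzero : ∀ j : ℤ, 0 ≤ j → η j = 0)
    (hnaf : ∀ i j : ℤ, i < j → j < i + w → η i ≠ 0 → η j = 0)
    (h1 : η (-1) ≠ 0) : (∑' j : ℤ, η j * τ ^ j) ≠ 0 := by
  classical
  intro hF
  obtain ⟨⟨hD0, hDΛ, hDτ, hDuniq, -⟩, hDmin⟩ := hD
  have hτ0 : τ ≠ 0 := by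
    intro h; rw [h] at habs; simp at habs; norm_num at habs
  set r := ‖τ‖ with hrdef
  have hr0 : (0 : ℝ) < r := lt_trans one_pos habs
  have him : τ.im ≠ 0 := im_ne_zero hτq hdisc
  have hsp : ∀ i j : ℤ, i < j → η i ≠ 0 → η j ≠ 0 → i + (w : ℤ) ≤ j := by
    intro i j hij hi hj
    by_contra hcon
    push_neg at hcon
    exact hj (hnaf i j hij (by omega) hi)
  -- maximal digit
  set Du : Finset ℂ := D.filter (fun d => d ≠ 0 ∧ ∃ j : ℤ, η j = d) with hDu
  have hDune : Du.Nonempty := ⟨η (-1), by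
    rw [hDu, Finset.mem_filter]
    exact ⟨hmem _, h1, ⟨-1, rfl⟩⟩⟩
  set B := (Du.image norm).max' (hDune.image _) with hB
  obtain ⟨dstar, hdstar, hdstarB⟩ : ∃ d ∈ Du, ‖d‖ = B := by
    obtain ⟨b, hb, hbeq⟩ := Finset.mem_image.mp ((Du.image norm).max'_mem (hDune.image _))
    exact ⟨b, hb, hbeq⟩
  obtain ⟨hdD, hdne, jstar, hjstar⟩ : dstar ∈ D ∧ dstar ≠ 0 ∧ ∃ j : ℤ, η j = dstar := by
    have := Finset.mem_filter.mp hdstar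
    exact ⟨this.1, this.2.1, this.2.2⟩
  have hBall : ∀ j, ‖η j‖ ≤ B := by
    intro j
    by_cases hj : η j = 0
    · rw [hj]
      simp only [norm_zero]
      rw [hB]
      exact le_trans (norm_nonneg _) (Finset.le_max' _ _
        (Finset.mem_image_of_mem _ (by rw [hDu, Finset.mem_filter]; exact ⟨hmem _, h1, ⟨-1, rfl⟩⟩)))
    · exact Finset.le_max' _ _ (Finset.mem_image_of_mem _
        (by rw [hDu, Finset.mem_filter]; exact ⟨hmem _, hj, ⟨j, rfl⟩⟩))
  have hjne : η jstar ≠ 0 := by rw [hjstar]; exact hdne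
  have hjB : ‖η jstar‖ = B := by rw [hjstar]; exact hdstarB
  have hBpos : 0 < B := lt_of_lt_of_le (norm_pos_iff.mpr hjne) (le_of_eq hjB)
  have hjneg : jstar ≤ -1 := by
    by_contra hcon
    exact hjne (hzero jstar (by omega))
  -- the tail sums
  set V : ℤ → ℂ := fun c => ∑' k : ℤ, if k < c then η k * τ ^ (k - c) else 0 with hVdef
  -- the head sum
  set A : ℂ := ∑ i ∈ Finset.Icc jstar (-1), η i * τ ^ (i - jstar).toNat with hAdef
  have hjIcc : jstar ∈ Finset.Icc jstar (-1) := Finset.mem_Icc.mpr ⟨le_refl _, hjneg⟩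
  -- split the total sum
  have hshift : ∑' k : ℤ, η k * τ ^ (k - jstar) = 0 := by
    have hptw : (fun k : ℤ => η k * τ ^ (k - jstar))
        = fun k : ℤ => (η k * τ ^ k) * τ ^ (-jstar) := by
      funext k
      rw [mul_assoc, ← zpow_add₀ hτ0]
      ring_nf
    rw [hptw, tsum_mul_right, hF, zero_mul]
  have hsum1 : Summable (fun k : ℤ => if k < jstar then η k * τ ^ (k - jstar) else 0) :=
    summable_cut habs (le_of_lt hBpos) hBall hzero jstar jstar
  have hsum0 : Summable (fun k : ℤ => η k * τ ^ (k - jstar)) :=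
    summable_shift habs (le_of_lt hBpos) hBall hzero jstar
  have hsum2 : Summable (fun k : ℤ => if k < jstar then 0 else η k * τ ^ (k - jstar)) := by
    apply Summable.congr (hsum0.sub hsum1)
    intro k
    by_cases h : k < jstar <;> simp [h]
  have hsplit : V jstar + (∑' k : ℤ, if k < jstar then 0 else η k * τ ^ (k - jstar)) = 0 := by
    rw [hVdef]
    rw [← Summable.tsum_add hsum1 hsum2]
    refine Eq.trans (tsum_congr fun k => ?_) hshift
    by_cases h : k < jstar <;> simp [h]
  have hA2 : (∑' k : ℤ, if k < jstar then 0 else η k * τ ^ (k - jstar)) = A := by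
    rw [hAdef]
    rw [tsum_eq_sum (s := Finset.Icc jstar (-1)) ?_]
    · apply Finset.sum_congr rfl
      intro i hi
      have hi' := Finset.mem_Icc.mp hi
      rw [if_neg (by omega)]
      congr 1
      rw [← zpow_natCast τ, Int.toNat_of_nonneg (by omega)]
    · intro b hb
      by_cases h : b < jstar
      · rw [if_pos h]
      · rw [if_neg h]
        have : ¬(jstar ≤ b ∧ b ≤ -1) := fun hc => hb (Finset.mem_Icc.mpr hc)
        rw [hzero b (by omega), zero_mul]
  have hVA : V jstar = -A := by
    rw [← hA2]
    linear_combination hsplit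
  have habsVA : ‖V jstar‖ = ‖A‖ := by rw [hVA, norm_neg]
  -- A is in the lattice
  have hτΛ : τ ∈ Algebra.adjoin ℤ ({τ} : Set ℂ) := Algebra.subset_adjoin rfl
  have hAΛ : A ∈ Algebra.adjoin ℤ ({τ} : Set ℂ) := by
    rw [hAdef]
    exact Subalgebra.sum_mem _ (fun i _ => mul_mem (hDΛ _ (hmem i)) (pow_mem hτΛ _))
  -- A is in the residue class of the maximal digit
  set x : ℂ := ∑ i ∈ Finset.Icc jstar (-1),
      (if i = jstar then 0 else η i * τ ^ (i - jstar - w).toNat) with hxdef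
  have hxΛ : x ∈ Algebra.adjoin ℤ ({τ} : Set ℂ) := by
    rw [hxdef]
    apply Subalgebra.sum_mem _ (fun i _ => ?_)
    by_cases h : i = jstar
    · rw [if_pos h]; exact zero_mem _
    · rw [if_neg h]; exact mul_mem (hDΛ _ (hmem i)) (pow_mem hτΛ _)
  have hAx : A - η jstar = τ ^ w * x := by
    have hη : η jstar * τ ^ (jstar - jstar).toNat = η jstar := by
      simp
    have hxsum : ∑ i ∈ (Finset.Icc jstar (-1)).erase jstar,
        (τ ^ w * (if i = jstar then 0 else η i * τ ^ (i - jstar - w).toNat))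
        = ∑ i ∈ Finset.Icc jstar (-1),
        (τ ^ w * (if i = jstar then 0 else η i * τ ^ (i - jstar - w).toNat)) :=
      Finset.sum_erase _ (by simp)
    rw [hAdef, hxdef, Finset.mul_sum, ← Finset.sum_erase_add _ _ hjIcc, hη]
    rw [add_sub_cancel_right, ← hxsum]
    apply Finset.sum_congr rfl
    intro i hi
    obtain ⟨hine, hiIcc⟩ := Finset.mem_erase.mp hi
    have hi' := Finset.mem_Icc.mp hiIcc
    rw [if_neg hine]
    by_cases hηi : η i = 0
    · rw [hηi, zero_mul, zero_mul, mul_zero]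
    · have hspace : jstar + (w : ℤ) ≤ i := hsp jstar i (by omega) hjne hηi
      have htn : (i - jstar).toNat = w + (i - jstar - w).toNat := by omega
      rw [htn, pow_add]
      ring
  have hBA : B ≤ ‖A‖ := by
    rw [← hjB]
    exact hDmin (η jstar) (hmem jstar) hjne A hAΛ ⟨x, hxΛ, hAx⟩
  -- tail estimate
  have hspj : ∀ k, k < jstar → η k ≠ 0 → k ≤ jstar - w := by
    intro k hk hke
    have := hsp k jstar hk hke hjne
    omega
  have htail : ‖V jstar‖ ≤ B * (r ^ w)⁻¹ * (1 - (r ^ w)⁻¹)⁻¹ := by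
    rw [hVdef]
    exact tail_bound habs (by omega) (le_of_lt hBpos) hBall hzero hsp jstar w (by omega) hspj
  have hchain : B ≤ B * (r ^ w)⁻¹ * (1 - (r ^ w)⁻¹)⁻¹ := le_trans (le_trans hBA habsVA.symm.le) htail
  -- size of r^w
  have hr2 : r ^ 2 = (q : ℝ) := normSq_eq hτq hdisc
  have hq2 : (2 : ℝ) ≤ (q : ℝ) := by
    have h1 : (1 : ℝ) < (q : ℝ) := by
      rw [← hr2]
      nlinarith
    have : (1 : ℤ) < q := by exact_mod_cast h1
    exact_mod_cast this
  have hrw2 : (2 : ℝ) ≤ r ^ w := by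
    calc (2 : ℝ) ≤ (q : ℝ) := hq2
      _ = r ^ 2 := hr2.symm
      _ ≤ r ^ w := pow_le_pow_right₀ (le_of_lt habs) hw
  rcases eq_or_lt_of_le hrw2 with heq | hlt
  · -- the critical case r^w = 2
    have hw2 : w = 2 := by
      by_contra hne
      have h3w : 3 ≤ w := by omega
      have h3le : r ^ 3 ≤ r ^ w := pow_le_pow_right₀ (le_of_lt habs) h3w
      nlinarith
    subst hw2
    have hr22 : r ^ 2 = 2 := by linarith
    have hq2' : q = 2 := by
      have : (q : ℝ) = 2 := by rw [← hr2, hr22]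
      exact_mod_cast this
    subst hq2'
    have hτ2 : τ ^ 2 - (p : ℂ) * τ + 2 = 0 := by
      push_cast at hτq
      exact hτq
    have hri2 : ‖τ ^ (-2 : ℤ)‖ = 2⁻¹ := by
      rw [norm_zpow]
      rw [show ((-2 : ℤ)) = -((2 : ℕ) : ℤ) by norm_num]
      rw [zpow_neg, zpow_natCast, ← hrdef, hr22]
    have hτn2 : τ ^ (-2 : ℤ) ≠ 0 := zpow_ne_zero _ hτ0
    -- the peeling step
    have peel : ∀ c : ℤ, (∀ k, k < c → η k ≠ 0 → k ≤ c - 2) →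
        ∀ Z : ℂ, V c = Z → ‖Z‖ = B →
        η (c - 2) ≠ 0 ∧ ‖η (c - 2)‖ = B ∧ V (c - 2) = η (c - 2)
          ∧ Z = 2 * (η (c - 2) * τ ^ (-2 : ℤ)) := by
      intro c hspc Z hVZ hZB
      have hc1 : η (c - 1) = 0 := by
        by_contra hcon
        have := hspc (c - 1) (by omega) hcon
        omega
      by_cases hc2 : η (c - 2) = 0
      · exfalso
        have hsp3 : ∀ k, k < c → η k ≠ 0 → k ≤ c - 3 := by
          intro k hk hke
          have := hspc k hk hke
          by_cases hcc : k = c - 2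
          · rw [hcc] at hke; exact absurd hc2 hke
          · omega
        have hb3 := tail_bound (w := 2) habs (by omega) (le_of_lt hBpos) hBall hzero hsp
          c 3 (by omega) hsp3
        have hVc : V c = ∑' k : ℤ, if k < c then η k * τ ^ (k - c) else 0 := rfl
        rw [← hVc, hVZ, hZB, ← hrdef, hr22] at hb3
        have hr3 : r ^ 3 = 2 * r := by nlinarith
        rw [hr3] at hb3
        have hx : B * (2 * r)⁻¹ * (1 - (2 : ℝ)⁻¹)⁻¹ = B / r := by
          field_simp
          ring
        rw [hx] at hb3
        have : B / r < B := div_lt_self hBpos habs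
        linarith
      · have hsp4 : ∀ k, k < c - 2 → η k ≠ 0 → k ≤ (c - 2) - 2 := by
          intro k hk hke
          have := hsp k (c - 2) hk hke hc2
          omega
        have hptw : (fun k : ℤ => if k < c then η k * τ ^ (k - c) else 0)
            = fun k : ℤ => (if k = c - 2 then η (c - 2) * τ ^ (-2 : ℤ) else 0)
              + τ ^ (-2 : ℤ) * (if k < c - 2 then η k * τ ^ (k - (c - 2)) else 0) := by
          funext k
          by_cases hk1 : k = c - 2
          · subst hk1
            rw [if_pos (by omega), if_pos rfl, if_neg (by omega), mul_zero, add_zero]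
            rw [show c - 2 - c = (-2 : ℤ) by ring]
          · by_cases hk2 : k < c - 2
            · rw [if_neg hk1, if_pos (by omega), if_pos hk2, zero_add]
              rw [show k - c = (-2) + (k - (c - 2)) by ring, zpow_add₀ hτ0]
              ring
            · rw [if_neg hk1, if_neg hk2, mul_zero, add_zero]
              by_cases hk3 : k < c
              · have hkc : k = c - 1 := by omega
                rw [if_pos hk3, hkc, hc1, zero_mul]
              · rw [if_neg hk3]
        have hs1 : Summable (fun k : ℤ => if k = c - 2 then η (c - 2) * τ ^ (-2 : ℤ) else 0) := by
          apply summable_of_ne_finset_zero (s := {c - 2})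
          intro b hb
          rw [if_neg (by simpa using hb)]
        have hs2 : Summable (fun k : ℤ =>
            τ ^ (-2 : ℤ) * (if k < c - 2 then η k * τ ^ (k - (c - 2)) else 0)) :=
          (summable_cut habs (le_of_lt hBpos) hBall hzero (c - 2) (c - 2)).mul_left _
        have hVdec : V c = η (c - 2) * τ ^ (-2 : ℤ) + τ ^ (-2 : ℤ) * V (c - 2) := by
          have hVc : V c = ∑' k : ℤ, ((if k = c - 2 then η (c - 2) * τ ^ (-2 : ℤ) else 0)
              + τ ^ (-2 : ℤ) * (if k < c - 2 then η k * τ ^ (k - (c - 2)) else 0)) := by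
            show (∑' k : ℤ, if k < c then η k * τ ^ (k - c) else 0) = _
            rw [hptw]
          rw [hVc, Summable.tsum_add hs1 hs2, tsum_ite_eq, tsum_mul_left]
        have htabs : ‖η (c - 2) * τ ^ (-2 : ℤ)‖
            = ‖η (c - 2)‖ * 2⁻¹ := by rw [norm_mul, hri2]
        have htle : ‖η (c - 2) * τ ^ (-2 : ℤ)‖ ≤ B / 2 := by
          rw [htabs]
          have := hBall (c - 2)
          linarith
        have hV2le : ‖V (c - 2)‖ ≤ B := by
          have := tail_bound (w := 2) habs (by omega) (le_of_lt hBpos) hBall hzero hsp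
            (c - 2) 2 (by omega) hsp4
          have hVc2 : V (c - 2) = ∑' k : ℤ, if k < c - 2 then η k * τ ^ (k - (c - 2)) else 0 := rfl
          rw [← hVc2, ← hrdef, hr22] at this
          have hcal : B * ((2 : ℝ))⁻¹ * (1 - (2 : ℝ)⁻¹)⁻¹ = B := by
            rw [show ((1:ℝ) - 2⁻¹)⁻¹ = 2 by norm_num]
            ring_nf
          rw [hcal] at this
          exact this
        have hRle : ‖τ ^ (-2 : ℤ) * V (c - 2)‖ ≤ B / 2 := by
          rw [norm_mul, hri2]
          linarith
        have hZtR : Z = η (c - 2) * τ ^ (-2 : ℤ) + τ ^ (-2 : ℤ) * V (c - 2) := by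
          rw [← hVZ, hVdec]
        have habssum : ‖η (c - 2) * τ ^ (-2 : ℤ) + τ ^ (-2 : ℤ) * V (c - 2)‖ = B := by
          rw [← hZtR, hZB]
        have htri : B ≤ ‖η (c - 2) * τ ^ (-2 : ℤ)‖
            + ‖τ ^ (-2 : ℤ) * V (c - 2)‖ := by
          rw [← habssum]
          exact norm_add_le _ _
        have heq1 : ‖η (c - 2) * τ ^ (-2 : ℤ)‖ = B / 2 := by linarith
        have heq2 : ‖τ ^ (-2 : ℤ) * V (c - 2)‖ = B / 2 := by linarith
        have htReq : η (c - 2) * τ ^ (-2 : ℤ) = τ ^ (-2 : ℤ) * V (c - 2) := by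
          apply cx_eq_of_abs_add (by rw [heq1, heq2])
          rw [habssum, heq1, heq2]
          ring
        refine ⟨hc2, ?_, ?_, ?_⟩
        · rw [htabs] at heq1
          linarith
        · have : τ ^ (-2 : ℤ) * η (c - 2) = τ ^ (-2 : ℤ) * V (c - 2) := by
            rw [← htReq]; ring
          exact (mul_left_cancel₀ hτn2 this).symm
        · rw [hZtR, ← htReq]
          ring
    -- apply the peeling three times
    have hVjB : ‖V jstar‖ = B := by
      apply le_antisymm
      · rw [hr22] at htail
        have hcal : B * ((2 : ℝ))⁻¹ * (1 - (2 : ℝ)⁻¹)⁻¹ = B := by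
          rw [show ((1:ℝ) - 2⁻¹)⁻¹ = 2 by norm_num]
          ring_nf
        rw [hcal] at htail
        exact htail
      · rw [habsVA]
        exact hBA
    have hspj2 : ∀ k, k < jstar → η k ≠ 0 → k ≤ jstar - 2 := by
      intro k hk hke
      have := hspj k hk hke
      omega
    obtain ⟨hd0ne, hd0B, hV0, hZ0⟩ := peel jstar hspj2 (V jstar) rfl hVjB
    obtain ⟨hd1ne, hd1B, hV1, hZ1⟩ := peel (jstar - 2) (fun k hk hke => by
        have := hsp k (jstar - 2) hk hke hd0ne; omega) (η (jstar - 2)) hV0 hd0B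
    obtain ⟨hd2ne, hd2B, hV2, hZ2⟩ := peel (jstar - 2 - 2) (fun k hk hke => by
        have := hsp k (jstar - 2 - 2) hk hke hd1ne; omega) (η (jstar - 2 - 2)) hV1 hd1B
    set d0 := η (jstar - 2) with hd0
    set d1 := η (jstar - 2 - 2) with hd1
    set d2 := η (jstar - 2 - 2 - 2) with hd2
    have hzz : τ ^ (-2 : ℤ) * τ ^ 2 = 1 := by
      rw [← zpow_natCast τ 2, ← zpow_add₀ hτ0]
      norm_num
    have rel1 : 2 * d1 = τ ^ 2 * d0 := by
      rw [hZ1, show τ ^ 2 * (2 * (d1 * τ ^ (-2 : ℤ))) = 2 * d1 * (τ ^ (-2 : ℤ) * τ ^ 2) by ring,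
        hzz, mul_one]
    have rel2 : 2 * d2 = τ ^ 2 * d1 := by
      rw [hZ2, show τ ^ 2 * (2 * (d2 * τ ^ (-2 : ℤ))) = 2 * d2 * (τ ^ (-2 : ℤ) * τ ^ 2) by ring,
        hzz, mul_one]
    by_cases hpodd : 2 ∣ p
    · -- p even : use the uniqueness axiom with e = -d0
      have h8 : p ^ 2 < 8 := by linarith
      have hpb : p = -2 ∨ p = 0 ∨ p = 2 := even_small h8 hpodd
      have hkey : ∃ e : ℂ, (e ∈ D) ∧ e ≠ 0 ∧ e = -d0
          ∧ ∃ xx ∈ Algebra.adjoin ℤ ({τ} : Set ℂ), e - d0 = τ ^ 2 * xx := by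
        have hd0Λ : d0 ∈ Algebra.adjoin ℤ ({τ} : Set ℂ) := hDΛ _ (hmem _)
        rcases hpb with hp0 | hp0 | hp0
        · refine ⟨d2, hmem _, hd2ne, ?_, ?_⟩
          · have hτc : τ ^ 2 + 2 * τ + 2 = 0 := by
              rw [hp0] at hτ2; push_cast at hτ2; linear_combination hτ2
            linear_combination (1 / 2 : ℂ) * rel2 + (τ ^ 2 / 4) * rel1
              + (d0 / 4) * (τ ^ 2 - 2 * τ + 2) * hτc
          · refine ⟨(-1 - τ) * d0, mul_mem (sub_mem (neg_mem (one_mem _)) hτΛ) hd0Λ, ?_⟩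
            have hτc : τ ^ 2 + 2 * τ + 2 = 0 := by
              rw [hp0] at hτ2; push_cast at hτ2; linear_combination hτ2
            have he : d2 = -d0 := by
              linear_combination (1 / 2 : ℂ) * rel2 + (τ ^ 2 / 4) * rel1
                + (d0 / 4) * (τ ^ 2 - 2 * τ + 2) * hτc
            rw [he]
            linear_combination (d0 * (τ - 1)) * hτc
        · refine ⟨d1, hmem _, hd1ne, ?_, ?_⟩
          · have hτc : τ ^ 2 + 2 = 0 := by
              rw [hp0] at hτ2; push_cast at hτ2; linear_combination hτ2
            linear_combination (1 / 2 : ℂ) * rel1 + (d0 / 2) * hτc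
          · refine ⟨d0, hd0Λ, ?_⟩
            have hτc : τ ^ 2 + 2 = 0 := by
              rw [hp0] at hτ2; push_cast at hτ2; linear_combination hτ2
            have he : d1 = -d0 := by
              linear_combination (1 / 2 : ℂ) * rel1 + (d0 / 2) * hτc
            rw [he]
            linear_combination (-d0) * hτc
        · refine ⟨d2, hmem _, hd2ne, ?_, ?_⟩
          · have hτc : τ ^ 2 - 2 * τ + 2 = 0 := by
              rw [hp0] at hτ2; push_cast at hτ2; linear_combination hτ2
            linear_combination (1 / 2 : ℂ) * rel2 + (τ ^ 2 / 4) * rel1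
              + (d0 / 4) * (τ ^ 2 + 2 * τ + 2) * hτc
          · refine ⟨(τ - 1) * d0, mul_mem (sub_mem hτΛ (one_mem _)) hd0Λ, ?_⟩
            have hτc : τ ^ 2 - 2 * τ + 2 = 0 := by
              rw [hp0] at hτ2; push_cast at hτ2; linear_combination hτ2
            have he : d2 = -d0 := by
              linear_combination (1 / 2 : ℂ) * rel2 + (τ ^ 2 / 4) * rel1
                + (d0 / 4) * (τ ^ 2 + 2 * τ + 2) * hτc
            rw [he]
            linear_combination (-d0) * (τ + 1) * hτc
      obtain ⟨e, heD, hene, hed0, hx2⟩ := hkey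
      have hfin := hDuniq e heD d0 (hmem _) hene hd0ne hx2
      rw [hed0] at hfin
      exact hd0ne (by linear_combination (-1 / 2 : ℂ) * hfin)
    · -- p odd : parity contradiction
      obtain ⟨m0, n0, hd0r⟩ := adjoin_repr hτq (hDΛ _ (hmem (jstar - 2)))
      obtain ⟨m1, n1, hd1r⟩ := adjoin_repr hτq (hDΛ _ (hmem (jstar - 2 - 2)))
      rw [← hd0] at hd0r
      rw [← hd1] at hd1r
      have hcomb : ((2 * m1 + 2 * m0 + 2 * (p * n0) : ℤ) : ℂ)
          + ((2 * n1 - p * m0 - p * (p * n0) + 2 * n0 : ℤ) : ℂ) * τ = 0 := by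
        push_cast
        linear_combination rel1 - (2 : ℂ) * hd1r + (τ ^ 2) * hd0r
          + ((m0 : ℂ) + (p : ℂ) * (n0 : ℂ) + (n0 : ℂ) * τ) * hτ2
      obtain ⟨ha, hb⟩ := int_comb_eq him hcomb
      have hm0 : ¬ 2 ∣ m0 := by
        intro hdvd
        obtain ⟨xx, hxxΛ, hxx⟩ := tau_dvd_of_even hτ2 (n := n0) hdvd
        exact hDτ d0 (hmem _) hd0ne ⟨xx, hxxΛ, by rw [hd0r]; exact hxx⟩
      have hm1 : 2 ∣ m1 := parity_endgame hpodd hm0 ha hb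
      obtain ⟨xx, hxxΛ, hxx⟩ := tau_dvd_of_even hτ2 (n := n1) hm1
      exact hDτ d1 (hmem _) hd1ne ⟨xx, hxxΛ, by rw [hd1r]; exact hxx⟩
  · -- the generic case r^w > 2
    set u := r ^ w with hu
    have hu0 : (0 : ℝ) < u := by positivity
    have huinv : (0:ℝ) < 1 - u⁻¹ := by
      rw [sub_pos]
      exact inv_lt_one_of_one_lt₀ (by linarith)
    have heqB : B * u⁻¹ * (1 - u⁻¹)⁻¹ = B / (u - 1) := by
      have hune : u ≠ 0 := ne_of_gt hu0
      have h1u : 1 - u⁻¹ ≠ 0 := ne_of_gt huinv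
      have hum1 : u - 1 ≠ 0 := by intro h; linarith
      field_simp
    rw [heqB] at hchain
    have : B / (u - 1) < B := by
      rw [div_lt_iff₀ (by linarith)]
      nlinarith
    linarith


end NafProofAux

/-- **Lower bound for the fractional value.** Let `τ` be an imaginary quadratic algebraic
integer with `|τ| > 1`, `w ≥ 2`, and `D` a minimal norm representatives digit set modulo
`τ^w`. Then there exists a constant `f_L > 0` (depending only on `τ` and `w`) such that
every fractional `w`-NAF `0.η_{-1}η_{-2}…` with `η_{-1} ≠ 0` satisfies
`|∑_{j≥1} η_{-j} τ^{-j}| ≥ |τ|⁻¹ f_L`. -/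
theorem naf_fractional_value_lower_bound (p q : ℤ) (τ : ℂ)
    (hτq : τ ^ 2 - (p : ℂ) * τ + (q : ℂ) = 0) (hdisc : p ^ 2 < 4 * q)
    (habs : 1 < ‖τ‖) (w : ℕ) (hw : 2 ≤ w)
    (D : Finset ℂ) (hD : IsMinimalNormDigitSet τ w D) :
    ∃ fL : ℝ, 0 < fL ∧ ∀ η : ℤ → ℂ,
      (∀ j, η j ∈ D) → (∀ j : ℤ, 0 ≤ j → η j = 0) →
      (∀ i j : ℤ, i < j → j < i + w → η i ≠ 0 → η j = 0) →
      η (-1) ≠ 0 →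
      (‖τ‖)⁻¹ * fL ≤ ‖∑' j : ℤ, η j * τ ^ j‖ := by
  classical
  have hτabs0 : (0 : ℝ) < ‖τ‖ := lt_trans one_pos habs
  have hτabsne : ‖τ‖ ≠ 0 := ne_of_gt hτabs0
  have hDne : D.Nonempty := ⟨0, hD.1.1⟩
  set M := (D.image norm).max' (hDne.image _) with hM
  have hMall : ∀ z ∈ D, ‖z‖ ≤ M := fun z hz =>
    Finset.le_max' _ _ (Finset.mem_image_of_mem _ hz)
  have hM0 : 0 ≤ M := le_trans (norm_nonneg (0 : ℂ)) (hMall 0 hD.1.1)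
  set X : Set (ℤ → ℂ) := {η | (∀ j, η j ∈ D) ∧ (∀ j : ℤ, 0 ≤ j → η j = 0) ∧
      (∀ i j : ℤ, i < j → j < i + w → η i ≠ 0 → η j = 0) ∧ η (-1) ≠ 0} with hX
  by_cases hXne : X.Nonempty
  · -- compactness argument
    have hXsubpi : X ⊆ Set.pi Set.univ (fun _ : ℤ => (↑D : Set ℂ)) :=
      fun η hη j _ => hη.1 j
    have hpic : IsCompact (Set.pi Set.univ fun _ : ℤ => (↑D : Set ℂ)) :=
      isCompact_univ_pi (fun _ => (D.finite_toSet).isCompact)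
    have hXclosed : IsClosed X := by
      have h1 : X = (⋂ j : ℤ, {η : ℤ → ℂ | η j ∈ (↑D : Set ℂ)}) ∩
          ((⋂ j : ℤ, {η : ℤ → ℂ | 0 ≤ j → η j = 0}) ∩
          ((⋂ i : ℤ, ⋂ j : ℤ, {η : ℤ → ℂ | i < j → j < i + w → (η i = 0 ∨ η j = 0)}) ∩
          {η : ℤ → ℂ | η (-1) ∈ (↑(D.erase 0) : Set ℂ)})) := by
        ext η
        simp only [hX, Set.mem_inter_iff, Set.mem_iInter, Set.mem_setOf_eq, Finset.mem_coe,
          Finset.mem_erase]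
        constructor
        · rintro ⟨hm, hz, hn, h1⟩
          exact ⟨hm, hz, fun i j hij hji => by
            by_cases hi : η i = 0
            · exact Or.inl hi
            · exact Or.inr (hn i j hij hji hi), h1, hm (-1)⟩
        · rintro ⟨hm, hz, hn, h1, h1'⟩
          refine ⟨hm, hz, fun i j hij hji hi => ?_, h1⟩
          rcases hn i j hij hji with h | h
          · exact absurd h hi
          · exact h
      rw [h1]
      apply IsClosed.inter
      · exact isClosed_iInter (fun j =>
          IsClosed.preimage (continuous_apply j) (D.finite_toSet.isClosed))
      apply IsClosed.inter
      · apply isClosed_iInter; intro j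
        by_cases hj : (0 : ℤ) ≤ j
        · have he : {η : ℤ → ℂ | 0 ≤ j → η j = 0} = {η : ℤ → ℂ | η j = 0} := by
            ext; simp [hj]
          rw [he]
          exact isClosed_eq (continuous_apply j) continuous_const
        · have he : {η : ℤ → ℂ | 0 ≤ j → η j = 0} = Set.univ := by
            ext; simp [hj]
          rw [he]; exact isClosed_univ
      apply IsClosed.inter
      · apply isClosed_iInter; intro i; apply isClosed_iInter; intro j
        by_cases hc : i < j ∧ j < i + w
        · have he : {η : ℤ → ℂ | i < j → j < i + w → (η i = 0 ∨ η j = 0)}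
              = {η : ℤ → ℂ | η i = 0} ∪ {η : ℤ → ℂ | η j = 0} := by
            ext η
            simp only [Set.mem_setOf_eq, Set.mem_union, hc.1, hc.2, forall_true_left]
          rw [he]
          exact (isClosed_eq (continuous_apply i) continuous_const).union
            (isClosed_eq (continuous_apply j) continuous_const)
        · have he : {η : ℤ → ℂ | i < j → j < i + w → (η i = 0 ∨ η j = 0)} = Set.univ := by
            ext η
            simp only [Set.mem_setOf_eq, Set.mem_univ, iff_true]
            intro hij hji
            exact absurd ⟨hij, hji⟩ hc
          rw [he]; exact isClosed_univ
      · exact IsClosed.preimage (continuous_apply (-1)) ((D.erase 0).finite_toSet.isClosed)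
    have hXcomp : IsCompact X := hpic.of_isClosed_subset hXclosed hXsubpi
    have hCS : CompactSpace X := isCompact_iff_compactSpace.mp hXcomp
    -- the value map is continuous on X
    have hFc : Continuous (fun η : X => ∑' j : ℤ, η.1 j * τ ^ j) := by
      apply continuous_tsum (f := fun (j : ℤ) (η : X) => η.1 j * τ ^ j)
        (u := fun j : ℤ => if j < 0 then M * (‖τ‖) ^ (j : ℤ) else 0)
      · intro j
        exact ((continuous_apply j).comp continuous_subtype_val).mul continuous_const
      · apply (summable_major habs hM0 0).congr
        intro k
        by_cases h : k < 0 <;> simp [h, sub_zero]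
      · intro j η
        by_cases h : j < 0
        · rw [if_pos h, norm_mul, norm_zpow]
          apply mul_le_mul (hMall _ (η.2.1 j)) (le_refl _) (by positivity) hM0
        · rw [if_neg h, η.2.2.1 j (by omega)]
          simp
    set K : Set ℂ := Set.range (fun η : X => ∑' j : ℤ, η.1 j * τ ^ j) with hK
    have hKcomp : IsCompact K := isCompact_range hFc
    have hNE : Nonempty X := hXne.to_subtype
    have hKne : K.Nonempty := Set.range_nonempty _
    obtain ⟨z0, hz0K, hz0min⟩ := hKcomp.exists_isMinOn hKne
      (continuous_norm.continuousOn)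
    have hz0ne : z0 ≠ 0 := by
      obtain ⟨η0, hη0⟩ := hz0K
      rw [← hη0]
      exact naf_value_ne_zero p q τ hτq hdisc habs w hw D hD η0.1
        η0.2.1 η0.2.2.1 η0.2.2.2.1 η0.2.2.2.2
    refine ⟨‖τ‖ * ‖z0‖, mul_pos hτabs0 (norm_pos_iff.mpr hz0ne), ?_⟩
    intro η hm hz hn h1
    have hηX : η ∈ X := ⟨hm, hz, hn, h1⟩
    have hmemK : (∑' j : ℤ, η j * τ ^ j) ∈ K := ⟨⟨η, hηX⟩, rfl⟩
    have hmin := isMinOn_iff.mp hz0min _ hmemK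
    calc (‖τ‖)⁻¹ * (‖τ‖ * ‖z0‖)
        = ‖z0‖ := by
          rw [← mul_assoc, inv_mul_cancel₀ hτabsne, one_mul]
      _ ≤ ‖∑' j : ℤ, η j * τ ^ j‖ := hmin
  · refine ⟨1, one_pos, fun η hm hz hn h1 => absurd ⟨η, hm, hz, hn, h1⟩ hXne⟩
end
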